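/- arXiv:2008.07428 — 5 statements merged into one kernel-verified Lean document; each statement's English description precedes it below -/
import Mathlib

section
/- Under the GT-SARAH setup, for all s ≥ 1 and t ∈ {1,…,q}: E[‖v̄^{t,s} − ∇f̄(x^{t,s})‖²] ≤ (3α²L²/(nB)) Σ_{u=0}^{t−1} E[‖v̄^{u,s}‖²] + (6L²/(n²B)) Σ_{u=0}^{t} E[‖x^{u,s} − J x^{u,s}‖²]. -/
open MeasureTheory Filter Finset ProbabilityTheory

namespace GTS

variable {n m p q B : ℕ} {Th : Type*}

abbrev Ep (p : ℕ) := EuclideanSpace ℝ (Fin p)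

structure St (n p : ℕ) (Th : Type*) where
  x : Fin n → Th → Ep p
  y : Fin n → Th → Ep p
  v : Fin n → Th → Ep p
  vp : Fin n → Th → Ep p

variable (W : Matrix (Fin n) (Fin n) ℝ) (α : ℝ) (f : Fin n → Fin m → Ep p → ℝ)
  (fI : Fin n → Ep p → ℝ) (x0 : Ep p)

noncomputable def step (tq : Fin n → Fin B → Th → Fin m) (st : St n p Th) : St n p Th :=
  let y' : Fin n → Th → Ep p := fun i θ => (∑ r, W i r • st.y r θ) + st.v i θ - st.vp i θ
  let x' : Fin n → Th → Ep p := fun i θ => (∑ r, W i r • st.x r θ) - α • y' i θ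
  { x := x', y := y',
    v := fun i θ => (B : ℝ)⁻¹ • (∑ l, (gradient (f i (tq i l θ)) (x' i θ)
        - gradient (f i (tq i l θ)) (st.x i θ))) + st.v i θ,
    vp := st.v }

noncomputable def carry (st : St n p Th) : St n p Th :=
  { x := st.x, y := st.y, v := fun i θ => gradient (fI i) (st.x i θ), vp := st.vp }

noncomputable def init1 : St n p Th :=
  { x := fun _ _ => x0, y := fun _ _ => 0, v := fun i _ => gradient (fI i) x0,
    vp := fun _ _ => 0 }

noncomputable def run (tq : ℕ → Fin n → Fin B → Th → Fin m) (st0 : St n p Th) : ℕ → St n p Th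
  | 0 => st0
  | t + 1 => step W α f (tq (t + 1)) (run tq st0 t)

noncomputable def einit (q : ℕ) (tq2 : ℕ → ℕ → Fin n → Fin B → Th → Fin m) : ℕ → St n p Th
  | 0 => init1 fI x0
  | k + 1 => carry fI (run W α f (tq2 (k + 1)) (einit q tq2 k) (q + 1))

noncomputable def stAt (q : ℕ) (tq2 : ℕ → ℕ → Fin n → Fin B → Th → Fin m) (s' t' : ℕ) : St n p Th :=
  run W α f (tq2 s') (einit W α f fI x0 q tq2 (s' - 1)) t'

lemma stAt_succ (q : ℕ) (tq2 : ℕ → ℕ → Fin n → Fin B → Th → Fin m) (s' t' : ℕ) :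
    stAt W α f fI x0 q tq2 s' (t' + 1)
      = step W α f (tq2 s' (t' + 1)) (stAt W α f fI x0 q tq2 s' t') := rfl

lemma stAt_zero (q : ℕ) (tq2 : ℕ → ℕ → Fin n → Fin B → Th → Fin m) (s' : ℕ) :
    stAt W α f fI x0 q tq2 s' 0 = einit W α f fI x0 q tq2 (s' - 1) := rfl

abbrev Idx (q s n B : ℕ) := Fin q × Fin s × Fin n × Fin B

def tl (hm : 0 < m) (q s : ℕ) (t' s' : ℕ) (i : Fin n) (l : Fin B)
    (θ : Idx q s n B → Fin m) : Fin m :=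
  if h : 1 ≤ t' ∧ t' ≤ q ∧ 1 ≤ s' ∧ s' ≤ s then
    θ (⟨t' - 1, by omega⟩, ⟨s' - 1, by omega⟩, i, l) else ⟨0, hm⟩

def tme {q s n B : ℕ} (c : Idx q s n B) : ℕ := c.1.1 + 1
def epo {q s n B : ℕ} (c : Idx q s n B) : ℕ := c.2.1.1 + 1

def PLt (q s n B : ℕ) (s' t' : ℕ) : Set (Idx q s n B) :=
  {c | epo c < s' ∨ (epo c = s' ∧ tme c < t')}
def PLe (q s n B : ℕ) (s' t' : ℕ) : Set (Idx q s n B) :=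
  {c | epo c < s' ∨ (epo c = s' ∧ tme c ≤ t')}

def DOn {ι κ γ : Type*} (G : (ι → κ) → γ) (S : Set ι) : Prop :=
  ∀ θ₁ θ₂ : ι → κ, (∀ c ∈ S, θ₁ c = θ₂ c) → G θ₁ = G θ₂

lemma DOn.mono {ι κ γ : Type*} {G : (ι → κ) → γ} {S S' : Set ι} (h : DOn G S)
    (hsub : S ⊆ S') : DOn G S' :=
  fun θ₁ θ₂ hag => h θ₁ θ₂ fun c hc => hag c (hsub hc)

lemma sum_update_eq {ι κ : Type*} [Fintype ι] [DecidableEq ι] [Fintype κ]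
    {M : Type*} [AddCommMonoid M] (F : (ι → κ) → M) (c0 : ι) :
    ∑ θ : ι → κ, ∑ j : κ, F (Function.update θ c0 j)
      = (Fintype.card κ) • ∑ θ : ι → κ, F θ := by
  classical
  set e := Equiv.piSplitAt c0 (fun _ => κ) with he
  have key : ∀ (a j : κ) (r : {j // j ≠ c0} → κ),
      Function.update (e.symm (a, r)) c0 j = e.symm (j, r) := by
    intro a j r; funext c
    by_cases hc : c = c0
    · subst hc
      simp [Function.update, he, Equiv.piSplitAt, eq_rec_constant]
    · simp [Function.update, hc, he, Equiv.piSplitAt]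
  have h1 : ∀ (G : (ι → κ) → M), ∑ θ : ι → κ, G θ
      = ∑ pr : κ × ({j // j ≠ c0} → κ), G (e.symm pr) :=
    fun G => (Equiv.sum_comp e.symm G).symm
  rw [h1 (fun θ => ∑ j : κ, F (Function.update θ c0 j)),
    h1 F]
  rw [Fintype.sum_prod_type]
  simp_rw [key]
  rw [Finset.sum_const, card_univ]
  congr 1
  rw [Fintype.sum_prod_type]
  exact Finset.sum_comm




lemma sum_inner_zero {ι : Type*} [Fintype ι] [DecidableEq ι] {κ : Type*} [Fintype κ]
    [Nonempty κ] {E : Type*} [NormedAddCommGroup E] [InnerProductSpace ℝ E]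
    (A H : (ι → κ) → E) (c0 : ι)
    (hA : ∀ θ j, A (Function.update θ c0 j) = A θ)
    (h0 : ∀ θ, ∑ j : κ, H (Function.update θ c0 j) = 0)
    (hsum : ∑ θ : ι → κ, ∑ j : κ, (inner ℝ (A (Function.update θ c0 j))
        (H (Function.update θ c0 j)) : ℝ)
      = (Fintype.card κ) • ∑ θ : ι → κ, (inner ℝ (A θ) (H θ) : ℝ)) :
    ∑ θ : ι → κ, (inner ℝ (A θ) (H θ) : ℝ) = 0 := by
  have h2 : ∀ θ : ι → κ, ∑ j : κ, (inner ℝ (A (Function.update θ c0 j))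
      (H (Function.update θ c0 j)) : ℝ) = 0 := by
    intro θ
    calc ∑ j : κ, (inner ℝ (A (Function.update θ c0 j)) (H (Function.update θ c0 j)) : ℝ)
        = ∑ j : κ, (inner ℝ (A θ) (H (Function.update θ c0 j)) : ℝ) := by simp_rw [hA]
      _ = (inner ℝ (A θ) (∑ j : κ, H (Function.update θ c0 j)) : ℝ) := by rw [inner_sum]
      _ = 0 := by rw [h0, inner_zero_right]
  rw [Finset.sum_congr rfl (fun θ _ => h2 θ), Finset.sum_const_zero] at hsum
  have hc : (0 : ℝ) < Fintype.card κ := by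
    exact_mod_cast Fintype.card_pos
  rw [nsmul_eq_mul] at hsum
  have := hsum.symm
  rcases mul_eq_zero.1 this with h | h
  · exact absurd h (by positivity)
  · exact h

lemma sum_sub_avg_sq_le {E : Type*} [NormedAddCommGroup E] [InnerProductSpace ℝ E]
    {m : ℕ} (hm : 0 < m) (g : Fin m → E) :
    ∑ j, ‖g j - (m : ℝ)⁻¹ • ∑ j', g j'‖ ^ 2 ≤ ∑ j, ‖g j‖ ^ 2 := by
  set a : E := (m : ℝ)⁻¹ • ∑ j', g j' with ha
  have hm' : (m : ℝ) ≠ 0 := by positivity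
  have hsum : ∑ j', g j' = (m : ℝ) • a := by
    rw [ha, smul_smul, mul_inv_cancel₀ hm', one_smul]
  have expand : ∑ j, ‖g j - a‖ ^ 2
      = (∑ j, ‖g j‖ ^ 2) - 2 * (inner ℝ (∑ j', g j') a : ℝ) + (m : ℝ) * ‖a‖ ^ 2 := by
    simp_rw [norm_sub_sq_real]
    rw [Finset.sum_add_distrib, Finset.sum_sub_distrib, ← Finset.mul_sum, sum_inner,
      Finset.sum_const, Finset.card_univ, Fintype.card_fin, nsmul_eq_mul]
  have hinner : (inner ℝ (∑ j', g j') a : ℝ) = (m : ℝ) * ‖a‖ ^ 2 := by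
    rw [hsum, real_inner_smul_left, real_inner_self_eq_norm_sq]
  rw [expand, hinner]
  have h1 : (1:ℝ) ≤ (m:ℝ) := by exact_mod_cast hm
  nlinarith [sq_nonneg ‖a‖]

lemma norm_add3_sq_le {E : Type*} [SeminormedAddCommGroup E] (a b c : E) :
    ‖a + b + c‖ ^ 2 ≤ 3 * ‖a‖ ^ 2 + 3 * ‖b‖ ^ 2 + 3 * ‖c‖ ^ 2 := by
  have h : ‖a + b + c‖ ≤ ‖a‖ + ‖b‖ + ‖c‖ := norm_add₃_le
  nlinarith [norm_nonneg a, norm_nonneg b, norm_nonneg c, norm_nonneg (a + b + c),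
    sq_nonneg (‖a‖ - ‖b‖), sq_nonneg (‖a‖ - ‖c‖), sq_nonneg (‖b‖ - ‖c‖)]

lemma msing {ι κ : Type*} [Countable ι] [MeasurableSpace κ] [MeasurableSingletonClass κ]
    (θ : ι → κ) : MeasurableSet {θ} := by
  have h : ({θ} : Set (ι → κ)) = ⋂ c, (fun θ' : ι → κ => θ' c) ⁻¹' {θ c} := by
    ext θ'; simp [funext_iff, Set.mem_iInter, eq_comm]
  rw [h]
  exact MeasurableSet.iInter fun c => (measurable_pi_apply c) (measurableSet_singleton _)

lemma integral_comp_finite {Ω : Type*} [MeasurableSpace Ω] (μ : Measure Ω)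
    [IsProbabilityMeasure μ] {Θ : Type*} [Fintype Θ] [MeasurableSpace Θ]
    (hsing : ∀ θ : Θ, MeasurableSet ({θ} : Set Θ))
    (T : Ω → Θ) (hT : Measurable T) (h : Θ → ℝ) :
    ∫ ω, h (T ω) ∂μ = ∑ θ : Θ, (μ (T ⁻¹' {θ})).toReal * h θ := by
  have hfun : (fun ω => h (T ω))
      = fun ω => ∑ θ : Θ, Set.indicator (T ⁻¹' {θ}) (fun _ => h θ) ω := by
    funext ω
    rw [Finset.sum_eq_single (T ω)]
    · rw [Set.indicator_of_mem]; exact rfl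
    · intro b _ hb
      apply Set.indicator_of_notMem
      simp only [Set.mem_preimage, Set.mem_singleton_iff]
      exact fun hc => hb (hc ▸ rfl)
    · intro habs; exact absurd (Finset.mem_univ _) habs
  rw [hfun, integral_finset_sum]
  · refine Finset.sum_congr rfl fun θ _ => ?_
    rw [integral_indicator_const (h θ) (hT (hsing θ)), smul_eq_mul, measureReal_def]
  · intro θ _
    exact (integrable_const (h θ)).indicator (hT (hsing θ))



lemma gradient_avg {m p : ℕ} (hm : 0 < m) (g : Fin m → EuclideanSpace ℝ (Fin p) → ℝ)
    (hdiff : ∀ j, Differentiable ℝ (g j)) (z : EuclideanSpace ℝ (Fin p)) :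
    gradient (fun w => (m : ℝ)⁻¹ * ∑ j, g j w) z = (m : ℝ)⁻¹ • ∑ j, gradient (g j) z := by
  have hd : ∀ j ∈ Finset.univ, DifferentiableAt ℝ (fun w => g j w) z :=
    fun j _ => (hdiff j).differentiableAt
  have hds : DifferentiableAt ℝ (fun w => ∑ j, g j w) z := DifferentiableAt.fun_sum hd
  unfold gradient
  rw [show (fun w => (m : ℝ)⁻¹ * ∑ j, g j w)
      = (fun w => (m : ℝ)⁻¹ * (fun w' => ∑ j, g j w') w) from rfl]
  rw [fderiv_const_mul hds, fderiv_fun_sum hd, _root_.map_smul, map_sum]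

section DOnSec

variable {s : ℕ}

lemma PLt_succ (s' t' : ℕ) : PLt q s n B s' (t' + 1) = PLe q s n B s' t' := by
  ext c; simp only [PLt, PLe, Set.mem_setOf_eq]; omega

lemma PLe_subset_succ (s' t' : ℕ) : PLe q s n B s' t' ⊆ PLe q s n B s' (t' + 1) := by
  intro c hc; rcases hc with h | h
  · exact Or.inl h
  · exact Or.inr ⟨h.1, h.2.trans (Nat.le_succ _)⟩

lemma PLt_subset_PLe (s' t' : ℕ) : PLt q s n B s' t' ⊆ PLe q s n B s' t' := by
  intro c hc; rcases hc with h | h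
  · exact Or.inl h
  · exact Or.inr ⟨h.1, le_of_lt h.2⟩

lemma PLe_subset_PLt0 (s' : ℕ) : PLe q s n B s' (q + 1) ⊆ PLt q s n B (s' + 1) 0 := by
  intro c hc
  have hcq : tme c ≤ q := by have := c.1.2; simp only [tme]; omega
  rcases hc with h | h
  · exact Or.inl (by omega)
  · exact Or.inl (by omega)

lemma PLt0_subset_PLe0 (s' : ℕ) : PLt q s n B s' 0 ⊆ PLe q s n B s' 0 :=
  PLt_subset_PLe s' 0

lemma tl_agree (hm : 0 < m) (t' s' : ℕ) (i : Fin n) (l : Fin B)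
    (θ₁ θ₂ : Idx q s n B → Fin m)
    (hag : ∀ c ∈ PLe q s n B s' t', θ₁ c = θ₂ c) :
    tl hm q s t' s' i l θ₁ = tl hm q s t' s' i l θ₂ := by
  unfold tl; split_ifs with h
  · refine hag _ (Or.inr ⟨?_, ?_⟩)
    · show (s' - 1) + 1 = s'; omega
    · show (t' - 1) + 1 ≤ t'; omega
  · rfl

variable (hm : 0 < m)

/-- the concrete lookup family -/
noncomputable def TQ (hm : 0 < m) (q s : ℕ) :
    ℕ → ℕ → Fin n → Fin B → (Idx q s n B → Fin m) → Fin m :=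
  fun s' t' i l θ => tl hm q s t' s' i l θ

def AllD (st : St n p (Idx q s n B → Fin m)) (s' t' : ℕ) : Prop :=
  (∀ i, DOn (st.x i) (PLt q s n B s' t')) ∧ (∀ i, DOn (st.y i) (PLt q s n B s' t'))
  ∧ (∀ i, DOn (st.v i) (PLe q s n B s' t')) ∧ (∀ i, DOn (st.vp i) (PLe q s n B s' t'))

lemma step_DOn (s' t' : ℕ) (st : St n p (Idx q s n B → Fin m))
    (h : AllD st s' t') :
    AllD (step W α f (TQ hm q s s' (t' + 1)) st) s' (t' + 1) := by
  obtain ⟨hx, hy, hv, hvp⟩ := h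
  have hyd : ∀ i, DOn ((step W α f (TQ hm q s s' (t' + 1)) st).y i)
      (PLt q s n B s' (t' + 1)) := by
    intro i θ₁ θ₂ hag
    have hag' : ∀ c ∈ PLe q s n B s' t', θ₁ c = θ₂ c := by
      rw [← PLt_succ]; exact hag
    show (∑ r, W i r • st.y r θ₁) + st.v i θ₁ - st.vp i θ₁
        = (∑ r, W i r • st.y r θ₂) + st.v i θ₂ - st.vp i θ₂
    rw [hv i θ₁ θ₂ hag', hvp i θ₁ θ₂ hag']
    congr 2
    exact Finset.sum_congr rfl fun r _ => by
      rw [hy r θ₁ θ₂ (fun c hc => hag' c (PLt_subset_PLe s' t' hc))]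
  have hxd : ∀ i, DOn ((step W α f (TQ hm q s s' (t' + 1)) st).x i)
      (PLt q s n B s' (t' + 1)) := by
    intro i θ₁ θ₂ hag
    have hag' : ∀ c ∈ PLe q s n B s' t', θ₁ c = θ₂ c := by
      rw [← PLt_succ]; exact hag
    show (∑ r, W i r • st.x r θ₁) - α • ((∑ r, W i r • st.y r θ₁) + st.v i θ₁ - st.vp i θ₁)
        = (∑ r, W i r • st.x r θ₂) - α • ((∑ r, W i r • st.y r θ₂) + st.v i θ₂ - st.vp i θ₂)
    have := hyd i θ₁ θ₂ hag
    rw [show ((∑ r, W i r • st.y r θ₁) + st.v i θ₁ - st.vp i θ₁)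
        = ((∑ r, W i r • st.y r θ₂) + st.v i θ₂ - st.vp i θ₂) from this]
    congr 1
    exact Finset.sum_congr rfl fun r _ => by
      rw [hx r θ₁ θ₂ (fun c hc => hag c (by rw [PLt_succ]; exact PLt_subset_PLe s' t' hc))]
  refine ⟨hxd, hyd, ?_, ?_⟩
  · intro i θ₁ θ₂ hag
    have hagt : ∀ c ∈ PLt q s n B s' (t' + 1), θ₁ c = θ₂ c :=
      fun c hc => hag c (by rw [PLt_succ] at hc; exact PLe_subset_succ s' t' hc)
    have hagle : ∀ c ∈ PLe q s n B s' t', θ₁ c = θ₂ c :=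
      fun c hc => hagt c (by rw [PLt_succ]; exact hc)
    show (B : ℝ)⁻¹ • (∑ l, (gradient (f i (TQ hm q s s' (t' + 1) i l θ₁))
          (((step W α f (TQ hm q s s' (t' + 1)) st).x) i θ₁)
        - gradient (f i (TQ hm q s s' (t' + 1) i l θ₁)) (st.x i θ₁))) + st.v i θ₁
      = (B : ℝ)⁻¹ • (∑ l, (gradient (f i (TQ hm q s s' (t' + 1) i l θ₂))
          (((step W α f (TQ hm q s s' (t' + 1)) st).x) i θ₂)
        - gradient (f i (TQ hm q s s' (t' + 1) i l θ₂)) (st.x i θ₂))) + st.v i θ₂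
    rw [hv i θ₁ θ₂ hagle]
    congr 1
    congr 1
    refine Finset.sum_congr rfl fun l _ => ?_
    have htl : TQ hm q s s' (t' + 1) i l θ₁ = TQ hm q s s' (t' + 1) i l θ₂ :=
      tl_agree hm (t' + 1) s' i l θ₁ θ₂ (fun c hc => hag c hc)
    rw [htl, hxd i θ₁ θ₂ hagt, hx i θ₁ θ₂ (fun c hc => hagt c (by
      rw [PLt_succ s' t']; exact PLt_subset_PLe s' t' hc))]
  · intro i θ₁ θ₂ hag
    show st.v i θ₁ = st.v i θ₂
    exact hv i θ₁ θ₂ fun c hc => hag c (PLe_subset_succ s' t' hc)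

lemma stAt_DOn : ∀ s', 1 ≤ s' → ∀ t',
    AllD (stAt W α f fI x0 q (TQ (B := B) hm q s) s' t') s' t' := by
  have hstep : ∀ s', 1 ≤ s' → ∀ t',
      AllD (stAt W α f fI x0 q (TQ (B := B) hm q s) s' 0) s' 0 →
      AllD (stAt W α f fI x0 q (TQ (B := B) hm q s) s' t') s' t' := by
    intro s' hs' t' h0
    induction t' with
    | zero => exact h0
    | succ t ih =>
      rw [stAt_succ]
      exact step_DOn W α f hm s' t _ ih
  intro s' hs'
  induction s' with
  | zero => omega
  | succ k ihk =>
    rcases Nat.eq_or_lt_of_le hs' with h1 | h1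
    · -- k + 1 = 1, i.e. k = 0
      have hk : k = 0 := by omega
      subst hk
      intro t'
      refine hstep 1 le_rfl t' ?_
      exact ⟨fun i θ₁ θ₂ _ => rfl, fun i θ₁ θ₂ _ => rfl, fun i θ₁ θ₂ _ => rfl,
        fun i θ₁ θ₂ _ => rfl⟩
    · have hk : 1 ≤ k := by omega
      have hprev := ihk hk (q + 1)
      intro t'
      refine hstep (k + 1) hs' t' ?_
      obtain ⟨hx, hy, hv, hvp⟩ := hprev
      have hx' : ∀ i, DOn ((stAt W α f fI x0 q (TQ hm q s) k (q + 1)).x i)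
          (PLt q s n B (k + 1) 0) := fun i => (hx i).mono (by
            intro c hc
            have hcq : tme c ≤ q := by have := c.1.2; simp only [tme]; omega
            rcases hc with h | h
            · exact Or.inl (by omega)
            · exact Or.inl (by omega))
      have hsub : PLe q s n B k (q + 1) ⊆ PLe q s n B (k + 1) 0 := by
        intro c hc
        have hcq : tme c ≤ q := by have := c.1.2; simp only [tme]; omega
        rcases hc with h | h
        · exact Or.inl (by omega)
        · exact Or.inl (by omega)
      have hsub2 : PLt q s n B k (q + 1) ⊆ PLe q s n B (k + 1) 0 :=
        fun c hc => hsub (PLt_subset_PLe _ _ hc)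
      have heq : stAt W α f fI x0 q (TQ (B := B) hm q s) (k + 1) 0
          = carry fI (stAt W α f fI x0 q (TQ (B := B) hm q s) k (q + 1)) := by
        rw [stAt_zero]
        have : k + 1 - 1 = (k - 1) + 1 := by omega
        rw [this]
        show carry fI (run W α f (TQ hm q s (k - 1 + 1))
            (einit W α f fI x0 q (TQ hm q s) (k - 1)) (q + 1)) = _
        rw [show k - 1 + 1 = k from by omega]
        rfl
      rw [heq]
      refine ⟨?_, ?_, ?_, ?_⟩
      · intro i; exact (hx i).mono (by
          intro c hc
          have hcq : tme c ≤ q := by have := c.1.2; simp only [tme]; omega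
          rcases hc with h | h
          · exact Or.inl (by omega)
          · exact Or.inl (by omega))
      · intro i; exact (hy i).mono (by
          intro c hc
          have hcq : tme c ≤ q := by have := c.1.2; simp only [tme]; omega
          rcases hc with h | h
          · exact Or.inl (by omega)
          · exact Or.inl (by omega))
      · intro i θ₁ θ₂ hag
        show gradient (fI i) ((stAt W α f fI x0 q (TQ hm q s) k (q + 1)).x i θ₁)
          = gradient (fI i) ((stAt W α f fI x0 q (TQ hm q s) k (q + 1)).x i θ₂)
        rw [hx i θ₁ θ₂ (fun c hc => hag c (by
          have hcq : tme c ≤ q := by have := c.1.2; simp only [tme]; omega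
          rcases hc with h | h
          · exact Or.inl (by omega)
          · exact Or.inl (by omega)))]
      · intro i θ₁ θ₂ hag
        show (stAt W α f fI x0 q (TQ hm q s) k (q + 1)).vp i θ₁
          = (stAt W α f fI x0 q (TQ hm q s) k (q + 1)).vp i θ₂
        exact hvp i θ₁ θ₂ fun c hc => hag c (hsub hc)

end DOnSec

section Core

variable {Ω : Type*}

set_option maxHeartbeats 1000000 in
lemma core_ineq {n m p q B s t : ℕ}
    (hn : 1 ≤ n) (hm0 : 0 < m) (hB1 : 1 ≤ B) (hs1 : 1 ≤ s) (ht1 : 1 ≤ t) (htq : t ≤ q)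
    (α L : ℝ) (hα0 : 0 < α) (hL : 0 < L)
    (f : Fin n → Fin m → Ep p → ℝ)
    (hsmooth : ∀ i (u w : Ep p),
      (m : ℝ)⁻¹ * ∑ j, ‖gradient (f i j) u - gradient (f i j) w‖ ^ 2 ≤ L ^ 2 * ‖u - w‖ ^ 2)
    (fI : Fin n → Ep p → ℝ)
    (hgrad : ∀ i z, gradient (fI i) z = (m : ℝ)⁻¹ • ∑ j, gradient (f i j) z)
    (X V : ℕ → Fin n → (Idx q s n B → Fin m) → Ep p)
    (hXD : ∀ u i, DOn (X u i) (PLt q s n B s u))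
    (hVrec : ∀ u, 1 ≤ u → u ≤ q → ∀ i θ,
      V u i θ = (B : ℝ)⁻¹ • (∑ l, (gradient (f i (TQ hm0 q s s u i l θ)) (X u i θ)
        - gradient (f i (TQ hm0 q s s u i l θ)) (X (u - 1) i θ))) + V (u - 1) i θ)
    (hV0 : ∀ i θ, V 0 i θ = gradient (fI i) (X 0 i θ))
    (hXbar : ∀ u, 1 ≤ u → u ≤ q → ∀ θ,
      ∑ i, X u i θ = (∑ i, X (u - 1) i θ) - α • ∑ i, V (u - 1) i θ) :
    ∑ θ : Idx q s n B → Fin m, ‖(n : ℝ)⁻¹ • ∑ i, V t i θ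
        - (n : ℝ)⁻¹ • ∑ i, gradient (fI i) (X t i θ)‖ ^ 2
      ≤ (3 * α ^ 2 * L ^ 2 / ((n : ℝ) * B)) *
          ∑ u ∈ range t, ∑ θ : Idx q s n B → Fin m, ‖(n : ℝ)⁻¹ • ∑ i, V u i θ‖ ^ 2
        + (6 * L ^ 2 / ((n : ℝ) ^ 2 * B)) * ∑ u ∈ range (t + 1),
            ∑ θ : Idx q s n B → Fin m, ∑ i, ‖X u i θ - (n : ℝ)⁻¹ • ∑ i', X u i' θ‖ ^ 2 := by
  classical
  have hn0 : (0:ℝ) < n := by exact_mod_cast hn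
  have hB0 : (0:ℝ) < B := by exact_mod_cast hB1
  have hm0' : (0:ℝ) < m := by exact_mod_cast hm0
  -- the centered per-sample increments
  set Zf : ℕ → Fin n → Fin B → (Idx q s n B → Fin m) → Ep p := fun u i l θ =>
    (gradient (f i (TQ hm0 q s s u i l θ)) (X u i θ)
      - gradient (f i (TQ hm0 q s s u i l θ)) (X (u - 1) i θ))
    - (m : ℝ)⁻¹ • ∑ j, (gradient (f i j) (X u i θ) - gradient (f i j) (X (u - 1) i θ))
    with hZf
  -- evaluation of TQ
  have hTQeval : ∀ u (h1u : 1 ≤ u) (huq : u ≤ q), ∀ (i : Fin n) (l : Fin B) θ,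
      TQ (B := B) hm0 q s s u i l θ
        = θ (⟨u - 1, by omega⟩, ⟨s - 1, by omega⟩, i, l) := by
    intro u h1 h2 i l θ
    show tl hm0 q s u s i l θ = _
    rw [tl, dif_pos (show 1 ≤ u ∧ u ≤ q ∧ 1 ≤ s ∧ s ≤ s from ⟨h1, h2, hs1, le_rfl⟩)]
  -- X does not depend on coordinates at time ≥ u (epoch s)
  have hXupd : ∀ u (i : Fin n) θ (c0 : Idx q s n B) (j : Fin m), epo c0 = s → u ≤ tme c0 →
      X u i (Function.update θ c0 j) = X u i θ := by
    intro u i θ c0 j h1 h2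
    refine hXD u i _ _ fun c hc => ?_
    refine Function.update_of_ne (fun he => ?_) _ _
    subst he
    rcases hc with h | h
    · omega
    · omega
  -- telescoping identity
  have htel : ∀ w, w ≤ q → ∀ θ,
      (n : ℝ)⁻¹ • ∑ i, V w i θ - (n : ℝ)⁻¹ • ∑ i, gradient (fI i) (X w i θ)
        = ((n : ℝ)⁻¹ * (B : ℝ)⁻¹) • ∑ u ∈ range w, ∑ i, ∑ l, Zf (u + 1) i l θ := by
    intro w hw
    induction w with
    | zero =>
      intro θ
      simp [hV0]
    | succ w ih =>
      intro θ
      have hw' : w ≤ q := by omega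
      have ihθ := ih hw' θ
      have hstep : ∀ i, V (w + 1) i θ - gradient (fI i) (X (w + 1) i θ)
          = (V w i θ - gradient (fI i) (X w i θ)) + (B : ℝ)⁻¹ • ∑ l, Zf (w + 1) i l θ := by
        intro i
        have hrec := hVrec (w + 1) (by omega) (by omega) i θ
        have hsimp : (w + 1 : ℕ) - 1 = w := by omega
        rw [hsimp] at hrec
        have hsum : ∑ l, Zf (w + 1) i l θ
            = (∑ l : Fin B, (gradient (f i (TQ hm0 q s s (w + 1) i l θ)) (X (w + 1) i θ)
                - gradient (f i (TQ hm0 q s s (w + 1) i l θ)) (X w i θ)))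
              - (B : ℕ) • ((m : ℝ)⁻¹ • ∑ j, (gradient (f i j) (X (w + 1) i θ)
                - gradient (f i j) (X w i θ))) := by
          rw [hZf]
          simp only [hsimp]
          rw [Finset.sum_sub_distrib, Finset.sum_const, Finset.card_univ, Fintype.card_fin]
        have hgd : gradient (fI i) (X (w + 1) i θ) - gradient (fI i) (X w i θ)
            = (m : ℝ)⁻¹ • ∑ j, (gradient (f i j) (X (w + 1) i θ)
                - gradient (f i j) (X w i θ)) := by
          rw [hgrad, hgrad, ← smul_sub, Finset.sum_sub_distrib]
        have hgd' : gradient (fI i) (X (w + 1) i θ)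
            = gradient (fI i) (X w i θ) + (m : ℝ)⁻¹ • ∑ j, (gradient (f i j) (X (w + 1) i θ)
                - gradient (f i j) (X w i θ)) := by
          rw [← hgd]; abel
        rw [hrec, hsum, smul_sub, ← Nat.cast_smul_eq_nsmul ℝ, smul_smul,
          inv_mul_cancel₀ (by positivity : (B:ℝ) ≠ 0), one_smul, hgd']
        abel
      calc (n : ℝ)⁻¹ • ∑ i, V (w + 1) i θ - (n : ℝ)⁻¹ • ∑ i, gradient (fI i) (X (w + 1) i θ)
          = (n : ℝ)⁻¹ • ∑ i, (V (w + 1) i θ - gradient (fI i) (X (w + 1) i θ)) := by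
            rw [Finset.sum_sub_distrib, smul_sub]
        _ = (n : ℝ)⁻¹ • ∑ i, ((V w i θ - gradient (fI i) (X w i θ))
              + (B : ℝ)⁻¹ • ∑ l, Zf (w + 1) i l θ) := by
            rw [Finset.sum_congr rfl fun i _ => hstep i]
        _ = ((n : ℝ)⁻¹ • ∑ i, V w i θ - (n : ℝ)⁻¹ • ∑ i, gradient (fI i) (X w i θ))
              + ((n : ℝ)⁻¹ * (B : ℝ)⁻¹) • ∑ i, ∑ l, Zf (w + 1) i l θ := by
            rw [Finset.sum_add_distrib, smul_add, Finset.sum_sub_distrib, smul_sub,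
              ← Finset.smul_sum, smul_smul]
        _ = ((n : ℝ)⁻¹ * (B : ℝ)⁻¹) • ∑ u ∈ range (w + 1), ∑ i, ∑ l, Zf (u + 1) i l θ := by
            rw [ihθ, Finset.sum_range_succ, smul_add]

  haveI : Nonempty (Fin m) := Fin.pos_iff_nonempty.1 hm0
  -- update at own coordinate reveals the sampled index
  have hZupd_own : ∀ u (h1 : 1 ≤ u) (h2 : u ≤ q) (i : Fin n) (l : Fin B) θ (j : Fin m),
      Zf u i l (Function.update θ ((⟨u - 1, by omega⟩, ⟨s - 1, by omega⟩, i, l) :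
          Idx q s n B) j)
        = (gradient (f i j) (X u i θ) - gradient (f i j) (X (u - 1) i θ))
          - (m : ℝ)⁻¹ • ∑ j', (gradient (f i j') (X u i θ)
              - gradient (f i j') (X (u - 1) i θ)) := by
    intro u h1 h2 i l θ j
    set c0 : Idx q s n B := (⟨u - 1, by omega⟩, ⟨s - 1, by omega⟩, i, l) with hc0
    have hep : epo c0 = s := by simp only [hc0, epo]; omega
    have htm : tme c0 = u := by simp only [hc0, tme]; omega
    have e1 : TQ (B := B) hm0 q s s u i l (Function.update θ c0 j) = j := by
      rw [hTQeval u h1 h2]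
      exact Function.update_self _ _ _
    have e2 : X u i (Function.update θ c0 j) = X u i θ :=
      hXupd u i θ c0 j hep (by omega)
    have e3 : X (u - 1) i (Function.update θ c0 j) = X (u - 1) i θ :=
      hXupd (u - 1) i θ c0 j hep (by omega)
    have e4 : ∀ j' : Fin m, gradient (f i j') (X u i (Function.update θ c0 j))
        - gradient (f i j') (X (u - 1) i (Function.update θ c0 j))
        = gradient (f i j') (X u i θ) - gradient (f i j') (X (u - 1) i θ) := by
      intro j'; rw [e2, e3]
    show (gradient (f i (TQ hm0 q s s u i l (Function.update θ c0 j)))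
          (X u i (Function.update θ c0 j))
        - gradient (f i (TQ hm0 q s s u i l (Function.update θ c0 j)))
          (X (u - 1) i (Function.update θ c0 j)))
      - (m : ℝ)⁻¹ • ∑ j', (gradient (f i j') (X u i (Function.update θ c0 j))
          - gradient (f i j') (X (u - 1) i (Function.update θ c0 j))) = _
    rw [e1, e2, e3]
  -- update at a later/other coordinate does not change Zf
  have hZupd_ne : ∀ u (h1 : 1 ≤ u) (h2 : u ≤ q) (i : Fin n) (l : Fin B)
      (c0 : Idx q s n B) (hep : epo c0 = s) (htm : u ≤ tme c0)
      (hne : c0 ≠ ((⟨u - 1, by omega⟩, ⟨s - 1, by omega⟩, i, l) : Idx q s n B)) (θ) (j : Fin m),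
      Zf u i l (Function.update θ c0 j) = Zf u i l θ := by
    intro u h1 h2 i l c0 hep htm hne θ j
    have e1 : TQ (B := B) hm0 q s s u i l (Function.update θ c0 j)
        = TQ (B := B) hm0 q s s u i l θ := by
      rw [hTQeval u h1 h2, hTQeval u h1 h2]
      exact Function.update_of_ne (Ne.symm hne) _ _
    have e2 : X u i (Function.update θ c0 j) = X u i θ := hXupd u i θ c0 j hep htm
    have e3 : X (u - 1) i (Function.update θ c0 j) = X (u - 1) i θ :=
      hXupd (u - 1) i θ c0 j hep (by omega)
    show (gradient (f i (TQ hm0 q s s u i l (Function.update θ c0 j)))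
          (X u i (Function.update θ c0 j))
        - gradient (f i (TQ hm0 q s s u i l (Function.update θ c0 j)))
          (X (u - 1) i (Function.update θ c0 j)))
      - (m : ℝ)⁻¹ • ∑ j', (gradient (f i j') (X u i (Function.update θ c0 j))
          - gradient (f i j') (X (u - 1) i (Function.update θ c0 j)))
      = (gradient (f i (TQ hm0 q s s u i l θ)) (X u i θ)
        - gradient (f i (TQ hm0 q s s u i l θ)) (X (u - 1) i θ))
      - (m : ℝ)⁻¹ • ∑ j', (gradient (f i j') (X u i θ) - gradient (f i j') (X (u - 1) i θ))
    rw [e1, e2, e3]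
  -- diagonal bound
  have hdiag : ∀ u (h1 : 1 ≤ u) (h2 : u ≤ q) (i : Fin n) (l : Fin B),
      ∑ θ : Idx q s n B → Fin m, ‖Zf u i l θ‖ ^ 2
        ≤ L ^ 2 * ∑ θ : Idx q s n B → Fin m, ‖X u i θ - X (u - 1) i θ‖ ^ 2 := by
    intro u h1 h2 i l
    set c0 : Idx q s n B := (⟨u - 1, by omega⟩, ⟨s - 1, by omega⟩, i, l) with hc0
    have hkey := sum_update_eq (fun θ : Idx q s n B → Fin m => ‖Zf u i l θ‖ ^ 2) c0
    rw [Fintype.card_fin] at hkey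
    have hptw : ∀ θ : Idx q s n B → Fin m, ∑ j : Fin m, ‖Zf u i l (Function.update θ c0 j)‖ ^ 2
        ≤ (m : ℝ) * (L ^ 2 * ‖X u i θ - X (u - 1) i θ‖ ^ 2) := by
      intro θ
      set g : Fin m → Ep p := fun j' => gradient (f i j') (X u i θ)
          - gradient (f i j') (X (u - 1) i θ) with hg
      have e : ∀ j : Fin m, Zf u i l (Function.update θ c0 j)
          = g j - (m : ℝ)⁻¹ • ∑ j', g j' := fun j => hZupd_own u h1 h2 i l θ j
      calc ∑ j : Fin m, ‖Zf u i l (Function.update θ c0 j)‖ ^ 2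
          = ∑ j : Fin m, ‖g j - (m : ℝ)⁻¹ • ∑ j', g j'‖ ^ 2 :=
            Finset.sum_congr rfl fun j _ => by rw [e j]
        _ ≤ ∑ j : Fin m, ‖g j‖ ^ 2 := sum_sub_avg_sq_le hm0 g
        _ ≤ (m : ℝ) * (L ^ 2 * ‖X u i θ - X (u - 1) i θ‖ ^ 2) := by
            have hs := hsmooth i (X u i θ) (X (u - 1) i θ)
            have : ∑ j : Fin m, ‖g j‖ ^ 2
                = (m : ℝ) * ((m : ℝ)⁻¹ * ∑ j : Fin m, ‖g j‖ ^ 2) := by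
              field_simp
            rw [this]
            have h2' : (m : ℝ)⁻¹ * ∑ j : Fin m, ‖g j‖ ^ 2
                ≤ L ^ 2 * ‖X u i θ - X (u - 1) i θ‖ ^ 2 := hs
            nlinarith [hm0']
    have hle : (m : ℝ) * ∑ θ : Idx q s n B → Fin m, ‖Zf u i l θ‖ ^ 2
        ≤ (m : ℝ) * (L ^ 2 * ∑ θ : Idx q s n B → Fin m, ‖X u i θ - X (u - 1) i θ‖ ^ 2) := by
      calc (m : ℝ) * ∑ θ : Idx q s n B → Fin m, ‖Zf u i l θ‖ ^ 2
          = ∑ θ : Idx q s n B → Fin m, ∑ j : Fin m, ‖Zf u i l (Function.update θ c0 j)‖ ^ 2 := by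
            rw [hkey, nsmul_eq_mul]
        _ ≤ ∑ θ : Idx q s n B → Fin m, (m : ℝ) * (L ^ 2 * ‖X u i θ - X (u - 1) i θ‖ ^ 2) :=
            Finset.sum_le_sum fun θ _ => hptw θ
        _ = (m : ℝ) * (L ^ 2 * ∑ θ : Idx q s n B → Fin m, ‖X u i θ - X (u - 1) i θ‖ ^ 2) := by
            rw [← Finset.mul_sum, ← Finset.mul_sum]
    exact le_of_mul_le_mul_left hle hm0'
  -- cross terms vanish
  have hcross : ∀ u u' (h1 : 1 ≤ u) (hle : u ≤ u') (h2 : u' ≤ q) (i i' : Fin n) (l l' : Fin B)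
      (hne : ¬(u = u' ∧ i = i' ∧ l = l')),
      ∑ θ : Idx q s n B → Fin m, (inner ℝ (Zf u i l θ) (Zf u' i' l' θ) : ℝ) = 0 := by
    intro u u' h1 hle h2 i i' l l' hne
    set c0 : Idx q s n B := (⟨u' - 1, by omega⟩, ⟨s - 1, by omega⟩, i', l') with hc0
    have hep : epo c0 = s := by simp only [hc0, epo]; omega
    have htm : tme c0 = u' := by simp only [hc0, tme]; omega
    refine sum_inner_zero (Zf u i l) (Zf u' i' l') c0 ?_ ?_ ?_
    · intro θ j
      refine hZupd_ne u h1 (le_trans hle h2) i l c0 hep (by omega) ?_ θ j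
      intro he
      apply hne
      have h1' : u' - 1 = u - 1 := congrArg (fun c : Idx q s n B => c.1.1) he
      have h2' : i' = i := congrArg (fun c : Idx q s n B => c.2.2.1) he
      have h3' : l' = l := congrArg (fun c : Idx q s n B => c.2.2.2) he
      exact ⟨by omega, h2'.symm, h3'.symm⟩
    · intro θ
      have e : ∀ j : Fin m, Zf u' i' l' (Function.update θ c0 j)
          = (gradient (f i' j) (X u' i' θ) - gradient (f i' j) (X (u' - 1) i' θ))
            - (m : ℝ)⁻¹ • ∑ j', (gradient (f i' j') (X u' i' θ)
                - gradient (f i' j') (X (u' - 1) i' θ)) :=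
        fun j => hZupd_own u' (le_trans h1 hle) h2 i' l' θ j
      rw [Finset.sum_congr rfl fun j _ => e j, Finset.sum_sub_distrib, Finset.sum_const,
        Finset.card_univ, Fintype.card_fin, ← Nat.cast_smul_eq_nsmul ℝ, smul_smul,
        mul_inv_cancel₀ (by positivity : (m : ℝ) ≠ 0), one_smul, sub_self]
    · exact sum_update_eq (fun θ : Idx q s n B → Fin m =>
        (inner ℝ (Zf u i l θ) (Zf u' i' l' θ) : ℝ)) c0
  -- expansion of the squared norm of the sum
  set K : Finset (ℕ × Fin n × Fin B) := (range t) ×ˢ (univ : Finset (Fin n × Fin B)) with hK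
  have hexp : ∑ θ : Idx q s n B → Fin m, ‖∑ k ∈ K, Zf (k.1 + 1) k.2.1 k.2.2 θ‖ ^ 2
      = ∑ k ∈ K, ∑ θ : Idx q s n B → Fin m, ‖Zf (k.1 + 1) k.2.1 k.2.2 θ‖ ^ 2 := by
    have h1 : ∀ θ : Idx q s n B → Fin m, ‖∑ k ∈ K, Zf (k.1 + 1) k.2.1 k.2.2 θ‖ ^ 2
        = ∑ k ∈ K, ∑ k' ∈ K, (inner ℝ (Zf (k.1 + 1) k.2.1 k.2.2 θ)
            (Zf (k'.1 + 1) k'.2.1 k'.2.2 θ) : ℝ) := by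
      intro θ
      rw [← real_inner_self_eq_norm_sq, sum_inner]
      exact Finset.sum_congr rfl fun k _ => by rw [inner_sum]
    rw [Finset.sum_congr rfl fun θ _ => h1 θ, Finset.sum_comm]
    refine Finset.sum_congr rfl fun k hk => ?_
    rw [Finset.sum_comm]
    rw [Finset.sum_eq_single_of_mem k hk]
    · exact Finset.sum_congr rfl fun θ _ => real_inner_self_eq_norm_sq _
    · intro k' hk' hkk'
      have hkK : k.1 < t := (Finset.mem_product.1 hk).1 |> Finset.mem_range.1
      have hk'K : k'.1 < t := (Finset.mem_product.1 hk').1 |> Finset.mem_range.1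
      rcases le_total (k.1) (k'.1) with hle | hle
      · refine hcross (k.1 + 1) (k'.1 + 1) (by omega) (by omega) (by omega)
          k.2.1 k'.2.1 k.2.2 k'.2.2 ?_
        rintro ⟨ha, hb, hc⟩
        exact hkk' (by
          apply Prod.ext
          · omega
          · exact Prod.ext hb.symm hc.symm)
      · rw [Finset.sum_congr rfl fun θ _ => real_inner_comm _ _]
        refine hcross (k'.1 + 1) (k.1 + 1) (by omega) (by omega) (by omega)
          k'.2.1 k.2.1 k'.2.2 k.2.2 ?_
        rintro ⟨ha, hb, hc⟩
        exact hkk' (by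
          apply Prod.ext
          · omega
          · exact Prod.ext hb hc)

  -- pointwise three-term bound after one step
  have hptD : ∀ u, u + 1 ≤ q → ∀ θ (i : Fin n),
      ‖X (u + 1) i θ - X u i θ‖ ^ 2
        ≤ 3 * ‖X (u + 1) i θ - (n : ℝ)⁻¹ • ∑ i', X (u + 1) i' θ‖ ^ 2
          + 3 * ‖X u i θ - (n : ℝ)⁻¹ • ∑ i', X u i' θ‖ ^ 2
          + 3 * (α ^ 2 * ‖(n : ℝ)⁻¹ • ∑ i', V u i' θ‖ ^ 2) := by
    intro u huq θ i
    have hc : (n : ℝ)⁻¹ • ∑ i', X (u + 1) i' θ - (n : ℝ)⁻¹ • ∑ i', X u i' θ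
        = -(α • ((n : ℝ)⁻¹ • ∑ i', V u i' θ)) := by
      have hb := hXbar (u + 1) (by omega) huq θ
      rw [Nat.add_sub_cancel] at hb
      rw [hb, smul_sub, smul_comm]
      abel
    have hdec : X (u + 1) i θ - X u i θ
        = (X (u + 1) i θ - (n : ℝ)⁻¹ • ∑ i', X (u + 1) i' θ)
          + (-(X u i θ - (n : ℝ)⁻¹ • ∑ i', X u i' θ))
          + ((n : ℝ)⁻¹ • ∑ i', X (u + 1) i' θ - (n : ℝ)⁻¹ • ∑ i', X u i' θ) := by
      abel
    calc ‖X (u + 1) i θ - X u i θ‖ ^ 2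
        = ‖(X (u + 1) i θ - (n : ℝ)⁻¹ • ∑ i', X (u + 1) i' θ)
          + (-(X u i θ - (n : ℝ)⁻¹ • ∑ i', X u i' θ))
          + ((n : ℝ)⁻¹ • ∑ i', X (u + 1) i' θ - (n : ℝ)⁻¹ • ∑ i', X u i' θ)‖ ^ 2 := by
          rw [← hdec]
      _ ≤ 3 * ‖X (u + 1) i θ - (n : ℝ)⁻¹ • ∑ i', X (u + 1) i' θ‖ ^ 2
          + 3 * ‖-(X u i θ - (n : ℝ)⁻¹ • ∑ i', X u i' θ)‖ ^ 2
          + 3 * ‖(n : ℝ)⁻¹ • ∑ i', X (u + 1) i' θ - (n : ℝ)⁻¹ • ∑ i', X u i' θ‖ ^ 2 :=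
          norm_add3_sq_le _ _ _
      _ = 3 * ‖X (u + 1) i θ - (n : ℝ)⁻¹ • ∑ i', X (u + 1) i' θ‖ ^ 2
          + 3 * ‖X u i θ - (n : ℝ)⁻¹ • ∑ i', X u i' θ‖ ^ 2
          + 3 * (α ^ 2 * ‖(n : ℝ)⁻¹ • ∑ i', V u i' θ‖ ^ 2) := by
          rw [norm_neg, hc, norm_neg, norm_smul, mul_pow, Real.norm_eq_abs, sq_abs]
  have hKsum : ∀ θ : Idx q s n B → Fin m, ∑ k ∈ K, Zf (k.1 + 1) k.2.1 k.2.2 θ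
      = ∑ u ∈ range t, ∑ i, ∑ l, Zf (u + 1) i l θ := by
    intro θ
    rw [hK, Finset.sum_product]
    exact Finset.sum_congr rfl fun u _ => Fintype.sum_prod_type _
  have hCx0 : ∀ u, (0:ℝ) ≤ ∑ θ : Idx q s n B → Fin m, ∑ i,
      ‖X u i θ - (n : ℝ)⁻¹ • ∑ i', X u i' θ‖ ^ 2 :=
    fun u => Finset.sum_nonneg fun θ _ => Finset.sum_nonneg fun i _ => by positivity
  -- the per-u bound
  have hstepu : ∀ u ∈ range t,
      ∑ pr : Fin n × Fin B, L ^ 2 * ∑ θ : Idx q s n B → Fin m,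
          ‖X (u + 1) pr.1 θ - X u pr.1 θ‖ ^ 2
        ≤ (B : ℝ) * L ^ 2 * (3 * (∑ θ : Idx q s n B → Fin m, ∑ i,
              ‖X (u + 1) i θ - (n : ℝ)⁻¹ • ∑ i', X (u + 1) i' θ‖ ^ 2)
            + 3 * (∑ θ : Idx q s n B → Fin m, ∑ i,
              ‖X u i θ - (n : ℝ)⁻¹ • ∑ i', X u i' θ‖ ^ 2)
            + 3 * (α ^ 2 * (n : ℝ) * ∑ θ : Idx q s n B → Fin m,
              ‖(n : ℝ)⁻¹ • ∑ i, V u i θ‖ ^ 2)) := by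
    intro u hu
    have huq : u + 1 ≤ q := by have := Finset.mem_range.1 hu; omega
    have hsum1 : ∑ pr : Fin n × Fin B, L ^ 2 * ∑ θ : Idx q s n B → Fin m,
        ‖X (u + 1) pr.1 θ - X u pr.1 θ‖ ^ 2
        = (B : ℝ) * (L ^ 2 * ∑ θ : Idx q s n B → Fin m, ∑ i,
            ‖X (u + 1) i θ - X u i θ‖ ^ 2) := by
      rw [Fintype.sum_prod_type]
      simp only [Finset.sum_const, Finset.card_univ, Fintype.card_fin, nsmul_eq_mul]
      rw [← Finset.mul_sum, ← Finset.mul_sum]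
      congr 1
      congr 1
      exact Finset.sum_comm
    rw [hsum1]
    have hθ : ∑ θ : Idx q s n B → Fin m, ∑ i, ‖X (u + 1) i θ - X u i θ‖ ^ 2
        ≤ 3 * (∑ θ : Idx q s n B → Fin m, ∑ i,
              ‖X (u + 1) i θ - (n : ℝ)⁻¹ • ∑ i', X (u + 1) i' θ‖ ^ 2)
          + 3 * (∑ θ : Idx q s n B → Fin m, ∑ i,
              ‖X u i θ - (n : ℝ)⁻¹ • ∑ i', X u i' θ‖ ^ 2)
          + 3 * (α ^ 2 * (n : ℝ) * ∑ θ : Idx q s n B → Fin m,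
              ‖(n : ℝ)⁻¹ • ∑ i, V u i θ‖ ^ 2) := by
      have hper : ∀ θ : Idx q s n B → Fin m, ∑ i, ‖X (u + 1) i θ - X u i θ‖ ^ 2
          ≤ 3 * (∑ i, ‖X (u + 1) i θ - (n : ℝ)⁻¹ • ∑ i', X (u + 1) i' θ‖ ^ 2)
            + 3 * (∑ i, ‖X u i θ - (n : ℝ)⁻¹ • ∑ i', X u i' θ‖ ^ 2)
            + 3 * (α ^ 2 * (n : ℝ) * ‖(n : ℝ)⁻¹ • ∑ i, V u i θ‖ ^ 2) := by
        intro θ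
        calc ∑ i, ‖X (u + 1) i θ - X u i θ‖ ^ 2
            ≤ ∑ i : Fin n, (3 * ‖X (u + 1) i θ - (n : ℝ)⁻¹ • ∑ i', X (u + 1) i' θ‖ ^ 2
              + 3 * ‖X u i θ - (n : ℝ)⁻¹ • ∑ i', X u i' θ‖ ^ 2
              + 3 * (α ^ 2 * ‖(n : ℝ)⁻¹ • ∑ i', V u i' θ‖ ^ 2)) :=
              Finset.sum_le_sum fun i _ => hptD u huq θ i
          _ = 3 * (∑ i, ‖X (u + 1) i θ - (n : ℝ)⁻¹ • ∑ i', X (u + 1) i' θ‖ ^ 2)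
              + 3 * (∑ i, ‖X u i θ - (n : ℝ)⁻¹ • ∑ i', X u i' θ‖ ^ 2)
              + 3 * (α ^ 2 * (n : ℝ) * ‖(n : ℝ)⁻¹ • ∑ i, V u i θ‖ ^ 2) := by
              rw [Finset.sum_add_distrib, Finset.sum_add_distrib, Finset.sum_const,
                Finset.card_univ, Fintype.card_fin, ← Finset.mul_sum, ← Finset.mul_sum,
                nsmul_eq_mul]
              ring
      calc ∑ θ : Idx q s n B → Fin m, ∑ i, ‖X (u + 1) i θ - X u i θ‖ ^ 2
          ≤ ∑ θ : Idx q s n B → Fin m,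
              (3 * (∑ i, ‖X (u + 1) i θ - (n : ℝ)⁻¹ • ∑ i', X (u + 1) i' θ‖ ^ 2)
              + 3 * (∑ i, ‖X u i θ - (n : ℝ)⁻¹ • ∑ i', X u i' θ‖ ^ 2)
              + 3 * (α ^ 2 * (n : ℝ) * ‖(n : ℝ)⁻¹ • ∑ i, V u i θ‖ ^ 2)) :=
            Finset.sum_le_sum fun θ _ => hper θ
        _ = _ := by
            rw [Finset.sum_add_distrib, Finset.sum_add_distrib]
            simp only [← Finset.mul_sum]
    calc (B : ℝ) * (L ^ 2 * ∑ θ : Idx q s n B → Fin m, ∑ i, ‖X (u + 1) i θ - X u i θ‖ ^ 2)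
        ≤ (B : ℝ) * (L ^ 2 * (3 * (∑ θ : Idx q s n B → Fin m, ∑ i,
              ‖X (u + 1) i θ - (n : ℝ)⁻¹ • ∑ i', X (u + 1) i' θ‖ ^ 2)
            + 3 * (∑ θ : Idx q s n B → Fin m, ∑ i,
              ‖X u i θ - (n : ℝ)⁻¹ • ∑ i', X u i' θ‖ ^ 2)
            + 3 * (α ^ 2 * (n : ℝ) * ∑ θ : Idx q s n B → Fin m,
              ‖(n : ℝ)⁻¹ • ∑ i, V u i θ‖ ^ 2))) := by
          refine mul_le_mul_of_nonneg_left (mul_le_mul_of_nonneg_left hθ (by positivity))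
            (by positivity)
      _ = _ := by ring
  -- main chain
  calc ∑ θ : Idx q s n B → Fin m, ‖(n : ℝ)⁻¹ • ∑ i, V t i θ
        - (n : ℝ)⁻¹ • ∑ i, gradient (fI i) (X t i θ)‖ ^ 2
      = ∑ θ : Idx q s n B → Fin m,
          ‖((n : ℝ)⁻¹ * (B : ℝ)⁻¹) • ∑ k ∈ K, Zf (k.1 + 1) k.2.1 k.2.2 θ‖ ^ 2 := by
        refine Finset.sum_congr rfl fun θ _ => ?_
        rw [htel t htq θ, ← hKsum θ]
    _ = ((n : ℝ)⁻¹ * (B : ℝ)⁻¹) ^ 2 * ∑ θ : Idx q s n B → Fin m,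
          ‖∑ k ∈ K, Zf (k.1 + 1) k.2.1 k.2.2 θ‖ ^ 2 := by
        rw [Finset.mul_sum]
        refine Finset.sum_congr rfl fun θ _ => ?_
        rw [norm_smul, mul_pow, Real.norm_eq_abs, sq_abs]
    _ = ((n : ℝ)⁻¹ * (B : ℝ)⁻¹) ^ 2 * ∑ k ∈ K, ∑ θ : Idx q s n B → Fin m,
          ‖Zf (k.1 + 1) k.2.1 k.2.2 θ‖ ^ 2 := by rw [hexp]
    _ ≤ ((n : ℝ)⁻¹ * (B : ℝ)⁻¹) ^ 2 * ∑ k ∈ K, L ^ 2 * ∑ θ : Idx q s n B → Fin m,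
          ‖X (k.1 + 1) k.2.1 θ - X k.1 k.2.1 θ‖ ^ 2 := by
        refine mul_le_mul_of_nonneg_left (Finset.sum_le_sum fun k hk => ?_) (by positivity)
        have hkt : k.1 < t := Finset.mem_range.1 (Finset.mem_product.1 hk).1
        have hd := hdiag (k.1 + 1) (by omega) (by omega) k.2.1 k.2.2
        rwa [Nat.add_sub_cancel] at hd
    _ = ((n : ℝ)⁻¹ * (B : ℝ)⁻¹) ^ 2 * ∑ u ∈ range t, ∑ pr : Fin n × Fin B,
          L ^ 2 * ∑ θ : Idx q s n B → Fin m, ‖X (u + 1) pr.1 θ - X u pr.1 θ‖ ^ 2 := by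
        rw [hK, Finset.sum_product]
    _ ≤ ((n : ℝ)⁻¹ * (B : ℝ)⁻¹) ^ 2 * ∑ u ∈ range t,
          (B : ℝ) * L ^ 2 * (3 * (∑ θ : Idx q s n B → Fin m, ∑ i,
              ‖X (u + 1) i θ - (n : ℝ)⁻¹ • ∑ i', X (u + 1) i' θ‖ ^ 2)
            + 3 * (∑ θ : Idx q s n B → Fin m, ∑ i,
              ‖X u i θ - (n : ℝ)⁻¹ • ∑ i', X u i' θ‖ ^ 2)
            + 3 * (α ^ 2 * (n : ℝ) * ∑ θ : Idx q s n B → Fin m,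
              ‖(n : ℝ)⁻¹ • ∑ i, V u i θ‖ ^ 2)) :=
        mul_le_mul_of_nonneg_left (Finset.sum_le_sum hstepu) (by positivity)
    _ = (3 * α ^ 2 * L ^ 2 / ((n : ℝ) * B)) * ∑ u ∈ range t,
            ∑ θ : Idx q s n B → Fin m, ‖(n : ℝ)⁻¹ • ∑ i, V u i θ‖ ^ 2
        + (3 * L ^ 2 / ((n : ℝ) ^ 2 * B)) * ∑ u ∈ range t,
            ∑ θ : Idx q s n B → Fin m, ∑ i,
              ‖X (u + 1) i θ - (n : ℝ)⁻¹ • ∑ i', X (u + 1) i' θ‖ ^ 2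
        + (3 * L ^ 2 / ((n : ℝ) ^ 2 * B)) * ∑ u ∈ range t,
            ∑ θ : Idx q s n B → Fin m, ∑ i,
              ‖X u i θ - (n : ℝ)⁻¹ • ∑ i', X u i' θ‖ ^ 2 := by
        rw [Finset.mul_sum, Finset.mul_sum, Finset.mul_sum, Finset.mul_sum,
          ← Finset.sum_add_distrib, ← Finset.sum_add_distrib]
        refine Finset.sum_congr rfl fun u _ => ?_
        field_simp
        ring
    _ ≤ (3 * α ^ 2 * L ^ 2 / ((n : ℝ) * B)) * ∑ u ∈ range t,
            ∑ θ : Idx q s n B → Fin m, ‖(n : ℝ)⁻¹ • ∑ i, V u i θ‖ ^ 2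
        + (6 * L ^ 2 / ((n : ℝ) ^ 2 * B)) * ∑ u ∈ range (t + 1),
            ∑ θ : Idx q s n B → Fin m, ∑ i,
              ‖X u i θ - (n : ℝ)⁻¹ • ∑ i', X u i' θ‖ ^ 2 := by
        have hco : (0:ℝ) ≤ 3 * L ^ 2 / ((n : ℝ) ^ 2 * B) := by positivity
        have h1 : ∑ u ∈ range t, ∑ θ : Idx q s n B → Fin m, ∑ i,
              ‖X (u + 1) i θ - (n : ℝ)⁻¹ • ∑ i', X (u + 1) i' θ‖ ^ 2
            ≤ ∑ u ∈ range (t + 1), ∑ θ : Idx q s n B → Fin m, ∑ i,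
              ‖X u i θ - (n : ℝ)⁻¹ • ∑ i', X u i' θ‖ ^ 2 := by
          rw [Finset.sum_range_succ' (fun u => ∑ θ : Idx q s n B → Fin m, ∑ i,
            ‖X u i θ - (n : ℝ)⁻¹ • ∑ i', X u i' θ‖ ^ 2) t]
          have := hCx0 0
          linarith
        have h2 : ∑ u ∈ range t, ∑ θ : Idx q s n B → Fin m, ∑ i,
              ‖X u i θ - (n : ℝ)⁻¹ • ∑ i', X u i' θ‖ ^ 2
            ≤ ∑ u ∈ range (t + 1), ∑ θ : Idx q s n B → Fin m, ∑ i,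
              ‖X u i θ - (n : ℝ)⁻¹ • ∑ i', X u i' θ‖ ^ 2 := by
          rw [Finset.sum_range_succ]
          have := hCx0 t
          linarith
        have e1 := mul_le_mul_of_nonneg_left h1 hco
        have e2 := mul_le_mul_of_nonneg_left h2 hco
        have hdbl : 3 * L ^ 2 / ((n:ℝ) ^ 2 * B) * (∑ u ∈ range (t + 1),
              ∑ θ : Idx q s n B → Fin m, ∑ i,
                ‖X u i θ - (n : ℝ)⁻¹ • ∑ i', X u i' θ‖ ^ 2)
            + 3 * L ^ 2 / ((n:ℝ) ^ 2 * B) * (∑ u ∈ range (t + 1),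
              ∑ θ : Idx q s n B → Fin m, ∑ i,
                ‖X u i θ - (n : ℝ)⁻¹ • ∑ i', X u i' θ‖ ^ 2)
            = 6 * L ^ 2 / ((n:ℝ) ^ 2 * B) * (∑ u ∈ range (t + 1),
              ∑ θ : Idx q s n B → Fin m, ∑ i,
                ‖X u i θ - (n : ℝ)⁻¹ • ∑ i', X u i' θ‖ ^ 2) := by ring
        linarith

end Core

section Track

variable {n m p q B : ℕ} {Th : Type*}
variable (W : Matrix (Fin n) (Fin n) ℝ) (α : ℝ) (f : Fin n → Fin m → Ep p → ℝ)
  (fI : Fin n → Ep p → ℝ) (x0 : Ep p)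

lemma avgW (hWcol : ∀ r, ∑ i, W i r = 1) (g : Fin n → Ep p) :
    ∑ i, ∑ r, W i r • g r = ∑ r, g r := by
  rw [Finset.sum_comm]
  refine Finset.sum_congr rfl fun r _ => ?_
  rw [← Finset.sum_smul, hWcol, one_smul]

lemma stepy_sum (hWcol : ∀ r, ∑ i, W i r = 1) (st : St n p Th) (θ : Th)
    (hI : ∑ i, st.y i θ = ∑ i, st.vp i θ) :
    ∑ i, ((∑ r, W i r • st.y r θ) + st.v i θ - st.vp i θ) = ∑ i, st.v i θ := by
  rw [Finset.sum_sub_distrib, Finset.sum_add_distrib, avgW W hWcol, hI]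
  abel

lemma track_step (hWcol : ∀ r, ∑ i, W i r = 1) (tq : Fin n → Fin B → Th → Fin m)
    (st : St n p Th) (θ : Th) (hI : ∑ i, st.y i θ = ∑ i, st.vp i θ) :
    ∑ i, (step W α f tq st).y i θ = ∑ i, (step W α f tq st).vp i θ := by
  show ∑ i, ((∑ r, W i r • st.y r θ) + st.v i θ - st.vp i θ) = ∑ i, st.v i θ
  exact stepy_sum W hWcol st θ hI

lemma track_all (hWcol : ∀ r, ∑ i, W i r = 1)
    (tq2 : ℕ → ℕ → Fin n → Fin B → Th → Fin m) :
    ∀ s' t' (θ : Th), ∑ i, (stAt W α f fI x0 q tq2 s' t').y i θ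
      = ∑ i, (stAt W α f fI x0 q tq2 s' t').vp i θ := by
  have hrun : ∀ (tq : ℕ → Fin n → Fin B → Th → Fin m) (st0 : St n p Th),
      (∀ θ, ∑ i, st0.y i θ = ∑ i, st0.vp i θ) →
      ∀ t' θ, ∑ i, (run W α f tq st0 t').y i θ = ∑ i, (run W α f tq st0 t').vp i θ := by
    intro tq st0 h0 t'
    induction t' with
    | zero => exact h0
    | succ tt ih => exact fun θ => track_step W α f hWcol (tq (tt + 1)) _ θ (ih θ)
  have heinit : ∀ k θ, ∑ i, (einit W α f fI x0 q tq2 k).y i θ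
      = ∑ i, (einit W α f fI x0 q tq2 k).vp i θ := by
    intro k
    induction k with
    | zero => intro θ; simp [einit, init1]
    | succ kk ih =>
      intro θ
      show ∑ i, (run W α f (tq2 (kk + 1)) (einit W α f fI x0 q tq2 kk) (q + 1)).y i θ
        = ∑ i, (run W α f (tq2 (kk + 1)) (einit W α f fI x0 q tq2 kk) (q + 1)).vp i θ
      exact hrun _ _ ih (q + 1) θ
  intro s' t' θ
  exact hrun _ _ (heinit (s' - 1)) t' θ

lemma xbar_step (hWcol : ∀ r, ∑ i, W i r = 1) (tq : Fin n → Fin B → Th → Fin m)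
    (st : St n p Th) (θ : Th) (hI : ∑ i, st.y i θ = ∑ i, st.vp i θ) :
    ∑ i, (step W α f tq st).x i θ = ∑ i, st.x i θ - α • ∑ i, st.v i θ := by
  show ∑ i, ((∑ r, W i r • st.x r θ)
      - α • ((∑ r, W i r • st.y r θ) + st.v i θ - st.vp i θ)) = _
  rw [Finset.sum_sub_distrib, avgW W hWcol, ← Finset.smul_sum,
    stepy_sum W hWcol st θ hI]

lemma v0_einit : ∀ k (i : Fin n) (θ : Th),
    (einit W α f fI x0 q tq2 k).v i θ = gradient (fI i) ((einit W α f fI x0 q tq2 k).x i θ) := by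
  intro k i θ
  cases k with
  | zero => rfl
  | succ kk => rfl

lemma stAt_carry (tq2 : ℕ → ℕ → Fin n → Fin B → Th → Fin m) (k : ℕ) (hk : 1 ≤ k) :
    stAt W α f fI x0 q tq2 (k + 1) 0 = carry fI (stAt W α f fI x0 q tq2 k (q + 1)) := by
  obtain ⟨k', rfl⟩ : ∃ k', k = k' + 1 := ⟨k - 1, by omega⟩
  rfl

end Track
end GTS

/-- GT-SARAH setup. -/
theorem gt_sarah_vr_step
    {Ω : Type*} [MeasurableSpace Ω] (μ : Measure Ω) [IsProbabilityMeasure μ]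
    (n m p q B : ℕ) (hn : 1 ≤ n) (hm : 1 ≤ m) (hp : 1 ≤ p) (hq : 1 ≤ q)
    (hB1 : 1 ≤ B) (hBm : B ≤ m)
    (α L : ℝ) (hα0 : 0 < α) (hL : 0 < L)
    (f : Fin n → Fin m → EuclideanSpace ℝ (Fin p) → ℝ)
    (hdiff : ∀ i j, Differentiable ℝ (f i j))
    (hsmooth : ∀ i (u w : EuclideanSpace ℝ (Fin p)),
      (m : ℝ)⁻¹ * ∑ j, ‖gradient (f i j) u - gradient (f i j) w‖ ^ 2 ≤ L ^ 2 * ‖u - w‖ ^ 2)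
    (fI : Fin n → EuclideanSpace ℝ (Fin p) → ℝ)
    (hfI : ∀ i, fI i = fun z => (m : ℝ)⁻¹ * ∑ j, f i j z)
    (F : EuclideanSpace ℝ (Fin p) → ℝ)
    (hF : F = fun z => (n : ℝ)⁻¹ * ∑ i, fI i z)
    (Fstar : ℝ) (hFbdd : BddBelow (Set.range F)) (hFstar : Fstar = sInf (Set.range F))
    (W : Matrix (Fin n) (Fin n) ℝ)
    (hWnonneg : ∀ i r, 0 ≤ W i r) (hWdiag : ∀ i, 0 < W i i)
    (hWprim : ∃ k : ℕ, 0 < k ∧ ∀ i r, 0 < (W ^ k) i r)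
    (hWrow : ∀ i, ∑ r, W i r = 1) (hWcol : ∀ r, ∑ i, W i r = 1)
    (lam : ℝ)
    (hlam : lam = ‖(Matrix.toEuclideanCLM (𝕜 := ℝ) (W - Matrix.of fun _ _ => (n : ℝ)⁻¹) :
      EuclideanSpace ℝ (Fin n) →L[ℝ] EuclideanSpace ℝ (Fin n))‖)
    (hlam0 : 0 ≤ lam) (hlam1 : lam < 1)
    (τ : ℕ → ℕ → Fin n → Fin B → Ω → Fin m)
    (hτmeas : ∀ t s i l, Measurable (τ t s i l))
    (hτindep : ProbabilityTheory.iIndepFun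
      (m := fun _ : {u : ℕ × ℕ // 1 ≤ u.1 ∧ u.1 ≤ q ∧ 1 ≤ u.2} × Fin n × Fin B =>
        (inferInstance : MeasurableSpace (Fin m)))
      (fun idx => τ idx.1.1.1 idx.1.1.2 idx.2.1 idx.2.2) μ)
    (hτunif : ∀ t s (i : Fin n) (l : Fin B), 1 ≤ t → t ≤ q → 1 ≤ s → ∀ j : Fin m,
      μ (τ t s i l ⁻¹' {j}) = 1 / (m : ENNReal))
    (x y : ℕ → ℕ → Fin n → Ω → EuclideanSpace ℝ (Fin p))
    (v : ℤ → ℕ → Fin n → Ω → EuclideanSpace ℝ (Fin p))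
    (x0 : EuclideanSpace ℝ (Fin p))
    (hx0 : ∀ i ω, x 0 1 i ω = x0)
    (hy0 : ∀ i ω, y 0 1 i ω = 0)
    (hvm1 : ∀ i ω, v (-1) 1 i ω = 0)
    (hv0 : ∀ s, 1 ≤ s → ∀ i ω, v 0 s i ω = gradient (fI i) (x 0 s i ω))
    (hvrec : ∀ s, 1 ≤ s → ∀ t : ℕ, 1 ≤ t → t ≤ q → ∀ i ω,
      v (t : ℤ) s i ω = (B : ℝ)⁻¹ • (∑ l, (gradient (f i (τ t s i l ω)) (x t s i ω)
        - gradient (f i (τ t s i l ω)) (x (t - 1) s i ω))) + v ((t : ℤ) - 1) s i ω)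
    (hyrec : ∀ s, 1 ≤ s → ∀ t : ℕ, t ≤ q → ∀ i ω,
      y (t + 1) s i ω = (∑ r, W i r • y t s r ω) + v (t : ℤ) s i ω - v ((t : ℤ) - 1) s i ω)
    (hxrec : ∀ s, 1 ≤ s → ∀ t : ℕ, t ≤ q → ∀ i ω,
      x (t + 1) s i ω = (∑ r, W i r • x t s r ω) - α • y (t + 1) s i ω)
    (hxcarry : ∀ s, 1 ≤ s → ∀ i ω, x 0 (s + 1) i ω = x (q + 1) s i ω)
    (hycarry : ∀ s, 1 ≤ s → ∀ i ω, y 0 (s + 1) i ω = y (q + 1) s i ω)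
    (hvcarry : ∀ s, 1 ≤ s → ∀ i ω, v (-1) (s + 1) i ω = v (q : ℤ) s i ω)
    :
    ∀ s : ℕ, 1 ≤ s → ∀ t : ℕ, 1 ≤ t → t ≤ q →
      ∫ ω, ‖(n : ℝ)⁻¹ • ∑ i, v (t : ℤ) s i ω
          - (n : ℝ)⁻¹ • ∑ i, gradient (fI i) (x t s i ω)‖ ^ 2 ∂μ
        ≤ (3 * α ^ 2 * L ^ 2 / ((n : ℝ) * B)) *
            ∑ u ∈ range t, ∫ ω, ‖(n : ℝ)⁻¹ • ∑ i, v (u : ℤ) s i ω‖ ^ 2 ∂μ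
          + (6 * L ^ 2 / ((n : ℝ) ^ 2 * B)) * ∑ u ∈ range (t + 1),
              ∫ ω, ∑ i, ‖x u s i ω - (n : ℝ)⁻¹ • ∑ i', x u s i' ω‖ ^ 2 ∂μ := by
  intro s hs t ht1 htq
  classical
  have hm0 : 0 < m := hm
  set T : Ω → (GTS.Idx q s n B → Fin m) :=
    fun ω c => τ (c.1.1 + 1) (c.2.1.1 + 1) c.2.2.1 c.2.2.2 ω with hT
  have hTmeas : Measurable T := measurable_pi_lambda _ fun c => hτmeas _ _ _ _
  set ST := GTS.stAt W α f fI x0 q (GTS.TQ (B := B) hm0 q s) with hSTdef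
  -- the matching between the abstract recursion and the process
  have hmatch : ∀ s', 1 ≤ s' → s' ≤ s → ∀ t', t' ≤ q + 1 → ∀ (i : Fin n) ω,
      (x t' s' i ω = (ST s' t').x i (T ω) ∧ y t' s' i ω = (ST s' t').y i (T ω))
      ∧ v ((t' : ℤ) - 1) s' i ω = (ST s' t').vp i (T ω)
      ∧ (t' ≤ q → v (t' : ℤ) s' i ω = (ST s' t').v i (T ω)) := by
    intro s'
    induction s' with
    | zero => omega
    | succ k ihk =>
      intro hk1 hks
      have hbase : ∀ (i : Fin n) ω,
          (x 0 (k + 1) i ω = (ST (k + 1) 0).x i (T ω)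
            ∧ y 0 (k + 1) i ω = (ST (k + 1) 0).y i (T ω))
          ∧ v (((0 : ℕ) : ℤ) - 1) (k + 1) i ω = (ST (k + 1) 0).vp i (T ω)
          ∧ ((0 : ℕ) ≤ q → v ((0 : ℕ) : ℤ) (k + 1) i ω = (ST (k + 1) 0).v i (T ω)) := by
        rcases Nat.eq_zero_or_pos k with rfl | hkpos
        · intro i ω
          refine ⟨⟨hx0 i ω, hy0 i ω⟩, ?_, ?_⟩
          · have h0 : ((0 : ℕ) : ℤ) - 1 = -1 := by norm_num
            rw [h0]
            exact hvm1 i ω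
          · intro _
            have h0 : ((0 : ℕ) : ℤ) = (0 : ℤ) := by norm_num
            rw [h0, hv0 1 le_rfl i ω, hx0 i ω]
            rfl
        · intro i ω
          have hcar : ST (k + 1) 0 = GTS.carry fI (ST k (q + 1)) :=
            GTS.stAt_carry W α f fI x0 _ k hkpos
          have ihq1 := ihk hkpos (by omega) (q + 1) le_rfl i ω
          refine ⟨⟨?_, ?_⟩, ?_, ?_⟩
          · rw [hxcarry k hkpos i ω, ihq1.1.1, hcar]
            rfl
          · rw [hycarry k hkpos i ω, ihq1.1.2, hcar]
            rfl
          · have h0 : ((0 : ℕ) : ℤ) - 1 = -1 := by norm_num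
            rw [h0, hvcarry k hkpos i ω]
            have e := ihq1.2.1
            have hq1 : ((q + 1 : ℕ) : ℤ) - 1 = (q : ℤ) := by push_cast; ring
            rw [hq1] at e
            rw [e, hcar]
            rfl
          · intro _
            have h0 : ((0 : ℕ) : ℤ) = (0 : ℤ) := by norm_num
            have hx00 : x 0 (k + 1) i ω = (ST (k + 1) 0).x i (T ω) := by
              rw [hxcarry k hkpos i ω, ihq1.1.1, hcar]; rfl
            rw [h0, hv0 (k + 1) (by omega) i ω, hx00, hcar]
            rfl
      intro t'
      induction t' with
      | zero => intro _; exact hbase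
      | succ tt iht =>
        intro htt1 i ω
        have httq : tt ≤ q := by omega
        have ih := iht (by omega)
        have hstq : ST (k + 1) (tt + 1)
            = GTS.step W α f (GTS.TQ (B := B) hm0 q s (k + 1) (tt + 1)) (ST (k + 1) tt) :=
          GTS.stAt_succ W α f fI x0 q _ (k + 1) tt
        have hTQω : ∀ (i' : Fin n) (l : Fin B), tt + 1 ≤ q →
            GTS.TQ (B := B) hm0 q s (k + 1) (tt + 1) i' l (T ω) = τ (tt + 1) (k + 1) i' l ω := by
          intro i' l hq'
          show GTS.tl hm0 q s (tt + 1) (k + 1) i' l (T ω) = _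
          rw [GTS.tl, dif_pos (show 1 ≤ tt + 1 ∧ tt + 1 ≤ q ∧ 1 ≤ k + 1 ∧ k + 1 ≤ s from
            ⟨by omega, hq', by omega, hks⟩)]
          rfl
        have hyc : y (tt + 1) (k + 1) i ω = (ST (k + 1) (tt + 1)).y i (T ω) := by
          rw [hyrec (k + 1) (by omega) tt httq i ω, hstq]
          show (∑ r, W i r • y tt (k + 1) r ω) + v (tt : ℤ) (k + 1) i ω
              - v ((tt : ℤ) - 1) (k + 1) i ω
            = (∑ r, W i r • (ST (k + 1) tt).y r (T ω)) + (ST (k + 1) tt).v i (T ω)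
              - (ST (k + 1) tt).vp i (T ω)
          rw [(ih i ω).2.2 httq, (ih i ω).2.1,
            Finset.sum_congr rfl fun r _ => by rw [(ih r ω).1.2]]
        have hxc : x (tt + 1) (k + 1) i ω = (ST (k + 1) (tt + 1)).x i (T ω) := by
          rw [hxrec (k + 1) (by omega) tt httq i ω, hyc, hstq]
          show (∑ r, W i r • x tt (k + 1) r ω)
              - α • (GTS.step W α f (GTS.TQ (B := B) hm0 q s (k + 1) (tt + 1))
                  (ST (k + 1) tt)).y i (T ω)
            = _
          rw [Finset.sum_congr rfl fun r _ => by rw [(ih r ω).1.1]]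
          rfl
        have hvpc : v ((tt + 1 : ℕ) : ℤ) (k + 1) i ω
            = (ST (k + 1) (tt + 1)).vp i (T ω) → True := fun _ => trivial
        refine ⟨⟨hxc, hyc⟩, ?_, ?_⟩
        · have hcast : (((tt + 1 : ℕ) : ℤ)) - 1 = (tt : ℤ) := by push_cast; ring
          rw [hcast, hstq]
          exact (ih i ω).2.2 httq
        · intro htt1q
          rw [hvrec (k + 1) (by omega) (tt + 1) (by omega) htt1q i ω]
          have hcast : (((tt + 1 : ℕ) : ℤ)) - 1 = (tt : ℤ) := by push_cast; ring
          have hnat : tt + 1 - 1 = tt := by omega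
          rw [hcast, hnat, (ih i ω).2.2 httq, hstq]
          show (B : ℝ)⁻¹ • (∑ l, (gradient (f i (τ (tt + 1) (k + 1) i l ω))
                (x (tt + 1) (k + 1) i ω)
              - gradient (f i (τ (tt + 1) (k + 1) i l ω)) (x tt (k + 1) i ω)))
              + (ST (k + 1) tt).v i (T ω)
            = (GTS.step W α f (GTS.TQ (B := B) hm0 q s (k + 1) (tt + 1)) (ST (k + 1) tt)).v
                i (T ω)
          have hxrw : x (tt + 1) (k + 1) i ω
              = (GTS.step W α f (GTS.TQ (B := B) hm0 q s (k + 1) (tt + 1))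
                  (ST (k + 1) tt)).x i (T ω) := by rw [hxc, hstq]
          rw [Finset.sum_congr rfl fun (l : Fin B) _ => by
            rw [← hTQω i l htt1q, hxrw, (ih i ω).1.1]]
          rfl
  -- the product law of the sampled indices
  have hmap : ∀ θ : GTS.Idx q s n B → Fin m,
      μ (T ⁻¹' {θ}) = ((m : ENNReal))⁻¹ ^ (Fintype.card (GTS.Idx q s n B)) := by
    intro θ
    set e : GTS.Idx q s n B → ({u : ℕ × ℕ // 1 ≤ u.1 ∧ u.1 ≤ q ∧ 1 ≤ u.2} × Fin n × Fin B) :=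
      fun c => (⟨(c.1.1 + 1, c.2.1.1 + 1), ⟨by omega, by have := c.1.isLt; omega, by omega⟩⟩,
        c.2.2.1, c.2.2.2) with he_def
    have he : Function.Injective e := by
      intro c c' hcc
      have h1 : c.1.1 + 1 = c'.1.1 + 1 := congrArg (fun d => d.1.1.1) hcc
      have h2 : c.2.1.1 + 1 = c'.2.1.1 + 1 := congrArg (fun d => d.1.1.2) hcc
      have h3 : c.2.2.1 = c'.2.2.1 := congrArg (fun d => d.2.1) hcc
      have h4 : c.2.2.2 = c'.2.2.2 := congrArg (fun d => d.2.2) hcc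
      exact Prod.ext (Fin.ext (by omega)) (Prod.ext (Fin.ext (by omega)) (Prod.ext h3 h4))
    set sets : ({u : ℕ × ℕ // 1 ≤ u.1 ∧ u.1 ≤ q ∧ 1 ≤ u.2} × Fin n × Fin B) → Set (Fin m) :=
      Function.extend e (fun c => ({θ c} : Set (Fin m))) (fun _ => Set.univ) with hsets
    have hkey := hτindep.measure_inter_preimage_eq_mul (S := Finset.univ.image e)
      (sets := sets) (fun d _ => by
        rcases em (∃ c, e c = d) with ⟨c, rfl⟩ | hne
        · rw [hsets, he.extend_apply]; exact measurableSet_singleton _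
        · rw [hsets, Function.extend_apply' _ _ _ hne]; exact MeasurableSet.univ)
    have hset : T ⁻¹' {θ} = ⋂ d ∈ Finset.univ.image e,
        (fun ω => τ d.1.1.1 d.1.1.2 d.2.1 d.2.2 ω) ⁻¹' sets d := by
      ext ω
      simp only [Set.mem_preimage, Set.mem_singleton_iff, Set.mem_iInter, Finset.mem_image,
        Finset.mem_univ, true_and]
      constructor
      · rintro hTω d ⟨c, rfl⟩
        have : sets (e c) = {θ c} := by rw [hsets, he.extend_apply]
        simp only [Set.mem_preimage, this, Set.mem_singleton_iff]
        exact congrFun hTω c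
      · intro hall
        funext c
        have h := hall (e c) ⟨c, rfl⟩
        have hs' : sets (e c) = {θ c} := by rw [hsets, he.extend_apply]
        rw [hs'] at h
        simpa using h
    rw [hset, hkey, Finset.prod_image (fun c _ c' _ h => he h)]
    have hone : ∀ c : GTS.Idx q s n B,
        μ ((fun ω => τ (c.1.1 + 1) (c.2.1.1 + 1) c.2.2.1 c.2.2.2 ω) ⁻¹' sets (e c))
          = (m : ENNReal)⁻¹ := by
      intro c
      have hs' : sets (e c) = {θ c} := by rw [hsets, he.extend_apply]
      rw [hs']
      have := hτunif (c.1.1 + 1) (c.2.1.1 + 1) c.2.2.1 c.2.2.2 (by omega)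
        (by have := c.1.isLt; omega) (by omega) (θ c)
      rw [one_div] at this
      exact this
    rw [Finset.prod_congr rfl (fun c _ => hone c), Finset.prod_const, Finset.card_univ]
  -- integral reduction
  have hint : ∀ h : (GTS.Idx q s n B → Fin m) → ℝ,
      ∫ ω, h (T ω) ∂μ = ((m : ℝ)⁻¹) ^ (Fintype.card (GTS.Idx q s n B))
        * ∑ θ : GTS.Idx q s n B → Fin m, h θ := by
    intro h
    rw [GTS.integral_comp_finite μ (fun θ => GTS.msing θ) T hTmeas h, Finset.mul_sum]
    refine Finset.sum_congr rfl fun θ _ => ?_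
    rw [hmap θ]
    congr 1
    simp [ENNReal.toReal_pow, ENNReal.toReal_inv]
  -- core hypotheses
  have hgrad' : ∀ (i : Fin n) (z : EuclideanSpace ℝ (Fin p)),
      gradient (fI i) z = (m : ℝ)⁻¹ • ∑ j, gradient (f i j) z := by
    intro i z
    rw [hfI i]
    exact GTS.gradient_avg hm0 (f i) (hdiff i) z
  have hXD : ∀ u (i : Fin n), GTS.DOn ((ST s u).x i) (GTS.PLt q s n B s u) :=
    fun u i => ((GTS.stAt_DOn W α f fI x0 hm0 s hs u).1 i)
  have hVrec : ∀ u, 1 ≤ u → u ≤ q → ∀ (i : Fin n) θ,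
      (ST s u).v i θ = (B : ℝ)⁻¹ • (∑ l, (gradient (f i (GTS.TQ hm0 q s s u i l θ))
          ((ST s u).x i θ)
        - gradient (f i (GTS.TQ hm0 q s s u i l θ)) ((ST s (u - 1)).x i θ)))
        + (ST s (u - 1)).v i θ := by
    intro u h1 h2 i θ
    obtain ⟨w, rfl⟩ : ∃ w, u = w + 1 := ⟨u - 1, by omega⟩
    simp only [Nat.add_sub_cancel]
    rfl
  have hV0 : ∀ (i : Fin n) θ, (ST s 0).v i θ = gradient (fI i) ((ST s 0).x i θ) :=
    fun i θ => GTS.v0_einit W α f fI x0 (s - 1) i θ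
  have hXbar : ∀ u, 1 ≤ u → u ≤ q → ∀ θ,
      ∑ i, (ST s u).x i θ = (∑ i, (ST s (u - 1)).x i θ) - α • ∑ i, (ST s (u - 1)).v i θ := by
    intro u h1 h2 θ
    obtain ⟨w, rfl⟩ : ∃ w, u = w + 1 := ⟨u - 1, by omega⟩
    simp only [Nat.add_sub_cancel]
    have hI := GTS.track_all (q := q) W α f fI x0 hWcol (GTS.TQ (B := B) hm0 q s) s w θ
    exact GTS.xbar_step W α f hWcol (GTS.TQ (B := B) hm0 q s s (w + 1)) (ST s w) θ hI
  have core := GTS.core_ineq hn hm0 hB1 hs ht1 htq α L hα0 hL f hsmooth fI hgrad'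
    (fun u i => (ST s u).x i) (fun u i => (ST s u).v i) hXD hVrec hV0 hXbar
  -- rewrite the integrals
  have hmx : ∀ u, u ≤ q → ∀ (i : Fin n) ω, x u s i ω = (ST s u).x i (T ω) :=
    fun u hu i ω => ((hmatch s hs le_rfl u (by omega) i ω).1).1
  have hmv : ∀ u, u ≤ q → ∀ (i : Fin n) ω, v (u : ℤ) s i ω = (ST s u).v i (T ω) :=
    fun u hu i ω => (hmatch s hs le_rfl u (by omega) i ω).2.2 hu
  have hLHS : (∫ ω, ‖(n : ℝ)⁻¹ • ∑ i, v (t : ℤ) s i ω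
        - (n : ℝ)⁻¹ • ∑ i, gradient (fI i) (x t s i ω)‖ ^ 2 ∂μ)
      = ((m : ℝ)⁻¹) ^ (Fintype.card (GTS.Idx q s n B)) * ∑ θ : GTS.Idx q s n B → Fin m,
          ‖(n : ℝ)⁻¹ • ∑ i, (ST s t).v i θ
            - (n : ℝ)⁻¹ • ∑ i, gradient (fI i) ((ST s t).x i θ)‖ ^ 2 := by
    rw [show (fun ω => ‖(n : ℝ)⁻¹ • ∑ i, v (t : ℤ) s i ω
        - (n : ℝ)⁻¹ • ∑ i, gradient (fI i) (x t s i ω)‖ ^ 2)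
        = fun ω => (fun θ : GTS.Idx q s n B → Fin m => ‖(n : ℝ)⁻¹ • ∑ i, (ST s t).v i θ
            - (n : ℝ)⁻¹ • ∑ i, gradient (fI i) ((ST s t).x i θ)‖ ^ 2) (T ω) from
      funext fun ω => by
        have e1 : ∑ i, v (t : ℤ) s i ω = ∑ i, (ST s t).v i (T ω) :=
          Finset.sum_congr rfl fun i _ => hmv t htq i ω
        have e2 : ∑ i, gradient (fI i) (x t s i ω)
            = ∑ i, gradient (fI i) ((ST s t).x i (T ω)) :=
          Finset.sum_congr rfl fun i _ => by rw [hmx t htq i ω]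
        rw [e1, e2]]
    exact hint (fun θ : GTS.Idx q s n B → Fin m => ‖(n : ℝ)⁻¹ • ∑ i, (ST s t).v i θ
      - (n : ℝ)⁻¹ • ∑ i, gradient (fI i) ((ST s t).x i θ)‖ ^ 2)
  have hRHS1 : ∀ u ∈ range t, (∫ ω, ‖(n : ℝ)⁻¹ • ∑ i, v (u : ℤ) s i ω‖ ^ 2 ∂μ)
      = ((m : ℝ)⁻¹) ^ (Fintype.card (GTS.Idx q s n B)) * ∑ θ : GTS.Idx q s n B → Fin m,
          ‖(n : ℝ)⁻¹ • ∑ i, (ST s u).v i θ‖ ^ 2 := by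
    intro u hu
    have huq : u ≤ q := by have := Finset.mem_range.1 hu; omega
    rw [show (fun ω => ‖(n : ℝ)⁻¹ • ∑ i, v (u : ℤ) s i ω‖ ^ 2)
        = fun ω => (fun θ : GTS.Idx q s n B → Fin m =>
            ‖(n : ℝ)⁻¹ • ∑ i, (ST s u).v i θ‖ ^ 2) (T ω) from
      funext fun ω => by
        have e1 : ∑ i, v (u : ℤ) s i ω = ∑ i, (ST s u).v i (T ω) :=
          Finset.sum_congr rfl fun i _ => hmv u huq i ω
        rw [e1]]
    exact hint (fun θ : GTS.Idx q s n B → Fin m => ‖(n : ℝ)⁻¹ • ∑ i, (ST s u).v i θ‖ ^ 2)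
  have hRHS2 : ∀ u ∈ range (t + 1),
      (∫ ω, ∑ i, ‖x u s i ω - (n : ℝ)⁻¹ • ∑ i', x u s i' ω‖ ^ 2 ∂μ)
      = ((m : ℝ)⁻¹) ^ (Fintype.card (GTS.Idx q s n B)) * ∑ θ : GTS.Idx q s n B → Fin m,
          ∑ i, ‖(ST s u).x i θ - (n : ℝ)⁻¹ • ∑ i', (ST s u).x i' θ‖ ^ 2 := by
    intro u hu
    have huq : u ≤ q := by have := Finset.mem_range.1 hu; omega
    rw [show (fun ω => ∑ i, ‖x u s i ω - (n : ℝ)⁻¹ • ∑ i', x u s i' ω‖ ^ 2)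
        = fun ω => (fun θ : GTS.Idx q s n B → Fin m =>
            ∑ i, ‖(ST s u).x i θ - (n : ℝ)⁻¹ • ∑ i', (ST s u).x i' θ‖ ^ 2) (T ω) from
      funext fun ω => by
        have e2 : ∑ i', x u s i' ω = ∑ i', (ST s u).x i' (T ω) :=
          Finset.sum_congr rfl fun i' _ => hmx u huq i' ω
        refine Finset.sum_congr rfl fun i _ => ?_
        rw [hmx u huq i ω, e2]]
    exact hint (fun θ : GTS.Idx q s n B → Fin m =>
      ∑ i, ‖(ST s u).x i θ - (n : ℝ)⁻¹ • ∑ i', (ST s u).x i' θ‖ ^ 2)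
  rw [hLHS, Finset.sum_congr rfl hRHS1, Finset.sum_congr rfl hRHS2]
  have hcN : (0 : ℝ) ≤ ((m : ℝ)⁻¹) ^ (Fintype.card (GTS.Idx q s n B)) := by positivity
  calc ((m : ℝ)⁻¹) ^ (Fintype.card (GTS.Idx q s n B)) * ∑ θ : GTS.Idx q s n B → Fin m,
        ‖(n : ℝ)⁻¹ • ∑ i, (ST s t).v i θ
          - (n : ℝ)⁻¹ • ∑ i, gradient (fI i) ((ST s t).x i θ)‖ ^ 2
      ≤ ((m : ℝ)⁻¹) ^ (Fintype.card (GTS.Idx q s n B)) *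
          ((3 * α ^ 2 * L ^ 2 / ((n : ℝ) * B)) * ∑ u ∈ range t,
              ∑ θ : GTS.Idx q s n B → Fin m, ‖(n : ℝ)⁻¹ • ∑ i, (ST s u).v i θ‖ ^ 2
            + (6 * L ^ 2 / ((n : ℝ) ^ 2 * B)) * ∑ u ∈ range (t + 1),
              ∑ θ : GTS.Idx q s n B → Fin m,
                ∑ i, ‖(ST s u).x i θ - (n : ℝ)⁻¹ • ∑ i', (ST s u).x i' θ‖ ^ 2) :=
        mul_le_mul_of_nonneg_left core hcN
    _ = _ := by
        rw [← Finset.mul_sum, ← Finset.mul_sum]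
        ring
end

section
/- Under the GT-SARAH setup, for all s ≥ 1 and t ∈ {1,…,q}: E[‖v^{t,s} − ∇f(x^{t,s})‖²] ≤ (3nα²L²/B) Σ_{u=0}^{t−1} E[‖v̄^{u,s}‖²] + (6L²/B) Σ_{u=0}^{t} E[‖x^{u,s} − J x^{u,s}‖²]. -/
set_option linter.unusedSectionVars false

open MeasureTheory Filter Finset ProbabilityTheory

section AuxComb

variable {ι β : Type*} [DecidableEq ι] [Fintype ι] [Fintype β]
variable {E : Type*} [NormedAddCommGroup E] [InnerProductSpace ℝ E]

local notation "⟪" x ", " y "⟫" => @inner ℝ _ _ x y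

private lemma funSplit_update (k₀ : ι) (a a' : β) (r : {j // j ≠ k₀} → β) :
    Function.update ((Equiv.funSplitAt k₀ β).symm (a', r)) k₀ a
      = (Equiv.funSplitAt k₀ β).symm (a, r) := by
  funext j
  rcases eq_or_ne j k₀ with h | h
  · subst h; simp [Equiv.funSplitAt, Equiv.piSplitAt, Function.update]
  · simp [Equiv.funSplitAt, Equiv.piSplitAt, Function.update, h]

private lemma sum_funSplit {M : Type*} [AddCommMonoid M] (k₀ : ι) (F : (ι → β) → M) :
    ∑ g : ι → β, F g
      = ∑ r : {j // j ≠ k₀} → β, ∑ a : β, F ((Equiv.funSplitAt k₀ β).symm (a, r)) := by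
  rw [← Equiv.sum_comp (Equiv.funSplitAt k₀ β).symm F, Fintype.sum_prod_type]
  exact Finset.sum_comm

private lemma sum_inner_zero [Nonempty β] (k₀ : ι) (P Q : (ι → β) → E)
    (hP : ∀ g₁ g₂ : ι → β, (∀ j, j ≠ k₀ → g₁ j = g₂ j) → P g₁ = P g₂)
    (hQ : ∀ g : ι → β, ∑ a : β, Q (Function.update g k₀ a) = 0) :
    ∑ g : ι → β, ⟪P g, Q g⟫ = 0 := by
  rw [sum_funSplit k₀]
  refine Finset.sum_eq_zero fun r _ => ?_
  have a₀ : β := Classical.arbitrary β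
  set g₀ : ι → β := (Equiv.funSplitAt k₀ β).symm (a₀, r) with hg₀
  have hupd : ∀ a, (Equiv.funSplitAt k₀ β).symm (a, r) = Function.update g₀ k₀ a :=
    fun a => (funSplit_update k₀ a a₀ r).symm
  have hPa : ∀ a, P ((Equiv.funSplitAt k₀ β).symm (a, r)) = P g₀ := by
    intro a
    apply hP
    intro j hj
    rw [hupd a, Function.update_of_ne hj]
  calc ∑ a : β, ⟪P ((Equiv.funSplitAt k₀ β).symm (a, r)),
          Q ((Equiv.funSplitAt k₀ β).symm (a, r))⟫
      = ⟪P g₀, ∑ a : β, Q (Function.update g₀ k₀ a)⟫ := by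
        rw [inner_sum]
        refine Finset.sum_congr rfl fun a _ => ?_
        rw [hPa a, hupd a]
    _ = 0 := by rw [hQ g₀, inner_zero_right]

private lemma sum_cond_le [Nonempty β] (k₀ : ι) (A C : (ι → β) → ℝ)
    (h : ∀ g : ι → β,
      ∑ a : β, A (Function.update g k₀ a) ≤ ∑ a : β, C (Function.update g k₀ a)) :
    ∑ g : ι → β, A g ≤ ∑ g : ι → β, C g := by
  rw [sum_funSplit k₀ A, sum_funSplit k₀ C]
  refine Finset.sum_le_sum fun r _ => ?_
  have a₀ : β := Classical.arbitrary β
  set g₀ : ι → β := (Equiv.funSplitAt k₀ β).symm (a₀, r) with hg₀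
  have hupd : ∀ a, (Equiv.funSplitAt k₀ β).symm (a, r) = Function.update g₀ k₀ a :=
    fun a => (funSplit_update k₀ a a₀ r).symm
  simpa only [hupd] using h g₀

private lemma sum_norm_sub_mean_le (w : β → E) (c : E)
    (hc : ∑ a : β, w a = (Fintype.card β : ℝ) • c) :
    ∑ a : β, ‖w a - c‖ ^ 2 ≤ ∑ a : β, ‖w a‖ ^ 2 := by
  have h1 : ∑ a : β, ‖w a - c‖ ^ 2
      = ∑ a : β, ‖w a‖ ^ 2 - 2 * ⟪∑ a : β, w a, c⟫ + (Fintype.card β : ℝ) * ‖c‖ ^ 2 := by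
    rw [sum_inner]
    simp only [norm_sub_sq_real]
    rw [Finset.sum_add_distrib, Finset.sum_sub_distrib, ← Finset.mul_sum, Finset.sum_const,
      Finset.card_univ, nsmul_eq_mul]
  have h2 : ⟪∑ a : β, w a, c⟫ = (Fintype.card β : ℝ) * ‖c‖ ^ 2 := by
    rw [hc, real_inner_smul_left, real_inner_self_eq_norm_sq]
  rw [h1, h2]
  have : (0:ℝ) ≤ (Fintype.card β : ℝ) * ‖c‖ ^ 2 := by positivity
  linarith

private lemma norm_add3_sq_le (a b c : E) :
    ‖a + b + c‖ ^ 2 ≤ 3 * ‖a‖ ^ 2 + 3 * ‖b‖ ^ 2 + 3 * ‖c‖ ^ 2 := by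
  have h := norm_add₃_le (a := a) (b := b) (c := c)
  have h2 : ‖a + b + c‖ ^ 2 ≤ (‖a‖ + ‖b‖ + ‖c‖) ^ 2 := by
    have := norm_nonneg (a + b + c)
    nlinarith
  nlinarith [sq_nonneg (‖a‖ - ‖b‖), sq_nonneg (‖a‖ - ‖c‖), sq_nonneg (‖b‖ - ‖c‖)]

end AuxComb

private lemma gradient_const_mul_sum {F : Type*} [NormedAddCommGroup F]
    [InnerProductSpace ℝ F] [CompleteSpace F]
    {κ : Type*} [Fintype κ] (c : ℝ) (h : κ → F → ℝ)
    (hh : ∀ j, Differentiable ℝ (h j)) (x : F) :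
    gradient (fun z => c * ∑ j, h j z) x = c • ∑ j, gradient (h j) x := by
  have hsum : DifferentiableAt ℝ (fun z => ∑ j, h j z) x :=
    DifferentiableAt.fun_sum fun j _ => (hh j).differentiableAt
  have hfd : fderiv ℝ (fun z => c * ∑ j, h j z) x
      = c • ∑ j, fderiv ℝ (h j) x := by
    rw [fderiv_const_mul hsum c, fderiv_fun_sum fun j _ => (hh j).differentiableAt]
  rw [gradient, hfd]
  simp only [gradient]
  rw [LinearIsometryEquiv.map_smul, map_sum]
private def maskP {q s n B : ℕ} (b : ℕ) (k : Fin q × Fin s × Fin n × Fin B) : Prop :=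
  (k.2.1 : ℕ) + 1 < s ∨ (k.1 : ℕ) + 1 ≤ b

private lemma maskP_mono {q s n B : ℕ} {b b' : ℕ} (h : b ≤ b')
    {k : Fin q × Fin s × Fin n × Fin B} (hk : maskP b k) : maskP b' k := by
  rcases hk with hk | hk
  · exact Or.inl hk
  · exact Or.inr (hk.trans h)

set_option maxHeartbeats 1000000 in
private lemma ulevel
    {E : Type*} [NormedAddCommGroup E] [InnerProductSpace ℝ E]
    {q s n B m : ℕ} (hm : 1 ≤ m) (hB1 : 1 ≤ B) (hs1 : 1 ≤ s) (hn : 1 ≤ n)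
    (α L : ℝ)
    (gradf : Fin n → Fin m → E → E) (gradfI : Fin n → E → E)
    (hmean : ∀ i z, ∑ j : Fin m, gradf i j z = (m : ℝ) • gradfI i z)
    (hsm : ∀ i z w, ∑ j : Fin m, ‖gradf i j z - gradf i j w‖ ^ 2
        ≤ (m : ℝ) * (L ^ 2 * ‖z - w‖ ^ 2))
    (Xf Vf : ℕ → Fin n → ((Fin q × Fin s × Fin n × Fin B) → Fin m) → E)
    (ku : ℕ → Fin n → Fin B → Fin q × Fin s × Fin n × Fin B)
    (hkt : ∀ u i l, 1 ≤ u → u ≤ q → ((ku u i l).1 : ℕ) + 1 = u)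
    (hke : ∀ u i l, 1 ≤ u → u ≤ q → ((ku u i l).2.1 : ℕ) + 1 = s)
    (hkl : ∀ u i l, 1 ≤ u → u ≤ q → (ku u i l).2.2.2 = l)
    (hdepX : ∀ u, u ≤ q → ∀ i g₁ g₂,
      (∀ k, maskP (u - 1) k → g₁ k = g₂ k) → Xf u i g₁ = Xf u i g₂)
    (hdepV : ∀ u, u ≤ q → ∀ i g₁ g₂,
      (∀ k, maskP u k → g₁ k = g₂ k) → Vf u i g₁ = Vf u i g₂)
    (hV0 : ∀ i g, Vf 0 i g = gradfI i (Xf 0 i g))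
    (hVrec : ∀ u, 1 ≤ u → u ≤ q → ∀ i g,
      Vf u i g = (B : ℝ)⁻¹ • (∑ l : Fin B,
          (gradf i (g (ku u i l)) (Xf u i g) - gradf i (g (ku u i l)) (Xf (u - 1) i g)))
        + Vf (u - 1) i g)
    (hxbar : ∀ u, 1 ≤ u → u ≤ q → ∀ g,
      (n : ℝ)⁻¹ • ∑ i, Xf u i g
        = (n : ℝ)⁻¹ • ∑ i, Xf (u - 1) i g - α • ((n : ℝ)⁻¹ • ∑ i, Vf (u - 1) i g))
    (t : ℕ) (ht1 : 1 ≤ t) (htq : t ≤ q) :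
    ∑ g : (Fin q × Fin s × Fin n × Fin B) → Fin m,
        ∑ i, ‖Vf t i g - gradfI i (Xf t i g)‖ ^ 2
      ≤ 3 * n * α ^ 2 * L ^ 2 / B *
          ∑ u ∈ Finset.range t, ∑ g : (Fin q × Fin s × Fin n × Fin B) → Fin m,
            ‖(n : ℝ)⁻¹ • ∑ i, Vf u i g‖ ^ 2
        + 6 * L ^ 2 / B * ∑ u ∈ Finset.range (t + 1),
            ∑ g : (Fin q × Fin s × Fin n × Fin B) → Fin m,
              ∑ i, ‖Xf u i g - (n : ℝ)⁻¹ • ∑ i', Xf u i' g‖ ^ 2 := by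
  classical
  have hmβ : Nonempty (Fin m) := ⟨⟨0, hm⟩⟩
  have hBR : (0:ℝ) < B := by exact_mod_cast hB1
  -- martingale differences
  set D : ℕ → Fin n → ((Fin q × Fin s × Fin n × Fin B) → Fin m) → E :=
    fun u i g => Vf u i g - Vf (u - 1) i g
      - (gradfI i (Xf u i g) - gradfI i (Xf (u - 1) i g)) with hD
  set Z : ℕ → Fin n → Fin B → ((Fin q × Fin s × Fin n × Fin B) → Fin m) → E :=
    fun u i l g => gradf i (g (ku u i l)) (Xf u i g)
      - gradf i (g (ku u i l)) (Xf (u - 1) i g)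
      - (gradfI i (Xf u i g) - gradfI i (Xf (u - 1) i g)) with hZ
  have hDZ : ∀ u, 1 ≤ u → u ≤ q → ∀ i g, D u i g = (B : ℝ)⁻¹ • ∑ l, Z u i l g := by
    intro u h1 h2 i g
    simp only [hD, hZ]
    rw [Finset.sum_sub_distrib, Finset.sum_const, Finset.card_univ, Fintype.card_fin,
      ← Nat.cast_smul_eq_nsmul ℝ, smul_sub ((B : ℝ))⁻¹, smul_smul,
      inv_mul_cancel₀ (ne_of_gt hBR), one_smul, hVrec u h1 h2 i g]
    abel
  -- coordinate update facts
  have hupdX : ∀ u, u ≤ q → ∀ i (g : (Fin q × Fin s × Fin n × Fin B) → Fin m) k₀ a,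
      ¬ maskP (u - 1) k₀ → Xf u i (Function.update g k₀ a) = Xf u i g := by
    intro u hu i g k₀ a hk₀
    apply hdepX u hu i
    intro k hk
    have : k ≠ k₀ := by rintro rfl; exact hk₀ hk
    exact Function.update_of_ne this a g
  have hkumask : ∀ u i l b, 1 ≤ u → u ≤ q → b < u → ¬ maskP b (ku u i l) := by
    intro u i l b h1 h2 h3 hmask
    rcases hmask with h | h
    · rw [hke u i l h1 h2] at h; omega
    · rw [hkt u i l h1 h2] at h; omega
  have hZupd : ∀ u, 1 ≤ u → u ≤ q → ∀ i l
      (g : (Fin q × Fin s × Fin n × Fin B) → Fin m) (a : Fin m),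
      Z u i l (Function.update g (ku u i l) a)
        = gradf i a (Xf u i g) - gradf i a (Xf (u - 1) i g)
          - (gradfI i (Xf u i g) - gradfI i (Xf (u - 1) i g)) := by
    intro u h1 h2 i l g a
    have hx1 : Xf u i (Function.update g (ku u i l) a) = Xf u i g :=
      hupdX u h2 i g _ a (hkumask u i l (u - 1) h1 h2 (by omega))
    have hx2 : Xf (u - 1) i (Function.update g (ku u i l) a) = Xf (u - 1) i g :=
      hupdX (u - 1) (by omega) i g _ a (hkumask u i l (u - 1 - 1) h1 h2 (by omega))
    simp only [hZ, Function.update_self, hx1, hx2]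
  have hZsum : ∀ u, 1 ≤ u → u ≤ q → ∀ i l
      (g : (Fin q × Fin s × Fin n × Fin B) → Fin m),
      ∑ a : Fin m, Z u i l (Function.update g (ku u i l) a) = 0 := by
    intro u h1 h2 i l g
    simp only [hZupd u h1 h2 i l g]
    rw [Finset.sum_sub_distrib, Finset.sum_sub_distrib, hmean, hmean, Finset.sum_const,
      Finset.card_univ, Fintype.card_fin, ← Nat.cast_smul_eq_nsmul ℝ, smul_sub]
    abel
  -- D u' does not depend on coordinates of time u' + 1 and later
  have hDoff : ∀ u', 1 ≤ u' → u' ≤ q → ∀ i k₀, ¬ maskP u' k₀ →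
      ∀ g₁ g₂ : (Fin q × Fin s × Fin n × Fin B) → Fin m,
      (∀ j, j ≠ k₀ → g₁ j = g₂ j) → D u' i g₁ = D u' i g₂ := by
    intro u' h1 h2 i k₀ hk₀ g₁ g₂ hoff
    have hag : ∀ k, maskP u' k → g₁ k = g₂ k := by
      intro k hk
      refine hoff k ?_
      rintro rfl; exact hk₀ hk
    have hag1 : ∀ k, maskP (u' - 1) k → g₁ k = g₂ k :=
      fun k hk => hag k (maskP_mono (by omega) hk)
    have hag2 : ∀ k, maskP (u' - 1 - 1) k → g₁ k = g₂ k :=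
      fun k hk => hag k (maskP_mono (by omega) hk)
    simp only [hD]
    rw [hdepV u' h2 i g₁ g₂ hag, hdepV (u' - 1) (by omega) i g₁ g₂ hag1,
      hdepX u' h2 i g₁ g₂ hag1, hdepX (u' - 1) (by omega) i g₁ g₂ hag2]
  have hZoff : ∀ u, 1 ≤ u → u ≤ q → ∀ i l k₀, ¬ maskP (u - 1) k₀ → ku u i l ≠ k₀ →
      ∀ g₁ g₂ : (Fin q × Fin s × Fin n × Fin B) → Fin m,
      (∀ j, j ≠ k₀ → g₁ j = g₂ j) → Z u i l g₁ = Z u i l g₂ := by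
    intro u h1 h2 i l k₀ hk₀ hne g₁ g₂ hoff
    have hag1 : ∀ k, maskP (u - 1) k → g₁ k = g₂ k := by
      intro k hk
      refine hoff k ?_
      rintro rfl; exact hk₀ hk
    have hag2 : ∀ k, maskP (u - 1 - 1) k → g₁ k = g₂ k :=
      fun k hk => hag1 k (maskP_mono (by omega) hk)
    simp only [hZ]
    rw [hoff _ hne, hdepX u h2 i g₁ g₂ hag1, hdepX (u - 1) (by omega) i g₁ g₂ hag2]
  -- vanishing cross terms between different times
  have key_cross : ∀ i u u', 1 ≤ u' → u' < u → u ≤ q →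
      (∑ g : (Fin q × Fin s × Fin n × Fin B) → Fin m,
        (inner ℝ (D u' i g) (D u i g) : ℝ)) = 0 := by
    intro i u u' h1 h2 h3
    have h1u : 1 ≤ u := by omega
    have hexp : ∀ g : (Fin q × Fin s × Fin n × Fin B) → Fin m,
        (inner ℝ (D u' i g) (D u i g) : ℝ)
          = ∑ l : Fin B, (inner ℝ (D u' i g) ((B : ℝ)⁻¹ • Z u i l g) : ℝ) := by
      intro g
      rw [hDZ u h1u h3 i g, Finset.smul_sum, inner_sum]
    rw [Finset.sum_congr rfl fun g _ => hexp g, Finset.sum_comm]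
    refine Finset.sum_eq_zero fun l _ => ?_
    refine sum_inner_zero (ku u i l) (D u' i) (fun g => (B : ℝ)⁻¹ • Z u i l g) ?_ ?_
    · exact hDoff u' h1 (by omega) i (ku u i l)
        (hkumask u i l u' h1u h3 h2)
    · intro g
      rw [← Finset.smul_sum, hZsum u h1u h3 i l g, smul_zero]
  -- per-step variance bound
  have key_diag : ∀ i u, 1 ≤ u → u ≤ q →
      (∑ g : (Fin q × Fin s × Fin n × Fin B) → Fin m, ‖D u i g‖ ^ 2)
        ≤ L ^ 2 / B * ∑ g : (Fin q × Fin s × Fin n × Fin B) → Fin m,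
            ‖Xf u i g - Xf (u - 1) i g‖ ^ 2 := by
    intro i u h1 h2
    have hexp : ∀ g : (Fin q × Fin s × Fin n × Fin B) → Fin m,
        ‖D u i g‖ ^ 2 = (B : ℝ)⁻¹ ^ 2 * ∑ l : Fin B, ∑ l' : Fin B,
          (inner ℝ (Z u i l g) (Z u i l' g) : ℝ) := by
      intro g
      rw [hDZ u h1 h2 i g, norm_smul, mul_pow, Real.norm_eq_abs, sq_abs,
        ← real_inner_self_eq_norm_sq, sum_inner]
      congr 1
      exact Finset.sum_congr rfl fun l _ => inner_sum _ _ _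
    rw [Finset.sum_congr rfl fun g _ => hexp g, ← Finset.mul_sum]
    have hswap : ∑ g : (Fin q × Fin s × Fin n × Fin B) → Fin m,
        ∑ l : Fin B, ∑ l' : Fin B, (inner ℝ (Z u i l g) (Z u i l' g) : ℝ)
        = ∑ l : Fin B, ∑ l' : Fin B,
            ∑ g : (Fin q × Fin s × Fin n × Fin B) → Fin m,
              (inner ℝ (Z u i l g) (Z u i l' g) : ℝ) := by
      rw [Finset.sum_comm]
      exact Finset.sum_congr rfl fun l _ => Finset.sum_comm
    rw [hswap]
    have hdiagsum : ∀ l : Fin B, ∑ l' : Fin B,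
        (∑ g : (Fin q × Fin s × Fin n × Fin B) → Fin m,
          (inner ℝ (Z u i l g) (Z u i l' g) : ℝ))
        = ∑ g : (Fin q × Fin s × Fin n × Fin B) → Fin m, ‖Z u i l g‖ ^ 2 := by
      intro l
      rw [Finset.sum_eq_single_of_mem l (Finset.mem_univ l)]
      · exact Finset.sum_congr rfl fun g _ => real_inner_self_eq_norm_sq _
      · intro l' _ hne
        refine sum_inner_zero (ku u i l') (Z u i l) (Z u i l') ?_ ?_
        · refine hZoff u h1 h2 i l (ku u i l')
            (hkumask u i l' (u - 1) h1 h2 (by omega)) ?_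
          intro hcontra
          apply hne
          have := hkl u i l h1 h2
          rw [← hkl u i l' h1 h2, ← hcontra, this]
        · exact hZsum u h1 h2 i l'
    rw [Finset.sum_congr rfl fun l _ => hdiagsum l]
    have hvar : ∀ l : Fin B,
        (∑ g : (Fin q × Fin s × Fin n × Fin B) → Fin m, ‖Z u i l g‖ ^ 2)
          ≤ ∑ g : (Fin q × Fin s × Fin n × Fin B) → Fin m,
              L ^ 2 * ‖Xf u i g - Xf (u - 1) i g‖ ^ 2 := by
      intro l
      refine sum_cond_le (ku u i l) _ _ ?_
      intro g
      have hXu : ∀ a : Fin m, Xf u i (Function.update g (ku u i l) a) = Xf u i g :=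
        fun a => hupdX u h2 i g _ a (hkumask u i l (u - 1) h1 h2 (by omega))
      have hXu1 : ∀ a : Fin m, Xf (u - 1) i (Function.update g (ku u i l) a)
          = Xf (u - 1) i g :=
        fun a => hupdX (u - 1) (by omega) i g _ a
          (hkumask u i l (u - 1 - 1) h1 h2 (by omega))
      have hA : ∑ a : Fin m, ‖Z u i l (Function.update g (ku u i l) a)‖ ^ 2
          ≤ (m : ℝ) * (L ^ 2 * ‖Xf u i g - Xf (u - 1) i g‖ ^ 2) := by
        calc ∑ a : Fin m, ‖Z u i l (Function.update g (ku u i l) a)‖ ^ 2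
            = ∑ a : Fin m, ‖(gradf i a (Xf u i g) - gradf i a (Xf (u - 1) i g))
                - (gradfI i (Xf u i g) - gradfI i (Xf (u - 1) i g))‖ ^ 2 := by
              refine Finset.sum_congr rfl fun a _ => ?_
              rw [hZupd u h1 h2 i l g a]
          _ ≤ ∑ a : Fin m, ‖gradf i a (Xf u i g) - gradf i a (Xf (u - 1) i g)‖ ^ 2 := by
              refine sum_norm_sub_mean_le _ _ ?_
              rw [Finset.sum_sub_distrib, hmean, hmean, Fintype.card_fin, ← smul_sub]
          _ ≤ (m : ℝ) * (L ^ 2 * ‖Xf u i g - Xf (u - 1) i g‖ ^ 2) := hsm i _ _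
      have hC : ∑ a : Fin m, L ^ 2 * ‖Xf u i (Function.update g (ku u i l) a)
          - Xf (u - 1) i (Function.update g (ku u i l) a)‖ ^ 2
          = (m : ℝ) * (L ^ 2 * ‖Xf u i g - Xf (u - 1) i g‖ ^ 2) := by
        rw [Finset.sum_congr rfl fun a _ => by rw [hXu a, hXu1 a]]
        rw [Finset.sum_const, Finset.card_univ, Fintype.card_fin, nsmul_eq_mul]
      rw [hC]
      exact hA
    calc (B : ℝ)⁻¹ ^ 2 * ∑ l : Fin B,
        ∑ g : (Fin q × Fin s × Fin n × Fin B) → Fin m, ‖Z u i l g‖ ^ 2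
        ≤ (B : ℝ)⁻¹ ^ 2 * ∑ l : Fin B,
            ∑ g : (Fin q × Fin s × Fin n × Fin B) → Fin m,
              L ^ 2 * ‖Xf u i g - Xf (u - 1) i g‖ ^ 2 := by
          refine mul_le_mul_of_nonneg_left ?_ (by positivity)
          exact Finset.sum_le_sum fun l _ => hvar l
      _ = L ^ 2 / B * ∑ g : (Fin q × Fin s × Fin n × Fin B) → Fin m,
            ‖Xf u i g - Xf (u - 1) i g‖ ^ 2 := by
          rw [Finset.sum_const, Finset.card_univ, Fintype.card_fin, ← Finset.mul_sum]
          rw [nsmul_eq_mul]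
          field_simp
  -- telescoping
  have tel : ∀ u, u ≤ q → ∀ i (g : (Fin q × Fin s × Fin n × Fin B) → Fin m),
      Vf u i g - gradfI i (Xf u i g) = ∑ u' ∈ Finset.Icc 1 u, D u' i g := by
    intro u
    induction u with
    | zero => intro _ i g; simp [hV0]
    | succ u ih =>
      intro hu i g
      rw [Finset.sum_Icc_succ_top (by omega : 1 ≤ u + 1), ← ih (by omega) i g]
      simp only [hD, Nat.add_sub_cancel]
      abel
  have peri : ∀ i, (∑ g : (Fin q × Fin s × Fin n × Fin B) → Fin m,
      ‖Vf t i g - gradfI i (Xf t i g)‖ ^ 2)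
      = ∑ u ∈ Finset.Icc 1 t, ∑ g : (Fin q × Fin s × Fin n × Fin B) → Fin m,
          ‖D u i g‖ ^ 2 := by
    intro i
    have h1 : ∀ g : (Fin q × Fin s × Fin n × Fin B) → Fin m,
        ‖Vf t i g - gradfI i (Xf t i g)‖ ^ 2
        = ∑ u ∈ Finset.Icc 1 t, ∑ u' ∈ Finset.Icc 1 t,
            (inner ℝ (D u i g) (D u' i g) : ℝ) := by
      intro g
      rw [tel t htq i g, ← real_inner_self_eq_norm_sq, sum_inner]
      exact Finset.sum_congr rfl fun u _ => inner_sum _ _ _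
    rw [Finset.sum_congr rfl fun g _ => h1 g, Finset.sum_comm]
    refine Finset.sum_congr rfl fun u hu => ?_
    rw [Finset.sum_comm, Finset.sum_eq_single_of_mem u hu]
    · exact Finset.sum_congr rfl fun g _ => real_inner_self_eq_norm_sq _
    · intro u' hu' hne
      rw [Finset.mem_Icc] at hu hu'
      rcases lt_or_gt_of_ne hne with h | h
      · -- u' < u
        have hcomm : (∑ g : (Fin q × Fin s × Fin n × Fin B) → Fin m,
            (inner ℝ (D u i g) (D u' i g) : ℝ))
            = ∑ g : (Fin q × Fin s × Fin n × Fin B) → Fin m,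
                (inner ℝ (D u' i g) (D u i g) : ℝ) :=
          Finset.sum_congr rfl fun g _ => real_inner_comm _ _
        rw [hcomm]
        exact key_cross i u u' (by omega) h (by omega)
      · exact key_cross i u' u (by omega) h (by omega)
  have main1 : (∑ g : (Fin q × Fin s × Fin n × Fin B) → Fin m,
      ∑ i, ‖Vf t i g - gradfI i (Xf t i g)‖ ^ 2)
      = ∑ u ∈ Finset.Icc 1 t, ∑ g : (Fin q × Fin s × Fin n × Fin B) → Fin m,
          ∑ i, ‖D u i g‖ ^ 2 := by
    rw [Finset.sum_comm, Finset.sum_congr rfl fun i _ => peri i, Finset.sum_comm]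
    exact Finset.sum_congr rfl fun u _ => Finset.sum_comm
  have step2 : ∀ u, 1 ≤ u → u ≤ q →
      (∑ g : (Fin q × Fin s × Fin n × Fin B) → Fin m, ∑ i, ‖D u i g‖ ^ 2)
        ≤ L ^ 2 / B * ∑ g : (Fin q × Fin s × Fin n × Fin B) → Fin m,
            ∑ i, ‖Xf u i g - Xf (u - 1) i g‖ ^ 2 := by
    intro u h1 h2
    rw [Finset.sum_comm, Finset.mul_sum (s := (Finset.univ : Finset ((Fin q × Fin s × Fin n × Fin B) → Fin m)))]
    calc ∑ i, ∑ g : (Fin q × Fin s × Fin n × Fin B) → Fin m, ‖D u i g‖ ^ 2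
        ≤ ∑ i, L ^ 2 / B * ∑ g : (Fin q × Fin s × Fin n × Fin B) → Fin m,
            ‖Xf u i g - Xf (u - 1) i g‖ ^ 2 :=
          Finset.sum_le_sum fun i _ => key_diag i u h1 h2
      _ = ∑ g : (Fin q × Fin s × Fin n × Fin B) → Fin m,
            L ^ 2 / B * ∑ i, ‖Xf u i g - Xf (u - 1) i g‖ ^ 2 := by
          rw [← Finset.mul_sum, ← Finset.mul_sum, Finset.sum_comm]
  have step3 : ∀ u, 1 ≤ u → u ≤ q → ∀ g : (Fin q × Fin s × Fin n × Fin B) → Fin m,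
      (∑ i, ‖Xf u i g - Xf (u - 1) i g‖ ^ 2)
        ≤ 3 * (∑ i, ‖Xf u i g - (n : ℝ)⁻¹ • ∑ i', Xf u i' g‖ ^ 2)
          + 3 * (∑ i, ‖Xf (u - 1) i g - (n : ℝ)⁻¹ • ∑ i', Xf (u - 1) i' g‖ ^ 2)
          + 3 * n * α ^ 2 * ‖(n : ℝ)⁻¹ • ∑ i', Vf (u - 1) i' g‖ ^ 2 := by
    intro u h1 h2 g
    have hper : ∀ i, ‖Xf u i g - Xf (u - 1) i g‖ ^ 2
        ≤ 3 * ‖Xf u i g - (n : ℝ)⁻¹ • ∑ i', Xf u i' g‖ ^ 2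
          + 3 * ‖Xf (u - 1) i g - (n : ℝ)⁻¹ • ∑ i', Xf (u - 1) i' g‖ ^ 2
          + 3 * α ^ 2 * ‖(n : ℝ)⁻¹ • ∑ i', Vf (u - 1) i' g‖ ^ 2 := by
      intro i
      have hdec : Xf u i g - Xf (u - 1) i g
          = (Xf u i g - (n : ℝ)⁻¹ • ∑ i', Xf u i' g)
            + (-(Xf (u - 1) i g - (n : ℝ)⁻¹ • ∑ i', Xf (u - 1) i' g))
            + (-(α • ((n : ℝ)⁻¹ • ∑ i', Vf (u - 1) i' g))) := by
        rw [hxbar u h1 h2 g]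
        abel
      calc ‖Xf u i g - Xf (u - 1) i g‖ ^ 2
          = ‖(Xf u i g - (n : ℝ)⁻¹ • ∑ i', Xf u i' g)
            + (-(Xf (u - 1) i g - (n : ℝ)⁻¹ • ∑ i', Xf (u - 1) i' g))
            + (-(α • ((n : ℝ)⁻¹ • ∑ i', Vf (u - 1) i' g)))‖ ^ 2 := by rw [← hdec]
        _ ≤ 3 * ‖Xf u i g - (n : ℝ)⁻¹ • ∑ i', Xf u i' g‖ ^ 2
            + 3 * ‖-(Xf (u - 1) i g - (n : ℝ)⁻¹ • ∑ i', Xf (u - 1) i' g)‖ ^ 2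
            + 3 * ‖-(α • ((n : ℝ)⁻¹ • ∑ i', Vf (u - 1) i' g))‖ ^ 2 :=
            norm_add3_sq_le _ _ _
        _ = 3 * ‖Xf u i g - (n : ℝ)⁻¹ • ∑ i', Xf u i' g‖ ^ 2
            + 3 * ‖Xf (u - 1) i g - (n : ℝ)⁻¹ • ∑ i', Xf (u - 1) i' g‖ ^ 2
            + 3 * α ^ 2 * ‖(n : ℝ)⁻¹ • ∑ i', Vf (u - 1) i' g‖ ^ 2 := by
            rw [norm_neg, norm_neg, norm_smul]
            simp [Real.norm_eq_abs, mul_pow, sq_abs]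
            ring
    calc ∑ i, ‖Xf u i g - Xf (u - 1) i g‖ ^ 2
        ≤ ∑ i, (3 * ‖Xf u i g - (n : ℝ)⁻¹ • ∑ i', Xf u i' g‖ ^ 2
          + 3 * ‖Xf (u - 1) i g - (n : ℝ)⁻¹ • ∑ i', Xf (u - 1) i' g‖ ^ 2
          + 3 * α ^ 2 * ‖(n : ℝ)⁻¹ • ∑ i', Vf (u - 1) i' g‖ ^ 2) :=
          Finset.sum_le_sum fun i _ => hper i
      _ = 3 * (∑ i, ‖Xf u i g - (n : ℝ)⁻¹ • ∑ i', Xf u i' g‖ ^ 2)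
          + 3 * (∑ i, ‖Xf (u - 1) i g - (n : ℝ)⁻¹ • ∑ i', Xf (u - 1) i' g‖ ^ 2)
          + 3 * n * α ^ 2 * ‖(n : ℝ)⁻¹ • ∑ i', Vf (u - 1) i' g‖ ^ 2 := by
          rw [Finset.sum_add_distrib, Finset.sum_add_distrib, ← Finset.mul_sum,
            ← Finset.mul_sum, Finset.sum_const, Finset.card_univ, Fintype.card_fin,
            nsmul_eq_mul]
          ring
  -- abbreviations
  set SA : ℕ → ℝ := fun u => ∑ g : (Fin q × Fin s × Fin n × Fin B) → Fin m,
      ∑ i, ‖Xf u i g - (n : ℝ)⁻¹ • ∑ i', Xf u i' g‖ ^ 2 with hSA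
  set SV : ℕ → ℝ := fun u => ∑ g : (Fin q × Fin s × Fin n × Fin B) → Fin m,
      ‖(n : ℝ)⁻¹ • ∑ i, Vf u i g‖ ^ 2 with hSV
  have SAnn : ∀ u, 0 ≤ SA u := by intro u; rw [hSA]; positivity
  have SVnn : ∀ u, 0 ≤ SV u := by intro u; rw [hSV]; positivity
  have hIA : ∑ u ∈ Finset.Icc 1 t, SA u ≤ ∑ u ∈ Finset.range (t + 1), SA u := by
    refine Finset.sum_le_sum_of_subset_of_nonneg ?_ fun u _ _ => SAnn u
    intro x hx
    rw [Finset.mem_Icc] at hx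
    rw [Finset.mem_range]
    omega
  have hIB : ∑ u ∈ Finset.Icc 1 t, SA (u - 1) ≤ ∑ u ∈ Finset.range (t + 1), SA u := by
    have h0 : Finset.Icc 1 t = Finset.Ico 1 (t + 1) := by rw [Finset.Ico_add_one_right_eq_Icc]
    rw [h0, Finset.sum_Ico_eq_sum_range]
    have h1 : ∑ u ∈ Finset.range (t + 1 - 1), SA (1 + u - 1)
        = ∑ u ∈ Finset.range t, SA u := by
      refine Finset.sum_congr rfl fun u _ => by congr 1; omega
    rw [h1]
    refine Finset.sum_le_sum_of_subset_of_nonneg ?_ fun u _ _ => SAnn u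
    intro x hx
    rw [Finset.mem_range] at hx ⊢
    omega
  have hIC : ∑ u ∈ Finset.Icc 1 t, SV (u - 1) = ∑ u ∈ Finset.range t, SV u := by
    have h0 : Finset.Icc 1 t = Finset.Ico 1 (t + 1) := by rw [Finset.Ico_add_one_right_eq_Icc]
    rw [h0, Finset.sum_Ico_eq_sum_range]
    refine Finset.sum_congr rfl fun u _ => by congr 1; omega
  have hc : (0:ℝ) ≤ L ^ 2 / B := by positivity
  calc (∑ g : (Fin q × Fin s × Fin n × Fin B) → Fin m,
      ∑ i, ‖Vf t i g - gradfI i (Xf t i g)‖ ^ 2)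
      = ∑ u ∈ Finset.Icc 1 t, ∑ g : (Fin q × Fin s × Fin n × Fin B) → Fin m,
          ∑ i, ‖D u i g‖ ^ 2 := main1
    _ ≤ ∑ u ∈ Finset.Icc 1 t, L ^ 2 / B *
          (3 * SA u + 3 * SA (u - 1) + 3 * n * α ^ 2 * SV (u - 1)) := by
        refine Finset.sum_le_sum fun u hu => ?_
        rw [Finset.mem_Icc] at hu
        refine le_trans (step2 u hu.1 (by omega)) ?_
        refine mul_le_mul_of_nonneg_left ?_ hc
        calc ∑ g : (Fin q × Fin s × Fin n × Fin B) → Fin m,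
            ∑ i, ‖Xf u i g - Xf (u - 1) i g‖ ^ 2
            ≤ ∑ g : (Fin q × Fin s × Fin n × Fin B) → Fin m,
              (3 * (∑ i, ‖Xf u i g - (n : ℝ)⁻¹ • ∑ i', Xf u i' g‖ ^ 2)
              + 3 * (∑ i, ‖Xf (u - 1) i g - (n : ℝ)⁻¹ • ∑ i', Xf (u - 1) i' g‖ ^ 2)
              + 3 * n * α ^ 2 * ‖(n : ℝ)⁻¹ • ∑ i', Vf (u - 1) i' g‖ ^ 2) :=
              Finset.sum_le_sum fun g _ => step3 u hu.1 (by omega) g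
          _ = 3 * SA u + 3 * SA (u - 1) + 3 * n * α ^ 2 * SV (u - 1) := by
              rw [Finset.sum_add_distrib, Finset.sum_add_distrib, ← Finset.mul_sum,
                ← Finset.mul_sum, ← Finset.mul_sum, hSA, hSV]
    _ = L ^ 2 / B * (3 * ∑ u ∈ Finset.Icc 1 t, SA u
          + 3 * ∑ u ∈ Finset.Icc 1 t, SA (u - 1)
          + 3 * n * α ^ 2 * ∑ u ∈ Finset.Icc 1 t, SV (u - 1)) := by
        rw [← Finset.mul_sum, Finset.sum_add_distrib, Finset.sum_add_distrib,
          ← Finset.mul_sum, ← Finset.mul_sum, ← Finset.mul_sum]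
    _ ≤ L ^ 2 / B * (3 * ∑ u ∈ Finset.range (t + 1), SA u
          + 3 * ∑ u ∈ Finset.range (t + 1), SA u
          + 3 * n * α ^ 2 * ∑ u ∈ Finset.range t, SV u) := by
        refine mul_le_mul_of_nonneg_left ?_ hc
        rw [hIC]
        have h3 : (0:ℝ) ≤ 3 * n * α ^ 2 := by positivity
        nlinarith [hIA, hIB]
    _ = 3 * n * α ^ 2 * L ^ 2 / B * ∑ u ∈ Finset.range t, SV u
        + 6 * L ^ 2 / B * ∑ u ∈ Finset.range (t + 1), SA u := by ring
section Fac

variable {Ω : Type*} {E : Type*} [NormedAddCommGroup E] [InnerProductSpace ℝ E]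
variable {q s n B m : ℕ}

/-- `h : Ω → E` factors through `T` by a function depending only on coordinates in the mask. -/
private def Fac (T : Ω → ((Fin q × Fin s × Fin n × Fin B) → Fin m)) (h : Ω → E) (b : ℕ) : Prop :=
  ∃ φ : ((Fin q × Fin s × Fin n × Fin B) → Fin m) → E,
    (∀ ω, h ω = φ (T ω)) ∧
    ∀ g₁ g₂, (∀ k, maskP b k → g₁ k = g₂ k) → φ g₁ = φ g₂

variable {T : Ω → ((Fin q × Fin s × Fin n × Fin B) → Fin m)}

private lemma Fac.mono {h : Ω → E} {b b' : ℕ} (hbb : b ≤ b') (hf : Fac T h b) :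
    Fac T h b' := by
  obtain ⟨φ, e, d⟩ := hf
  exact ⟨φ, e, fun g₁ g₂ hag => d g₁ g₂ fun k hk => hag k (maskP_mono hbb hk)⟩

private lemma Fac.congr {h₁ h₂ : Ω → E} {b : ℕ} (hen : ∀ ω, h₁ ω = h₂ ω)
    (hf : Fac T h₁ b) : Fac T h₂ b := by
  obtain ⟨φ, e, d⟩ := hf
  exact ⟨φ, fun ω => by simp only [← hen ω, e ω], d⟩

private lemma Fac.const (e : E) (b : ℕ) : Fac T (fun _ => e) b :=
  ⟨fun _ => e, fun _ => rfl, fun _ _ _ => rfl⟩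

private lemma Fac.comb2 (K : E → E → E) {h₁ h₂ : Ω → E} {b : ℕ}
    (hf₁ : Fac T h₁ b) (hf₂ : Fac T h₂ b) :
    Fac T (fun ω => K (h₁ ω) (h₂ ω)) b := by
  obtain ⟨φ₁, e₁, d₁⟩ := hf₁
  obtain ⟨φ₂, e₂, d₂⟩ := hf₂
  exact ⟨fun g => K (φ₁ g) (φ₂ g), fun ω => by simp only [e₁ ω, e₂ ω],
    fun g₁ g₂ hag => by simp only [d₁ g₁ g₂ hag, d₂ g₁ g₂ hag]⟩

private lemma Fac.map (K : E → E) {h : Ω → E} {b : ℕ} (hf : Fac T h b) :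
    Fac T (fun ω => K (h ω)) b := by
  obtain ⟨φ, e, d⟩ := hf
  exact ⟨fun g => K (φ g), fun ω => by simp only [e ω],
    fun g₁ g₂ hag => by simp only [d g₁ g₂ hag]⟩

private lemma Fac.wsum {ι : Type*} [Fintype ι] (c : ι → ℝ) {h : ι → Ω → E} {b : ℕ}
    (hf : ∀ r, Fac T (h r) b) :
    Fac T (fun ω => ∑ r, c r • h r ω) b := by
  choose φ e d using hf
  refine ⟨fun g => ∑ r, c r • φ r g, fun ω => ?_, fun g₁ g₂ hag => ?_⟩
  · simp only []
    exact Finset.sum_congr rfl fun r _ => by rw [e r ω]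
  · simp only []
    exact Finset.sum_congr rfl fun r _ => by rw [d r g₁ g₂ hag]

private lemma Fac.batch (G : Fin m → E → E → E) (c : ℝ)
    (k₀ : Fin B → Fin q × Fin s × Fin n × Fin B)
    {b : ℕ} (hk₀ : ∀ l, maskP b (k₀ l))
    {hx hx1 hv : Ω → E}
    (hfx : Fac T hx b) (hfx1 : Fac T hx1 b) (hfv : Fac T hv b) :
    Fac T (fun ω => c • (∑ l, G (T ω (k₀ l)) (hx ω) (hx1 ω)) + hv ω) b := by
  obtain ⟨φx, ex, dx⟩ := hfx
  obtain ⟨φx1, ex1, dx1⟩ := hfx1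
  obtain ⟨φv, ev, dv⟩ := hfv
  refine ⟨fun g => c • (∑ l, G (g (k₀ l)) (φx g) (φx1 g)) + φv g, fun ω => ?_,
    fun g₁ g₂ hag => ?_⟩
  · simp only [ex ω, ex1 ω, ev ω]
  · simp only [dx g₁ g₂ hag, dx1 g₁ g₂ hag, dv g₁ g₂ hag]
    congr 2
    exact Finset.sum_congr rfl fun l _ => by rw [hag (k₀ l) (hk₀ l)]

end Fac
set_option maxHeartbeats 1600000 in
/-- GT-SARAH setup. -/
theorem gt_sarah_local_vr
    {Ω : Type*} [MeasurableSpace Ω] (μ : Measure Ω) [IsProbabilityMeasure μ]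
    (n m p q B : ℕ) (hn : 1 ≤ n) (hm : 1 ≤ m) (hp : 1 ≤ p) (hq : 1 ≤ q)
    (hB1 : 1 ≤ B) (hBm : B ≤ m)
    (α L : ℝ) (hα0 : 0 < α) (hL : 0 < L)
    (f : Fin n → Fin m → EuclideanSpace ℝ (Fin p) → ℝ)
    (hdiff : ∀ i j, Differentiable ℝ (f i j))
    (hsmooth : ∀ i (u w : EuclideanSpace ℝ (Fin p)),
      (m : ℝ)⁻¹ * ∑ j, ‖gradient (f i j) u - gradient (f i j) w‖ ^ 2 ≤ L ^ 2 * ‖u - w‖ ^ 2)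
    (fI : Fin n → EuclideanSpace ℝ (Fin p) → ℝ)
    (hfI : ∀ i, fI i = fun z => (m : ℝ)⁻¹ * ∑ j, f i j z)
    (F : EuclideanSpace ℝ (Fin p) → ℝ)
    (hF : F = fun z => (n : ℝ)⁻¹ * ∑ i, fI i z)
    (Fstar : ℝ) (hFbdd : BddBelow (Set.range F)) (hFstar : Fstar = sInf (Set.range F))
    (W : Matrix (Fin n) (Fin n) ℝ)
    (hWnonneg : ∀ i r, 0 ≤ W i r) (hWdiag : ∀ i, 0 < W i i)
    (hWprim : ∃ k : ℕ, 0 < k ∧ ∀ i r, 0 < (W ^ k) i r)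
    (hWrow : ∀ i, ∑ r, W i r = 1) (hWcol : ∀ r, ∑ i, W i r = 1)
    (lam : ℝ)
    (hlam : lam = ‖(Matrix.toEuclideanCLM (𝕜 := ℝ) (W - Matrix.of fun _ _ => (n : ℝ)⁻¹) :
      EuclideanSpace ℝ (Fin n) →L[ℝ] EuclideanSpace ℝ (Fin n))‖)
    (hlam0 : 0 ≤ lam) (hlam1 : lam < 1)
    (τ : ℕ → ℕ → Fin n → Fin B → Ω → Fin m)
    (hτmeas : ∀ t s i l, Measurable (τ t s i l))
    (hτindep : ProbabilityTheory.iIndepFun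
      (fun idx : {u : ℕ × ℕ // 1 ≤ u.1 ∧ u.1 ≤ q ∧ 1 ≤ u.2} × Fin n × Fin B => τ idx.1.1.1 idx.1.1.2 idx.2.1 idx.2.2) μ)
    (hτunif : ∀ t s (i : Fin n) (l : Fin B), 1 ≤ t → t ≤ q → 1 ≤ s → ∀ j : Fin m,
      μ (τ t s i l ⁻¹' {j}) = 1 / (m : ENNReal))
    (x y : ℕ → ℕ → Fin n → Ω → EuclideanSpace ℝ (Fin p))
    (v : ℤ → ℕ → Fin n → Ω → EuclideanSpace ℝ (Fin p))
    (x0 : EuclideanSpace ℝ (Fin p))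
    (hx0 : ∀ i ω, x 0 1 i ω = x0)
    (hy0 : ∀ i ω, y 0 1 i ω = 0)
    (hvm1 : ∀ i ω, v (-1) 1 i ω = 0)
    (hv0 : ∀ s, 1 ≤ s → ∀ i ω, v 0 s i ω = gradient (fI i) (x 0 s i ω))
    (hvrec : ∀ s, 1 ≤ s → ∀ t : ℕ, 1 ≤ t → t ≤ q → ∀ i ω,
      v (t : ℤ) s i ω = (B : ℝ)⁻¹ • (∑ l, (gradient (f i (τ t s i l ω)) (x t s i ω)
        - gradient (f i (τ t s i l ω)) (x (t - 1) s i ω))) + v ((t : ℤ) - 1) s i ω)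
    (hyrec : ∀ s, 1 ≤ s → ∀ t : ℕ, t ≤ q → ∀ i ω,
      y (t + 1) s i ω = (∑ r, W i r • y t s r ω) + v (t : ℤ) s i ω - v ((t : ℤ) - 1) s i ω)
    (hxrec : ∀ s, 1 ≤ s → ∀ t : ℕ, t ≤ q → ∀ i ω,
      x (t + 1) s i ω = (∑ r, W i r • x t s r ω) - α • y (t + 1) s i ω)
    (hxcarry : ∀ s, 1 ≤ s → ∀ i ω, x 0 (s + 1) i ω = x (q + 1) s i ω)
    (hycarry : ∀ s, 1 ≤ s → ∀ i ω, y 0 (s + 1) i ω = y (q + 1) s i ω)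
    (hvcarry : ∀ s, 1 ≤ s → ∀ i ω, v (-1) (s + 1) i ω = v (q : ℤ) s i ω)
    :
    ∀ s : ℕ, 1 ≤ s → ∀ t : ℕ, 1 ≤ t → t ≤ q →
      ∫ ω, ∑ i, ‖v (t : ℤ) s i ω - gradient (fI i) (x t s i ω)‖ ^ 2 ∂μ
        ≤ (3 * (n : ℝ) * α ^ 2 * L ^ 2 / B) *
            ∑ u ∈ range t, ∫ ω, ‖(n : ℝ)⁻¹ • ∑ i, v (u : ℤ) s i ω‖ ^ 2 ∂μ
          + (6 * L ^ 2 / B) * ∑ u ∈ range (t + 1),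
              ∫ ω, ∑ i, ‖x u s i ω - (n : ℝ)⁻¹ • ∑ i', x u s i' ω‖ ^ 2 ∂μ := by
  intro s hs t ht1 htq
  classical
  have hmR : (0:ℝ) < m := by exact_mod_cast hm
  have hgfI : ∀ i z, gradient (fI i) z = (m:ℝ)⁻¹ • ∑ j, gradient (f i j) z := by
    intro i z
    rw [hfI i]
    exact gradient_const_mul_sum _ _ (fun j => hdiff i j) z
  have hmean : ∀ i z, (∑ j, gradient (f i j) z) = (m:ℝ) • gradient (fI i) z := by
    intro i z
    rw [hgfI i z, smul_smul, mul_inv_cancel₀ (ne_of_gt hmR), one_smul]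
  have hsm : ∀ i (z w : EuclideanSpace ℝ (Fin p)),
      ∑ j, ‖gradient (f i j) z - gradient (f i j) w‖ ^ 2
        ≤ (m:ℝ) * (L ^ 2 * ‖z - w‖ ^ 2) := by
    intro i z w
    have h := hsmooth i z w
    calc ∑ j, ‖gradient (f i j) z - gradient (f i j) w‖ ^ 2
        = (m:ℝ) * ((m:ℝ)⁻¹ * ∑ j, ‖gradient (f i j) z - gradient (f i j) w‖ ^ 2) := by
          field_simp
      _ ≤ (m:ℝ) * (L ^ 2 * ‖z - w‖ ^ 2) :=
          mul_le_mul_of_nonneg_left h (le_of_lt hmR)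
  -- the bundle of all sampled indices relevant up to epoch s
  set T : Ω → (Fin q × Fin s × Fin n × Fin B) → Fin m :=
    fun ω k => τ ((k.1:ℕ)+1) ((k.2.1:ℕ)+1) k.2.2.1 k.2.2.2 ω with hTdef
  have hTmeas : Measurable T := measurable_pi_lambda _ fun k => hτmeas _ _ _ _
  have hfiber : ∀ g : (Fin q × Fin s × Fin n × Fin B) → Fin m,
      μ (T ⁻¹' {g}) = (1 / (m:ENNReal)) ^ (Fintype.card (Fin q × Fin s × Fin n × Fin B)) := by
    intro g
    set emb : (Fin q × Fin s × Fin n × Fin B) →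
        {u : ℕ × ℕ // 1 ≤ u.1 ∧ u.1 ≤ q ∧ 1 ≤ u.2} × Fin n × Fin B :=
      fun k => (⟨((k.1:ℕ)+1, (k.2.1:ℕ)+1),
        ⟨by omega, by have := k.1.isLt; omega, by omega⟩⟩, k.2.2.1, k.2.2.2) with hemb
    have hembinj : Function.Injective emb := by
      rintro ⟨a, b, cc, d⟩ ⟨a', b', cc', d'⟩ h
      simp only [hemb, Prod.mk.injEq, Subtype.mk.injEq] at h
      obtain ⟨⟨h1, h2⟩, h3, h4⟩ := h
      simp only [Prod.mk.injEq]
      exact ⟨Fin.ext (by omega), Fin.ext (by omega), h3, h4⟩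
    set sets : {u : ℕ × ℕ // 1 ≤ u.1 ∧ u.1 ≤ q ∧ 1 ≤ u.2} × Fin n × Fin B → Set (Fin m) :=
      fun idx => {jm | ∀ k, emb k = idx → jm = g k} with hsets
    have hsetsemb : ∀ k, sets (emb k) = {g k} := by
      intro k
      ext jm
      simp only [hsets, Set.mem_setOf_eq, Set.mem_singleton_iff]
      constructor
      · intro h; exact h k rfl
      · intro h k' hk'; rw [hembinj hk']; exact h
    have hindep := hτindep.measure_inter_preimage_eq_mul
      (Finset.image emb Finset.univ) (sets := sets)
      (fun idx _ => (Set.to_countable _).measurableSet)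
    have hQ : T ⁻¹' {g} = ⋂ idx ∈ Finset.image emb Finset.univ,
        (fun ω => τ idx.1.1.1 idx.1.1.2 idx.2.1 idx.2.2 ω) ⁻¹' sets idx := by
      ext ω
      simp only [Set.mem_preimage, Set.mem_singleton_iff, Set.mem_iInter,
        Finset.mem_image, Finset.mem_univ, true_and, funext_iff]
      constructor
      · rintro h idx ⟨k, rfl⟩
        rw [hsetsemb k]
        exact h k
      · intro h k
        have h2 := h (emb k) ⟨k, rfl⟩
        rw [hsetsemb k] at h2
        exact h2
    calc μ (T ⁻¹' {g})
        = μ (⋂ idx ∈ Finset.image emb Finset.univ,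
            (fun ω => τ idx.1.1.1 idx.1.1.2 idx.2.1 idx.2.2 ω) ⁻¹' sets idx) := by rw [hQ]
      _ = ∏ idx ∈ Finset.image emb Finset.univ,
            μ ((fun ω => τ idx.1.1.1 idx.1.1.2 idx.2.1 idx.2.2 ω) ⁻¹' sets idx) := hindep
      _ = ∏ k : Fin q × Fin s × Fin n × Fin B,
            μ ((fun ω => τ ((k.1:ℕ)+1) ((k.2.1:ℕ)+1) k.2.2.1 k.2.2.2 ω) ⁻¹' sets (emb k)) := by
          rw [Finset.prod_image fun k _ k' _ h => hembinj h]
      _ = ∏ _k : Fin q × Fin s × Fin n × Fin B, (1 / (m:ENNReal)) := by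
          refine Finset.prod_congr rfl fun k _ => ?_
          rw [hsetsemb k]
          exact hτunif ((k.1:ℕ)+1) ((k.2.1:ℕ)+1) k.2.2.1 k.2.2.2
            (by omega) (by have := k.1.isLt; omega) (by omega) (g k)
      _ = (1 / (m:ENNReal)) ^ (Fintype.card (Fin q × Fin s × Fin n × Fin B)) := by
          rw [Finset.prod_const, Finset.card_univ]
  have hsurj : Function.Surjective T := by
    intro g
    have h0 : μ (T ⁻¹' {g}) ≠ 0 := by
      rw [hfiber g]
      apply pow_ne_zero
      simp only [one_div, ne_eq, ENNReal.inv_eq_zero]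
      exact ENNReal.natCast_ne_top m
    obtain ⟨ω, hω⟩ := MeasureTheory.nonempty_of_measure_ne_zero h0
    exact ⟨ω, hω⟩
  have hint : ∀ h : ((Fin q × Fin s × Fin n × Fin B) → Fin m) → ℝ,
      ∫ ω, h (T ω) ∂μ
        = ((m:ℝ)⁻¹) ^ (Fintype.card (Fin q × Fin s × Fin n × Fin B)) * ∑ g, h g := by
    intro h
    have hmeas : Measurable h := measurable_of_finite h
    have hmap : IsProbabilityMeasure (μ.map T) := Measure.isProbabilityMeasure_map hTmeas.aemeasurable
    have hgval : ∀ g, ((μ.map T) {g}).toReal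
        = ((m:ℝ)⁻¹) ^ (Fintype.card (Fin q × Fin s × Fin n × Fin B)) := by
      intro g
      rw [Measure.map_apply hTmeas (measurableSet_singleton g), hfiber g,
        ENNReal.toReal_pow]
      congr 1
      rw [one_div, ENNReal.toReal_inv]
      simp
    calc ∫ ω, h (T ω) ∂μ
        = ∫ g, h g ∂(μ.map T) :=
          (MeasureTheory.integral_map hTmeas.aemeasurable
            hmeas.aestronglyMeasurable).symm
      _ = ∑ g, ((μ.map T) {g}).toReal • h g :=
          MeasureTheory.integral_fintype (MeasureTheory.Integrable.of_finite)
      _ = ∑ g, ((m:ℝ)⁻¹) ^ (Fintype.card (Fin q × Fin s × Fin n × Fin B)) * h g :=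
          Finset.sum_congr rfl fun g _ => by rw [hgval g, smul_eq_mul]
      _ = ((m:ℝ)⁻¹) ^ (Fintype.card (Fin q × Fin s × Fin n × Fin B)) * ∑ g, h g := by
          rw [Finset.mul_sum]
  -- the gradient-tracking invariant
  have ybar : ∀ s', 1 ≤ s' → ∀ t', t' ≤ q + 1 → ∀ ω,
      ∑ i, y t' s' i ω = ∑ i, v ((t':ℤ) - 1) s' i ω := by
    have steprec : ∀ s₀, 1 ≤ s₀ → ∀ t₀, t₀ ≤ q →
        (∀ ω, ∑ i, y t₀ s₀ i ω = ∑ i, v ((t₀:ℤ) - 1) s₀ i ω) →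
        ∀ ω, ∑ i, y (t₀+1) s₀ i ω = ∑ i, v (((t₀+1:ℕ):ℤ) - 1) s₀ i ω := by
      intro s₀ h1 t₀ h2 ih ω
      have hW : ∑ i, ∑ r, W i r • y t₀ s₀ r ω = ∑ i, y t₀ s₀ i ω := by
        rw [Finset.sum_comm]
        refine Finset.sum_congr rfl fun r _ => ?_
        rw [← Finset.sum_smul, hWcol r, one_smul]
      calc ∑ i, y (t₀+1) s₀ i ω
          = ∑ i, ((∑ r, W i r • y t₀ s₀ r ω) + v (t₀:ℤ) s₀ i ω - v ((t₀:ℤ)-1) s₀ i ω) :=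
            Finset.sum_congr rfl fun i _ => hyrec s₀ h1 t₀ h2 i ω
        _ = (∑ i, ∑ r, W i r • y t₀ s₀ r ω) + ∑ i, v (t₀:ℤ) s₀ i ω
            - ∑ i, v ((t₀:ℤ)-1) s₀ i ω := by
            rw [Finset.sum_sub_distrib, Finset.sum_add_distrib]
        _ = ∑ i, v (((t₀+1:ℕ):ℤ) - 1) s₀ i ω := by
            rw [hW, ih ω, show (((t₀+1:ℕ):ℤ) - 1) = (t₀:ℤ) by push_cast; ring]
            abel
    intro s' hs'
    induction s', hs' using Nat.le_induction with
    | base =>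
        intro t'
        induction t' with
        | zero =>
            intro _ ω
            rw [show (((0:ℕ):ℤ) - 1) = -1 by norm_num]
            simp [hy0, hvm1]
        | succ t' ih =>
            intro ht' ω
            exact steprec 1 le_rfl t' (by omega) (fun ω => ih (by omega) ω) ω
    | succ s' hs'1 ih =>
        intro t'
        induction t' with
        | zero =>
            intro _ ω
            have h1 : ∑ i, y 0 (s'+1) i ω = ∑ i, y (q+1) s' i ω :=
              Finset.sum_congr rfl fun i _ => hycarry s' hs'1 i ω
            have h2 : ∑ i, v (((0:ℕ):ℤ)-1) (s'+1) i ω = ∑ i, v (q:ℤ) s' i ω := by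
              refine Finset.sum_congr rfl fun i _ => ?_
              rw [show (((0:ℕ):ℤ) - 1) = -1 by norm_num]
              exact hvcarry s' hs'1 i ω
            rw [h1, h2]
            have h3 := ih (q+1) le_rfl ω
            rwa [show (((q+1:ℕ):ℤ) - 1) = (q:ℤ) by push_cast; ring] at h3
        | succ t' ih2 =>
            intro ht' ω
            exact steprec (s'+1) (by omega) t' (by omega) (fun ω => ih2 (by omega) ω) ω
  have xbar : ∀ u, 1 ≤ u → u ≤ q → ∀ ω,
      ∑ i, x u s i ω = ∑ i, x (u-1) s i ω - α • ∑ i, v (((u-1:ℕ)):ℤ) s i ω := by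
    intro u h1 h2 ω
    have hu1 : u - 1 + 1 = u := by omega
    have hxi : ∀ i, x u s i ω = (∑ r, W i r • x (u-1) s r ω) - α • y u s i ω := by
      intro i
      have hh := hxrec s hs (u-1) (by omega) i ω
      rwa [hu1] at hh
    have hWswap : ∑ i, ∑ r, W i r • x (u-1) s r ω = ∑ i, x (u-1) s i ω := by
      rw [Finset.sum_comm]
      refine Finset.sum_congr rfl fun r _ => ?_
      rw [← Finset.sum_smul, hWcol r, one_smul]
    calc ∑ i, x u s i ω
        = ∑ i, ((∑ r, W i r • x (u-1) s r ω) - α • y u s i ω) :=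
          Finset.sum_congr rfl fun i _ => hxi i
      _ = (∑ i, ∑ r, W i r • x (u-1) s r ω) - α • ∑ i, y u s i ω := by
          rw [Finset.sum_sub_distrib, Finset.smul_sum]
      _ = ∑ i, x (u-1) s i ω - α • ∑ i, v (((u-1:ℕ)):ℤ) s i ω := by
          rw [hWswap, ybar s hs u (by omega) ω,
            show ((u:ℤ) - 1) = (((u-1:ℕ)):ℤ) by omega]
  -- factorization through T
  set bf : ℕ → ℕ → ℕ := fun s₀ b => if s₀ = s then b else 0 with hbf
  have hbfmono : ∀ s₀ b b', b ≤ b' → bf s₀ b ≤ bf s₀ b' := by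
    intro s₀ b b' h
    simp only [hbf]
    split <;> omega
  have inner : ∀ s₀, 1 ≤ s₀ → s₀ ≤ s →
      (∀ i, Fac T (fun ω => x 0 s₀ i ω) 0) →
      (∀ i, Fac T (fun ω => y 0 s₀ i ω) 0) →
      (∀ i, Fac T (fun ω => v (-1) s₀ i ω) 0) →
      ∀ t₀, t₀ ≤ q + 1 →
        (∀ i, Fac T (fun ω => x t₀ s₀ i ω) (bf s₀ (t₀ - 1))) ∧
        (∀ i, Fac T (fun ω => y t₀ s₀ i ω) (bf s₀ (t₀ - 1))) ∧
        (∀ i, Fac T (fun ω => v ((t₀:ℤ) - 1) s₀ i ω) (bf s₀ (t₀ - 1))) ∧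
        (t₀ ≤ q → ∀ i, Fac T (fun ω => v (t₀:ℤ) s₀ i ω) (bf s₀ t₀)) := by
    intro s₀ hs₀1 hs₀s hx0f hy0f hvm1f t₀
    induction t₀ with
    | zero =>
        intro _
        refine ⟨fun i => (hx0f i).mono (Nat.zero_le _),
          fun i => (hy0f i).mono (Nat.zero_le _), fun i => ?_, fun _ i => ?_⟩
        · refine Fac.mono (Nat.zero_le _) (Fac.congr (fun ω => ?_) (hvm1f i))
          rw [show (((0:ℕ):ℤ) - 1) = -1 by norm_num]
        · refine Fac.mono (Nat.zero_le _)
            (Fac.congr (fun ω => ?_) ((hx0f i).map (gradient (fI i))))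
          simp only [Nat.cast_zero]
          exact (hv0 s₀ hs₀1 i ω).symm
    | succ t₀ ih =>
        intro ht₀1
        obtain ⟨HX, HY, HVm, HV⟩ := ih (by omega)
        have ht₀q : t₀ ≤ q := by omega
        have HVt := HV ht₀q
        have hyNew : ∀ i, Fac T (fun ω => y (t₀+1) s₀ i ω) (bf s₀ t₀) := by
          intro i
          have hsum : Fac T (fun ω => ∑ r, W i r • y t₀ s₀ r ω) (bf s₀ t₀) :=
            Fac.wsum (W i) fun r => (HY r).mono (hbfmono s₀ _ _ (by omega))
          have hv2 : Fac T (fun ω => v ((t₀:ℤ)-1) s₀ i ω) (bf s₀ t₀) :=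
            (HVm i).mono (hbfmono s₀ _ _ (by omega))
          have hcomb := Fac.comb2 (fun a b => a - b)
            (Fac.comb2 (fun a b => a + b) hsum (HVt i)) hv2
          exact Fac.congr (fun ω => (hyrec s₀ hs₀1 t₀ ht₀q i ω).symm) hcomb
        have hxNew : ∀ i, Fac T (fun ω => x (t₀+1) s₀ i ω) (bf s₀ t₀) := by
          intro i
          have hsum : Fac T (fun ω => ∑ r, W i r • x t₀ s₀ r ω) (bf s₀ t₀) :=
            Fac.wsum (W i) fun r => (HX r).mono (hbfmono s₀ _ _ (by omega))
          have hcomb := Fac.comb2 (fun a b => a - α • b) hsum (hyNew i)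
          exact Fac.congr (fun ω => (hxrec s₀ hs₀1 t₀ ht₀q i ω).symm) hcomb
        refine ⟨fun i => hxNew i, fun i => hyNew i, fun i => ?_, fun ht₁ i => ?_⟩
        · refine Fac.congr (fun ω => ?_) (HVt i)
          rw [show (((t₀+1:ℕ):ℤ) - 1) = (t₀:ℤ) by push_cast; ring]
        · have hmaskl : ∀ l : Fin B, maskP (bf s₀ (t₀+1))
              ((⟨t₀, by omega⟩ : Fin q), (⟨s₀-1, by omega⟩ : Fin s), i, l) := by
            intro l
            rcases eq_or_ne s₀ s with he | hne
            · right
              show t₀ + 1 ≤ bf s₀ (t₀ + 1)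
              simp [hbf, he]
            · left
              have hlt : s₀ < s := lt_of_le_of_ne hs₀s hne
              show (s₀ - 1) + 1 < s
              omega
          have hbatch := Fac.batch
            (T := T) (G := fun jm a b => gradient (f i jm) a - gradient (f i jm) b)
            ((B:ℝ)⁻¹)
            (fun l => ((⟨t₀, by omega⟩ : Fin q), (⟨s₀-1, by omega⟩ : Fin s), i, l))
            hmaskl
            ((hxNew i).mono (hbfmono s₀ _ _ (by omega)))
            ((HX i).mono (hbfmono s₀ _ _ (by omega)))
            ((HVt i).mono (hbfmono s₀ _ _ (by omega)))
          refine Fac.congr (fun ω => ?_) hbatch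
          have hco : ∀ l : Fin B,
              T ω ((⟨t₀, by omega⟩ : Fin q), (⟨s₀-1, by omega⟩ : Fin s), i, l)
                = τ (t₀+1) s₀ i l ω := by
            intro l
            simp only [hTdef]
            rw [show (s₀ - 1) + 1 = s₀ by omega]
          rw [hvrec s₀ hs₀1 (t₀+1) (by omega) ht₁ i ω,
            show (((t₀+1:ℕ):ℤ) - 1) = (t₀:ℤ) by push_cast; ring, Nat.add_sub_cancel]
          rw [show (∑ l : Fin B,
              (gradient (f i (T ω ((⟨t₀, by omega⟩ : Fin q), (⟨s₀-1, by omega⟩ : Fin s), i, l)))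
                  (x (t₀+1) s₀ i ω)
                - gradient (f i (T ω ((⟨t₀, by omega⟩ : Fin q), (⟨s₀-1, by omega⟩ : Fin s), i, l)))
                  (x t₀ s₀ i ω)))
              = ∑ l : Fin B, (gradient (f i (τ (t₀+1) s₀ i l ω)) (x (t₀+1) s₀ i ω)
                - gradient (f i (τ (t₀+1) s₀ i l ω)) (x t₀ s₀ i ω)) from
            Finset.sum_congr rfl fun l _ => by rw [hco l]]
  have outer : ∀ s₀, 1 ≤ s₀ → s₀ ≤ s →
      (∀ i, Fac T (fun ω => x 0 s₀ i ω) 0) ∧ (∀ i, Fac T (fun ω => y 0 s₀ i ω) 0) ∧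
      (∀ i, Fac T (fun ω => v (-1) s₀ i ω) 0) := by
    intro s₀ hs₀1
    induction s₀, hs₀1 using Nat.le_induction with
    | base =>
        intro _
        exact ⟨fun i => Fac.congr (fun ω => (hx0 i ω).symm) (Fac.const x0 0),
          fun i => Fac.congr (fun ω => (hy0 i ω).symm) (Fac.const 0 0),
          fun i => Fac.congr (fun ω => (hvm1 i ω).symm) (Fac.const 0 0)⟩
    | succ s₀ hs₀1 ih =>
        intro hle
        have hs₀s : s₀ ≤ s := by omega
        obtain ⟨a, b, c⟩ := ih (by omega)
        have hin := inner s₀ hs₀1 hs₀s a b c (q+1) le_rfl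
        have hbf0 : ∀ bb, bf s₀ bb = 0 := by
          intro bb
          simp only [hbf, if_neg (show ¬ s₀ = s by omega)]
        refine ⟨fun i => ?_, fun i => ?_, fun i => ?_⟩
        · have h := hin.1 i
          rw [hbf0] at h
          exact Fac.congr (fun ω => (hxcarry s₀ hs₀1 i ω).symm) h
        · have h := hin.2.1 i
          rw [hbf0] at h
          exact Fac.congr (fun ω => (hycarry s₀ hs₀1 i ω).symm) h
        · have h := hin.2.2.1 i
          rw [hbf0] at h
          refine Fac.congr (fun ω => ?_) h
          rw [show (((q+1:ℕ):ℤ) - 1) = (q:ℤ) by push_cast; ring,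
            ← hvcarry s₀ hs₀1 i ω]
  have HXs : ∀ u, u ≤ q → ∀ i, Fac T (fun ω => x u s i ω) (u - 1) := by
    intro u hu i
    obtain ⟨a, b, c⟩ := outer s hs le_rfl
    have h := (inner s hs le_rfl a b c u (by omega)).1 i
    have hbfs : bf s (u - 1) = u - 1 := by simp [hbf]
    rwa [hbfs] at h
  have HVs : ∀ u, u ≤ q → ∀ i, Fac T (fun ω => v (u:ℤ) s i ω) u := by
    intro u hu i
    obtain ⟨a, b, c⟩ := outer s hs le_rfl
    have h := (inner s hs le_rfl a b c u (by omega)).2.2.2 hu i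
    have hbfs : bf s u = u := by simp [hbf]
    rwa [hbfs] at h
  -- choose the factorizations
  have HX' : ∀ (u : ℕ) (i : Fin n),
      ∃ φ : ((Fin q × Fin s × Fin n × Fin B) → Fin m) → EuclideanSpace ℝ (Fin p),
        u ≤ q → ((∀ ω, x u s i ω = φ (T ω)) ∧
          ∀ g₁ g₂, (∀ k, maskP (u-1) k → g₁ k = g₂ k) → φ g₁ = φ g₂) := by
    intro u i
    by_cases h : u ≤ q
    · obtain ⟨φ, e, d⟩ := HXs u h i
      exact ⟨φ, fun _ => ⟨e, d⟩⟩
    · exact ⟨fun _ => 0, fun hc => absurd hc h⟩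
  choose Xf hXf using HX'
  have HV' : ∀ (u : ℕ) (i : Fin n),
      ∃ φ : ((Fin q × Fin s × Fin n × Fin B) → Fin m) → EuclideanSpace ℝ (Fin p),
        u ≤ q → ((∀ ω, v (u:ℤ) s i ω = φ (T ω)) ∧
          ∀ g₁ g₂, (∀ k, maskP u k → g₁ k = g₂ k) → φ g₁ = φ g₂) := by
    intro u i
    by_cases h : u ≤ q
    · obtain ⟨φ, e, d⟩ := HVs u h i
      exact ⟨φ, fun _ => ⟨e, d⟩⟩
    · exact ⟨fun _ => 0, fun hc => absurd hc h⟩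
  choose Vf hVf using HV'
  -- the sampling coordinates
  set ku : ℕ → Fin n → Fin B → Fin q × Fin s × Fin n × Fin B :=
    fun u i l => (if h : u - 1 < q then ⟨u-1, h⟩ else ⟨0, hq⟩, ⟨s-1, by omega⟩, i, l)
    with hku
  have hkt : ∀ u i l, 1 ≤ u → u ≤ q → ((ku u i l).1 : ℕ) + 1 = u := by
    intro u i l h1 h2
    simp only [hku, dif_pos (show u - 1 < q by omega)]
    omega
  have hke : ∀ u i l, 1 ≤ u → u ≤ q → ((ku u i l).2.1 : ℕ) + 1 = s := by
    intro u i l h1 h2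
    simp only [hku]
    omega
  have hkl : ∀ u i l, 1 ≤ u → u ≤ q → (ku u i l).2.2.2 = l := by
    intro u i l h1 h2
    simp only [hku]
  have hTco : ∀ u, 1 ≤ u → u ≤ q → ∀ i l ω, T ω (ku u i l) = τ u s i l ω := by
    intro u h1 h2 i l ω
    simp only [hTdef, hku, dif_pos (show u - 1 < q by omega)]
    rw [show u - 1 + 1 = u by omega, show s - 1 + 1 = s by omega]
  -- transfer the recursions to the finite world
  have hV0U : ∀ i g, Vf 0 i g = gradient (fI i) (Xf 0 i g) := by
    intro i g
    obtain ⟨ω, rfl⟩ := hsurj g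
    have h0q : (0:ℕ) ≤ q := by omega
    rw [← (hVf 0 i h0q).1 ω, ← (hXf 0 i h0q).1 ω]
    simpa using hv0 s hs i ω
  have hVrecU : ∀ u, 1 ≤ u → u ≤ q → ∀ i g,
      Vf u i g = (B:ℝ)⁻¹ • (∑ l, (gradient (f i (g (ku u i l))) (Xf u i g)
        - gradient (f i (g (ku u i l))) (Xf (u-1) i g))) + Vf (u-1) i g := by
    intro u h1 h2 i g
    obtain ⟨ω, rfl⟩ := hsurj g
    rw [← (hVf u i h2).1 ω, ← (hVf (u-1) i (by omega)).1 ω, ← (hXf u i h2).1 ω,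
      ← (hXf (u-1) i (by omega)).1 ω]
    have hτco : ∀ l, (T ω) (ku u i l) = τ u s i l ω := fun l => hTco u h1 h2 i l ω
    simp only [hτco]
    rw [hvrec s hs u h1 h2 i ω, show ((u:ℤ) - 1) = (((u-1:ℕ)):ℤ) by omega]
  have hxbarU : ∀ u, 1 ≤ u → u ≤ q → ∀ g,
      (n:ℝ)⁻¹ • ∑ i, Xf u i g
        = (n:ℝ)⁻¹ • ∑ i, Xf (u-1) i g - α • ((n:ℝ)⁻¹ • ∑ i, Vf (u-1) i g) := by
    intro u h1 h2 g
    obtain ⟨ω, rfl⟩ := hsurj g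
    have e1 : ∑ i, Xf u i (T ω) = ∑ i, x u s i ω :=
      Finset.sum_congr rfl fun i _ => ((hXf u i h2).1 ω).symm
    have e2 : ∑ i, Xf (u-1) i (T ω) = ∑ i, x (u-1) s i ω :=
      Finset.sum_congr rfl fun i _ => ((hXf (u-1) i (by omega)).1 ω).symm
    have e3 : ∑ i, Vf (u-1) i (T ω) = ∑ i, v (((u-1:ℕ)):ℤ) s i ω :=
      Finset.sum_congr rfl fun i _ => ((hVf (u-1) i (by omega)).1 ω).symm
    rw [e1, e2, e3, xbar u h1 h2 ω, smul_sub]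
    congr 1
    rw [smul_comm]
  -- apply the finite-world inequality
  have hmain := ulevel (E := EuclideanSpace ℝ (Fin p)) hm hB1 hs hn α L
    (fun i j => gradient (f i j)) (fun i => gradient (fI i)) hmean hsm Xf Vf ku
    hkt hke hkl (fun u hu i => (hXf u i hu).2) (fun u hu i => (hVf u i hu).2)
    hV0U hVrecU hxbarU t ht1 htq
  -- convert the integrals
  set c : ℝ := ((m:ℝ)⁻¹) ^ (Fintype.card (Fin q × Fin s × Fin n × Fin B)) with hcdef
  have hc0 : 0 ≤ c := by rw [hcdef]; positivity
  have hLHS : ∫ ω, ∑ i, ‖v (t:ℤ) s i ω - gradient (fI i) (x t s i ω)‖ ^ 2 ∂μ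
      = c * ∑ g : (Fin q × Fin s × Fin n × Fin B) → Fin m,
          ∑ i, ‖Vf t i g - gradient (fI i) (Xf t i g)‖ ^ 2 := by
    have hfun : ∀ ω, ∑ i, ‖v (t:ℤ) s i ω - gradient (fI i) (x t s i ω)‖ ^ 2
        = ∑ i, ‖Vf t i (T ω) - gradient (fI i) (Xf t i (T ω))‖ ^ 2 :=
      fun ω => Finset.sum_congr rfl fun i _ => by
        rw [(hVf t i htq).1 ω, (hXf t i htq).1 ω]
    calc ∫ ω, ∑ i, ‖v (t:ℤ) s i ω - gradient (fI i) (x t s i ω)‖ ^ 2 ∂μ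
        = ∫ ω, ∑ i, ‖Vf t i (T ω) - gradient (fI i) (Xf t i (T ω))‖ ^ 2 ∂μ :=
          integral_congr_ae (Filter.Eventually.of_forall hfun)
      _ = c * ∑ g : (Fin q × Fin s × Fin n × Fin B) → Fin m,
            ∑ i, ‖Vf t i g - gradient (fI i) (Xf t i g)‖ ^ 2 :=
          hint (fun g => ∑ i, ‖Vf t i g - gradient (fI i) (Xf t i g)‖ ^ 2)
  have hRV : ∀ u, u < t → (∫ ω, ‖(n:ℝ)⁻¹ • ∑ i, v (u:ℤ) s i ω‖ ^ 2 ∂μ)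
      = c * ∑ g : (Fin q × Fin s × Fin n × Fin B) → Fin m,
          ‖(n:ℝ)⁻¹ • ∑ i, Vf u i g‖ ^ 2 := by
    intro u hu
    have huq : u ≤ q := by omega
    have hfun : ∀ ω, ‖(n:ℝ)⁻¹ • ∑ i, v (u:ℤ) s i ω‖ ^ 2
        = ‖(n:ℝ)⁻¹ • ∑ i, Vf u i (T ω)‖ ^ 2 := by
      intro ω
      rw [show ∑ i, v (u:ℤ) s i ω = ∑ i, Vf u i (T ω) from
        Finset.sum_congr rfl fun i _ => (hVf u i huq).1 ω]
    calc (∫ ω, ‖(n:ℝ)⁻¹ • ∑ i, v (u:ℤ) s i ω‖ ^ 2 ∂μ)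
        = ∫ ω, ‖(n:ℝ)⁻¹ • ∑ i, Vf u i (T ω)‖ ^ 2 ∂μ :=
          integral_congr_ae (Filter.Eventually.of_forall hfun)
      _ = c * ∑ g : (Fin q × Fin s × Fin n × Fin B) → Fin m,
            ‖(n:ℝ)⁻¹ • ∑ i, Vf u i g‖ ^ 2 :=
          hint (fun g => ‖(n:ℝ)⁻¹ • ∑ i, Vf u i g‖ ^ 2)
  have hRA : ∀ u, u < t + 1 →
      (∫ ω, ∑ i, ‖x u s i ω - (n:ℝ)⁻¹ • ∑ i', x u s i' ω‖ ^ 2 ∂μ)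
      = c * ∑ g : (Fin q × Fin s × Fin n × Fin B) → Fin m,
          ∑ i, ‖Xf u i g - (n:ℝ)⁻¹ • ∑ i', Xf u i' g‖ ^ 2 := by
    intro u hu
    have huq : u ≤ q := by omega
    have hfun : ∀ ω, ∑ i, ‖x u s i ω - (n:ℝ)⁻¹ • ∑ i', x u s i' ω‖ ^ 2
        = ∑ i, ‖Xf u i (T ω) - (n:ℝ)⁻¹ • ∑ i', Xf u i' (T ω)‖ ^ 2 := by
      intro ω
      refine Finset.sum_congr rfl fun i _ => ?_
      rw [(hXf u i huq).1 ω, show ∑ i', x u s i' ω = ∑ i', Xf u i' (T ω) from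
        Finset.sum_congr rfl fun i' _ => (hXf u i' huq).1 ω]
    calc (∫ ω, ∑ i, ‖x u s i ω - (n:ℝ)⁻¹ • ∑ i', x u s i' ω‖ ^ 2 ∂μ)
        = ∫ ω, ∑ i, ‖Xf u i (T ω) - (n:ℝ)⁻¹ • ∑ i', Xf u i' (T ω)‖ ^ 2 ∂μ :=
          integral_congr_ae (Filter.Eventually.of_forall hfun)
      _ = c * ∑ g : (Fin q × Fin s × Fin n × Fin B) → Fin m,
            ∑ i, ‖Xf u i g - (n:ℝ)⁻¹ • ∑ i', Xf u i' g‖ ^ 2 :=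
          hint (fun g => ∑ i, ‖Xf u i g - (n:ℝ)⁻¹ • ∑ i', Xf u i' g‖ ^ 2)
  have hsumV : ∑ u ∈ range t, (∫ ω, ‖(n:ℝ)⁻¹ • ∑ i, v (u:ℤ) s i ω‖ ^ 2 ∂μ)
      = c * ∑ u ∈ range t, ∑ g : (Fin q × Fin s × Fin n × Fin B) → Fin m,
          ‖(n:ℝ)⁻¹ • ∑ i, Vf u i g‖ ^ 2 := by
    rw [Finset.mul_sum]
    exact Finset.sum_congr rfl fun u hu => hRV u (Finset.mem_range.mp hu)
  have hsumA : ∑ u ∈ range (t+1),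
      (∫ ω, ∑ i, ‖x u s i ω - (n:ℝ)⁻¹ • ∑ i', x u s i' ω‖ ^ 2 ∂μ)
      = c * ∑ u ∈ range (t+1), ∑ g : (Fin q × Fin s × Fin n × Fin B) → Fin m,
          ∑ i, ‖Xf u i g - (n:ℝ)⁻¹ • ∑ i', Xf u i' g‖ ^ 2 := by
    rw [Finset.mul_sum]
    exact Finset.sum_congr rfl fun u hu => hRA u (Finset.mem_range.mp hu)
  rw [hLHS, hsumV, hsumA]
  calc c * ∑ g : (Fin q × Fin s × Fin n × Fin B) → Fin m,
        ∑ i, ‖Vf t i g - gradient (fI i) (Xf t i g)‖ ^ 2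
      ≤ c * (3 * n * α ^ 2 * L ^ 2 / B *
            ∑ u ∈ Finset.range t, ∑ g : (Fin q × Fin s × Fin n × Fin B) → Fin m,
              ‖(n : ℝ)⁻¹ • ∑ i, Vf u i g‖ ^ 2
          + 6 * L ^ 2 / B * ∑ u ∈ Finset.range (t + 1),
              ∑ g : (Fin q × Fin s × Fin n × Fin B) → Fin m,
                ∑ i, ‖Xf u i g - (n : ℝ)⁻¹ • ∑ i', Xf u i' g‖ ^ 2) :=
        mul_le_mul_of_nonneg_left hmain hc0
    _ = 3 * (n:ℝ) * α ^ 2 * L ^ 2 / B *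
          (c * ∑ u ∈ range t, ∑ g : (Fin q × Fin s × Fin n × Fin B) → Fin m,
            ‖(n : ℝ)⁻¹ • ∑ i, Vf u i g‖ ^ 2)
        + 6 * L ^ 2 / B *
          (c * ∑ u ∈ range (t+1), ∑ g : (Fin q × Fin s × Fin n × Fin B) → Fin m,
            ∑ i, ‖Xf u i g - (n : ℝ)⁻¹ • ∑ i', Xf u i' g‖ ^ 2) := by ring
end

section
/- Let λ ∈ [0,1), L > 0, and 0 < α < (1−λ²)²/(8√5·L). Define the 2×2 matrix G := [[(1+λ²)/2, 2α²L²/(1−λ²)], [18/(1−λ²), (3+λ²)/4]]. Then the spectral radius satisfies ρ(G) < 1; consequently the series Σ_{k=0}^∞ G^k converges and equals (I₂ − G)⁻¹. -/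
lemma quad_aux (p q x y : ℝ) (h1 : x^2 - y^2 - p*x + q = 0) (h2 : 2*x*y - p*y = 0)
    (hΔ : 4*q < p^2) (hf1 : 0 < 1 - p + q) (hfm1 : 0 < 1 + p + q) (hp0 : 0 < p) (hp2 : p < 2) :
    y = 0 ∧ |x| < 1 := by
  have hy : y = 0 := by
    by_contra hy
    have hfac : y * (2*x - p) = 0 := by linarith [h2]
    have h2x : 2*x - p = 0 := by
      rcases mul_eq_zero.1 hfac with h | h
      · exact absurd h hy
      · exact h
    have hy2 : 0 < y^2 := by positivity
    nlinarith [h1, h2x, hΔ, hy2]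
  subst hy
  refine ⟨rfl, abs_lt.2 ⟨?_, ?_⟩⟩
  · nlinarith [h1, hfm1, hp0, sq_nonneg (x+1)]
  · nlinarith [h1, hf1, hp2, sq_nonneg (x-1)]

lemma spec_aux (a b c d : ℝ) (hΔ : 4*(a*d - b*c) < (a+d)^2) (hf1 : 0 < 1 - (a+d) + (a*d - b*c))
    (hfm1 : 0 < 1 + (a+d) + (a*d - b*c)) (hp0 : 0 < a + d) (hp2 : a + d < 2) :
    ∀ z ∈ spectrum ℂ ((!![a, b; c, d] : Matrix (Fin 2) (Fin 2) ℝ).map (algebraMap ℝ ℂ)),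
      ‖z‖ < 1 := by
  intro z hz
  rw [spectrum.mem_iff] at hz
  have hdet : (algebraMap ℂ (Matrix (Fin 2) (Fin 2) ℂ) z -
      ((!![a, b; c, d] : Matrix (Fin 2) (Fin 2) ℝ).map (algebraMap ℝ ℂ))).det = 0 := by
    by_contra h
    exact hz ((Matrix.isUnit_iff_isUnit_det _).2 (isUnit_iff_ne_zero.2 h))
  simp [Matrix.det_fin_two, Matrix.algebraMap_matrix_apply, Matrix.map_apply] at hdet
  have hq : z ^ 2 - (↑(a + d)) * z + (↑(a * d - b * c)) = 0 := by
    push_cast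
    linear_combination hdet
  rw [Complex.ext_iff] at hq
  simp [pow_two, Complex.mul_re, Complex.mul_im] at hq
  have h1 : z.re ^ 2 - z.im ^ 2 - (a + d) * z.re + (a * d - b * c) = 0 := by nlinarith [hq.1]
  have h2 : 2 * z.re * z.im - (a + d) * z.im = 0 := by nlinarith [hq.2]
  obtain ⟨hy, hx⟩ := quad_aux (a + d) (a * d - b * c) z.re z.im h1 h2 hΔ hf1 hfm1 hp0 hp2
  have hzre : z = (z.re : ℂ) := Complex.ext rfl (by simp [hy])
  rw [hzre, Complex.norm_real, Real.norm_eq_abs]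
  exact hx

lemma neumann_aux (G : Matrix (Fin 2) (Fin 2) ℝ) (t r : ℝ)
    (ht0 : 0 < t) (ht1 : t ≤ 1) (hr0 : 0 ≤ r) (hr1 : r < 1)
    (hA : 0 ≤ G 0 0) (hB : 0 ≤ G 0 1) (hC : 0 ≤ G 1 0) (hD : 0 ≤ G 1 1)
    (hrow0 : G 0 0 * t + G 0 1 ≤ r * t) (hrow1 : G 1 0 * t + G 1 1 ≤ r) :
    IsUnit (1 - G) ∧ HasSum (fun k : ℕ => G ^ k) (1 - G)⁻¹ := by
  have key : ∀ n : ℕ, 0 ≤ (G^n) 0 0 ∧ 0 ≤ (G^n) 0 1 ∧ 0 ≤ (G^n) 1 0 ∧ 0 ≤ (G^n) 1 1 ∧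
      (G^n) 0 0 * t + (G^n) 0 1 ≤ r^n * t ∧ (G^n) 1 0 * t + (G^n) 1 1 ≤ r^n := by
    intro n
    induction n with
    | zero => simp [Matrix.one_apply]
    | succ n ih =>
      obtain ⟨h00, h01, h10, h11, hv0, hv1⟩ := ih
      have hmul : ∀ i j, (G^(n+1)) i j = G i 0 * (G^n) 0 j + G i 1 * (G^n) 1 j := by
        intro i j
        rw [pow_succ', Matrix.mul_apply, Fin.sum_univ_two]
      have hrn : (0:ℝ) ≤ r^n := pow_nonneg hr0 n
      have k1 := mul_le_mul_of_nonneg_left hv0 hA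
      have k2 := mul_le_mul_of_nonneg_left hv1 hB
      have k3 := mul_le_mul_of_nonneg_left hv0 hC
      have k4 := mul_le_mul_of_nonneg_left hv1 hD
      have k5 := mul_le_mul_of_nonneg_right hrow0 hrn
      have k6 := mul_le_mul_of_nonneg_right hrow1 hrn
      refine ⟨?_, ?_, ?_, ?_, ?_, ?_⟩
      · rw [hmul]; positivity
      · rw [hmul]; positivity
      · rw [hmul]; positivity
      · rw [hmul]; positivity
      · rw [hmul, hmul, pow_succ]; nlinarith
      · rw [hmul, hmul, pow_succ]; nlinarith
  have hbnd : ∀ (n : ℕ) (i j : Fin 2), (G^n) i j ≤ r^n / t := by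
    intro n i j
    obtain ⟨h00, h01, h10, h11, hv0, hv1⟩ := key n
    have hrn : (0:ℝ) ≤ r^n := pow_nonneg hr0 n
    have b00 : (G^n) 0 0 ≤ r^n / t := by rw [le_div_iff₀ ht0]; nlinarith
    have b01 : (G^n) 0 1 ≤ r^n / t := by rw [le_div_iff₀ ht0]; nlinarith
    have b10 : (G^n) 1 0 ≤ r^n / t := by rw [le_div_iff₀ ht0]; nlinarith
    have b11 : (G^n) 1 1 ≤ r^n / t := by rw [le_div_iff₀ ht0]; nlinarith
    fin_cases i <;> fin_cases j
    · exact b00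
    · exact b01
    · exact b10
    · exact b11
  have hnn : ∀ (n : ℕ) (i j : Fin 2), 0 ≤ (G^n) i j := by
    intro n i j
    obtain ⟨h00, h01, h10, h11, _, _⟩ := key n
    fin_cases i <;> fin_cases j
    · exact h00
    · exact h01
    · exact h10
    · exact h11
  have hgeo : Summable (fun n : ℕ => r^n / t) :=
    (summable_geometric_of_lt_one hr0 hr1).div_const t
  have hsumm : Summable (fun k : ℕ => G ^ k) := by
    apply Pi.summable.2
    intro i
    apply Pi.summable.2
    intro j
    exact Summable.of_nonneg_of_le (fun n => hnn n i j) (fun n => hbnd n i j) hgeo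
  have hS := hsumm.hasSum
  have htend : Filter.Tendsto (fun n : ℕ => G^n) Filter.atTop (nhds 0) := by
    refine tendsto_pi_nhds.2 ?_
    intro i
    rw [tendsto_pi_nhds]
    intro j
    have h0 : (0 : Matrix (Fin 2) (Fin 2) ℝ) i j = 0 := rfl
    rw [h0]
    apply squeeze_zero (g := fun n => r^n / t) (fun n => hnn n i j) (fun n => hbnd n i j)
    simpa using (tendsto_pow_atTop_nhds_zero_of_lt_one hr0 hr1).div_const t
  have hmulS : (1 - G) * (∑' k : ℕ, G ^ k) = 1 := by
    have h1 := (hS.mul_left (1 - G)).tendsto_sum_nat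
    have heq : ∀ k : ℕ, (1 - G) * G^k = G^k - G^(k+1) := fun k => by
      rw [sub_mul, one_mul, ← pow_succ']
    have h2 : Filter.Tendsto (fun n : ℕ => ∑ k ∈ Finset.range n, (1 - G) * G^k)
        Filter.atTop (nhds 1) := by
      simp only [heq]
      have h3 : ∀ n : ℕ, ∑ k ∈ Finset.range n, (G^k - G^(k+1)) = G^0 - G^n := fun n =>
        Finset.sum_range_sub' (fun k => G^k) n
      simp only [h3, pow_zero]
      simpa using (tendsto_const_nhds (x := (1 : Matrix (Fin 2) (Fin 2) ℝ))).sub htend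
    exact tendsto_nhds_unique h1 h2
  refine ⟨(Matrix.isUnit_iff_isUnit_det _).2 (Matrix.isUnit_det_of_right_inverse hmulS), ?_⟩
  rw [Matrix.inv_eq_right_inv hmulS]
  exact hS

set_option maxHeartbeats 1000000 in
/-- The GT-SARAH LTI system matrix `G` is stable: its spectral radius is less than one
(every complex eigenvalue has modulus `< 1`), `I₂ - G` is invertible, and the Neumann
series `Σ G^k` converges to `(I₂ - G)⁻¹`. -/
theorem lti_matrix_stable (lam L α : ℝ) (hlam0 : 0 ≤ lam) (hlam1 : lam < 1) (hL : 0 < L)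
    (hα0 : 0 < α) (hα : α < (1 - lam ^ 2) ^ 2 / (8 * Real.sqrt 5 * L)) :
    ∀ G : Matrix (Fin 2) (Fin 2) ℝ,
      G = !![(1 + lam ^ 2) / 2, 2 * α ^ 2 * L ^ 2 / (1 - lam ^ 2);
             18 / (1 - lam ^ 2), (3 + lam ^ 2) / 4] →
      (∀ z ∈ spectrum ℂ (G.map (algebraMap ℝ ℂ)), ‖z‖ < 1) ∧
      IsUnit (1 - G) ∧
      HasSum (fun k : ℕ => G ^ k) (1 - G)⁻¹ := by
  intro G hG
  subst hG
  have hs0 : 0 < 1 - lam ^ 2 := by nlinarith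
  have hs1 : 1 - lam ^ 2 ≤ 1 := by nlinarith [sq_nonneg lam]
  have h5 : (0:ℝ) < Real.sqrt 5 := Real.sqrt_pos.2 (by norm_num)
  have h5sq : Real.sqrt 5 ^ 2 = 5 := Real.sq_sqrt (by norm_num)
  have hkey : 320 * (α * L) ^ 2 < (1 - lam ^ 2) ^ 4 := by
    have h1 : α * (8 * Real.sqrt 5 * L) < (1 - lam ^ 2) ^ 2 :=
      (lt_div_iff₀ (by positivity)).1 hα
    have h2 : (0:ℝ) < α * (8 * Real.sqrt 5 * L) := by positivity
    have h3 := mul_self_lt_mul_self h2.le h1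
    nlinarith [h3, h5sq]
  have hbcpos : 0 < 2 * α ^ 2 * L ^ 2 / (1 - lam ^ 2) * (18 / (1 - lam ^ 2)) := by positivity
  have hbc : 2 * α ^ 2 * L ^ 2 / (1 - lam ^ 2) * (18 / (1 - lam ^ 2)) * (1 - lam ^ 2) ^ 2 =
      36 * (α * L) ^ 2 := by field_simp; ring
  have h8 : 2 * α ^ 2 * L ^ 2 / (1 - lam ^ 2) * (18 / (1 - lam ^ 2)) < (1 - lam ^ 2) ^ 2 / 8 := by
    nlinarith [hbc, hkey, mul_pos hs0 hs0]
  have hbs : 2 * α ^ 2 * L ^ 2 / (1 - lam ^ 2) * (1 - lam ^ 2) = 2 * (α * L) ^ 2 := by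
    field_simp
  have hct : 18 / (1 - lam ^ 2) * ((1 - lam ^ 2) ^ 2 / 76) = 18 * (1 - lam ^ 2) / 76 := by
    field_simp
  have hΔ : 4 * ((1 + lam ^ 2) / 2 * ((3 + lam ^ 2) / 4) -
      2 * α ^ 2 * L ^ 2 / (1 - lam ^ 2) * (18 / (1 - lam ^ 2))) <
      ((1 + lam ^ 2) / 2 + (3 + lam ^ 2) / 4) ^ 2 := by
    nlinarith [hbcpos, sq_nonneg ((1 + lam ^ 2) / 2 - (3 + lam ^ 2) / 4)]
  have hf1 : 0 < 1 - ((1 + lam ^ 2) / 2 + (3 + lam ^ 2) / 4) +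
      ((1 + lam ^ 2) / 2 * ((3 + lam ^ 2) / 4) -
        2 * α ^ 2 * L ^ 2 / (1 - lam ^ 2) * (18 / (1 - lam ^ 2))) := by
    nlinarith [h8]
  have hfm1 : 0 < 1 + ((1 + lam ^ 2) / 2 + (3 + lam ^ 2) / 4) +
      ((1 + lam ^ 2) / 2 * ((3 + lam ^ 2) / 4) -
        2 * α ^ 2 * L ^ 2 / (1 - lam ^ 2) * (18 / (1 - lam ^ 2))) := by
    nlinarith [h8, hs0, hs1, sq_nonneg lam]
  have hp0 : 0 < (1 + lam ^ 2) / 2 + (3 + lam ^ 2) / 4 := by nlinarith [sq_nonneg lam]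
  have hp2 : (1 + lam ^ 2) / 2 + (3 + lam ^ 2) / 4 < 2 := by nlinarith
  constructor
  · exact spec_aux _ _ _ _ hΔ hf1 hfm1 hp0 hp2
  · have hrow0 : (1 + lam ^ 2) / 2 * ((1 - lam ^ 2) ^ 2 / 76) +
        2 * α ^ 2 * L ^ 2 / (1 - lam ^ 2) ≤
        (1 - (1 - lam ^ 2) / 80) * ((1 - lam ^ 2) ^ 2 / 76) := by
      nlinarith [hbs, hkey, hs0, mul_pos hs0 hs0, pow_pos hs0 4]
    have hrow1 : 18 / (1 - lam ^ 2) * ((1 - lam ^ 2) ^ 2 / 76) + (3 + lam ^ 2) / 4 ≤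
        1 - (1 - lam ^ 2) / 80 := by
      nlinarith [hct, hs0]
    exact neumann_aux _ ((1 - lam ^ 2) ^ 2 / 76) (1 - (1 - lam ^ 2) / 80)
      (by positivity) (by nlinarith) (by nlinarith) (by nlinarith)
      (by simp; positivity) (by simp; positivity) (by simp; positivity) (by simp; positivity)
      (by simpa using hrow0) (by simpa using hrow1)
end

section
/- Let λ ∈ [0,1), L > 0, and 0 < α ≤ (1−λ²)²/(24L). Define G := [[(1+λ²)/2, 2α²L²/(1−λ²)], [18/(1−λ²), (3+λ²)/4]] and b := (0, 12α²/(1−λ²))ᵀ. Then I₂ − G is invertible, and the following entrywise inequalities hold: (I₂ − G)⁻¹ ≤ [[4/(1−λ²), 32α²L²/(1−λ²)³], [288/(1−λ²)³, 8/(1−λ²)]] and (I₂ − G)⁻¹b ≤ (384α⁴L²/(1−λ²)⁴, 96α²/(1−λ²)²)ᵀ. -/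
/-- Entrywise bounds on `(I₂ - G)⁻¹` and `(I₂ - G)⁻¹ b`. -/
theorem inv_I_sub_G_entrywise_bounds (lam L α : ℝ) (hlam0 : 0 ≤ lam) (hlam1 : lam < 1)
    (hL : 0 < L) (hα0 : 0 < α) (hα : α ≤ (1 - lam ^ 2) ^ 2 / (24 * L)) :
    ∀ G : Matrix (Fin 2) (Fin 2) ℝ,
      G = !![(1 + lam ^ 2) / 2, 2 * α ^ 2 * L ^ 2 / (1 - lam ^ 2);
             18 / (1 - lam ^ 2), (3 + lam ^ 2) / 4] →
      IsUnit (1 - G) ∧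
      (∀ i j, (1 - G)⁻¹ i j ≤
        (!![4 / (1 - lam ^ 2), 32 * α ^ 2 * L ^ 2 / (1 - lam ^ 2) ^ 3;
            288 / (1 - lam ^ 2) ^ 3, 8 / (1 - lam ^ 2)] : Matrix (Fin 2) (Fin 2) ℝ) i j) ∧
      (∀ i, (1 - G)⁻¹.mulVec ![0, 12 * α ^ 2 / (1 - lam ^ 2)] i ≤
        ![384 * α ^ 4 * L ^ 2 / (1 - lam ^ 2) ^ 4, 96 * α ^ 2 / (1 - lam ^ 2) ^ 2] i) := by
  intro G hG
  set s : ℝ := 1 - lam ^ 2 with hs_def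
  have hs : 0 < s := by nlinarith
  clear_value s
  have hαL : α * (24 * L) ≤ s ^ 2 := by
    rwa [le_div_iff₀ (by positivity)] at hα
  have hkey : 576 * (α ^ 2 * L ^ 2) ≤ s ^ 4 := by nlinarith [mul_pos hα0 hL, sq_nonneg s]
  have hA : 1 - G = !![s / 2, -(2 * α ^ 2 * L ^ 2 / s); -(18 / s), s / 4] := by
    subst hG
    ext i j
    fin_cases i <;> fin_cases j <;>
      simp [Matrix.sub_apply, Matrix.one_apply] <;> rw [hs_def] <;> ring
  have hdet : (1 - G).det = s ^ 2 / 8 - 36 * (α ^ 2 * L ^ 2) / s ^ 2 := by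
    rw [hA, Matrix.det_fin_two_of]
    field_simp
    ring
  have hdet_ge : s ^ 2 / 16 ≤ (1 - G).det := by
    rw [hdet]
    have h1 : 36 * (α ^ 2 * L ^ 2) / s ^ 2 ≤ s ^ 2 / 16 := by
      rw [div_le_div_iff₀ (by positivity) (by positivity)]
      nlinarith
    linarith
  have hdpos : 0 < (1 - G).det := lt_of_lt_of_le (by positivity) hdet_ge
  have hunit : IsUnit (1 - G) := by
    rw [Matrix.isUnit_iff_isUnit_det, isUnit_iff_ne_zero]
    exact ne_of_gt hdpos
  have hdinv : ((1 - G).det)⁻¹ ≤ 16 / s ^ 2 := by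
    have h := inv_anti₀ (show (0:ℝ) < s ^ 2 / 16 by positivity) hdet_ge
    rwa [show (s ^ 2 / 16 : ℝ)⁻¹ = 16 / s ^ 2 by field_simp] at h
  have hdinv_nonneg : 0 ≤ ((1 - G).det)⁻¹ := le_of_lt (inv_pos.mpr hdpos)
  have hinv : (1 - G)⁻¹ = ((1 - G).det)⁻¹ •
      !![s / 4, 2 * α ^ 2 * L ^ 2 / s; 18 / s, s / 2] := by
    rw [Matrix.inv_def, hA, Matrix.adjugate_fin_two_of, Ring.inverse_eq_inv']
    rw [← hA]
    congr 1
    norm_num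
  have hbound : ∀ a b : ℝ, 0 ≤ a → 16 / s ^ 2 * a = b → ((1 - G).det)⁻¹ * a ≤ b := by
    intro a b ha hb
    calc ((1 - G).det)⁻¹ * a ≤ 16 / s ^ 2 * a := mul_le_mul_of_nonneg_right hdinv ha
    _ = b := hb
  refine ⟨hunit, ?_, ?_⟩
  · intro i j
    fin_cases i <;> fin_cases j <;>
      simp only [hinv, Matrix.smul_apply, Matrix.cons_val', Matrix.cons_val_zero,
        Matrix.cons_val_one, Matrix.head_cons, Matrix.head_fin_const, Matrix.of_apply,
        Matrix.cons_val_fin_one, smul_eq_mul, Fin.mk_zero, Fin.mk_one,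
        Matrix.empty_val', Matrix.cons_val_one, Matrix.head_cons]
    · exact hbound _ _ (by positivity) (by field_simp; ring)
    · exact hbound _ _ (by positivity) (by field_simp; ring)
    · exact hbound _ _ (by positivity) (by field_simp; ring)
    · exact hbound _ _ (by positivity) (by field_simp; ring)
  · intro i
    fin_cases i <;>
      simp only [hinv, Matrix.mulVec, dotProduct, Fin.sum_univ_two,
        Matrix.smul_apply, Matrix.cons_val', Matrix.cons_val_zero, Matrix.cons_val_one,
        Matrix.head_cons, Matrix.of_apply, Matrix.cons_val_fin_one, smul_eq_mul,
        Fin.mk_zero, Fin.mk_one, Matrix.empty_val', Matrix.head_fin_const]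
    · have : ((1 - G).det)⁻¹ * (s / 4) * 0 +
          ((1 - G).det)⁻¹ * (2 * α ^ 2 * L ^ 2 / s) * (12 * α ^ 2 / s) =
          ((1 - G).det)⁻¹ * (24 * α ^ 4 * L ^ 2 / s ^ 2) := by ring
      rw [this]
      exact hbound _ _ (by positivity) (by field_simp; ring)
    · have : ((1 - G).det)⁻¹ * (18 / s) * 0 +
          ((1 - G).det)⁻¹ * (s / 2) * (12 * α ^ 2 / s) =
          ((1 - G).det)⁻¹ * (6 * α ^ 2) := by field_simp; ring
      rw [this]
      exact hbound _ _ (by positivity) (by field_simp; ring)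
end

section
/- Let λ ∈ [0,1), L > 0, and 0 < α < (1−λ²)²/(8√5·L). Define the 2×2 matrices G := [[(1+λ²)/2, 2α²L²/(1−λ²)], [18/(1−λ²), (3+λ²)/4]] and H := [[0, 0], [42/(1−λ²), 0]], and the vector b := (0, 12α²/(1−λ²))ᵀ. Let S ≥ 1 and q ≥ 1 be integers, let u^{t,s} ∈ ℝ² be entrywise nonnegative vectors and β^{t,s} ≥ 0 be reals for s ∈ {1,…,S} and t ∈ {0,…,q}, and set b^{t,s} := β^{t,s}·b. Suppose u^{t,s} ≤ G u^{t−1,s} + b^{t−1,s} entrywise for all s ∈ {1,…,S} and t ∈ {1,…,q}, and u^{0,s} ≤ G u^{q,s−1} + b^{q,s−1} + Σ_{t=0}^q (b^{t,s−1} + H u^{t,s−1}) entrywise for all s ∈ {2,…,S}. Then (I₂ − (I₂ − G)⁻¹H) Σ_{s=1}^S Σ_{t=0}^q u^{t,s} ≤ (I₂ − G)⁻¹ u^{0,1} + 2(I₂ − G)⁻¹ Σ_{s=1}^S Σ_{t=0}^q b^{t,s} entrywise. -/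
open Finset

private lemma mv2 (M : Matrix (Fin 2) (Fin 2) ℝ) (v : Fin 2 → ℝ) (i : Fin 2) :
    M.mulVec v i = M i 0 * v 0 + M i 1 * v 1 := by
  simp [Matrix.mulVec, dotProduct, Fin.sum_univ_two]

private lemma mulVec_sum' (M : Matrix (Fin 2) (Fin 2) ℝ) (F : Finset ℕ) (f : ℕ → Fin 2 → ℝ)
    (i : Fin 2) : M.mulVec (∑ x ∈ F, f x) i = ∑ x ∈ F, M.mulVec (f x) i := by
  simp [mv2, Finset.sum_apply, Finset.mul_sum, Finset.sum_add_distrib]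

private lemma mulVec_mono (M : Matrix (Fin 2) (Fin 2) ℝ) (hM : ∀ i j, 0 ≤ M i j)
    (w w' : Fin 2 → ℝ) (h : ∀ j, w j ≤ w' j) (i : Fin 2) :
    M.mulVec w i ≤ M.mulVec w' i := by
  rw [mv2, mv2]
  have h0 := mul_le_mul_of_nonneg_left (h 0) (hM i 0)
  have h1 := mul_le_mul_of_nonneg_left (h 1) (hM i 1)
  linarith

private lemma sum_shift (S : ℕ) (hS : 1 ≤ S) (f : ℕ → ℝ) :
    ∑ s ∈ Icc 2 S, f (s - 1) = ∑ s ∈ Icc 1 (S - 1), f s := by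
  have himg : Icc 2 S = (Icc 1 (S-1)).image (· + 1) := by
    ext x; simp [Finset.mem_Icc]; omega
  rw [himg, Finset.sum_image (by intros a _ b _ h; simp only at h; omega)]
  simp

private lemma comb2 (S q : ℕ) (hS : 1 ≤ S) (v : ℕ → ℕ → ℝ)
    (hv : ∀ s ∈ Icc 1 S, 0 ≤ v q s) :
    ∑ s ∈ Icc 1 S, ∑ t ∈ range q, v t s + ∑ s ∈ Icc 1 (S-1), v q s
      ≤ ∑ s ∈ Icc 1 S, ∑ t ∈ range (q+1), v t s := by
  have h1 : ∑ s ∈ Icc 1 (S-1), v q s ≤ ∑ s ∈ Icc 1 S, v q s :=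
    Finset.sum_le_sum_of_subset_of_nonneg
      (Finset.Icc_subset_Icc_right (by omega)) (fun s hs _ => hv s hs)
  have h2 : ∑ s ∈ Icc 1 S, ∑ t ∈ range (q+1), v t s
      = ∑ s ∈ Icc 1 S, ∑ t ∈ range q, v t s + ∑ s ∈ Icc 1 S, v q s := by
    rw [← Finset.sum_add_distrib]
    exact Finset.sum_congr rfl (fun s _ => Finset.sum_range_succ _ _)
  linarith

set_option maxHeartbeats 1000000 in
/-- Solving the GT-SARAH LTI error system. -/
theorem lti_system_solution (lam L α : ℝ) (hlam0 : 0 ≤ lam) (hlam1 : lam < 1) (hL : 0 < L)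
    (hα0 : 0 < α) (hα : α < (1 - lam ^ 2) ^ 2 / (8 * Real.sqrt 5 * L))
    (S q : ℕ) (hS : 1 ≤ S) (hq : 1 ≤ q)
    (u : ℕ → ℕ → Fin 2 → ℝ) (β : ℕ → ℕ → ℝ)
    (hu : ∀ s ∈ Icc 1 S, ∀ t ∈ range (q + 1), ∀ i, 0 ≤ u t s i)
    (hβ : ∀ s ∈ Icc 1 S, ∀ t ∈ range (q + 1), 0 ≤ β t s) :
    ∀ (G H : Matrix (Fin 2) (Fin 2) ℝ) (bv : Fin 2 → ℝ),
      G = !![(1 + lam ^ 2) / 2, 2 * α ^ 2 * L ^ 2 / (1 - lam ^ 2);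
             18 / (1 - lam ^ 2), (3 + lam ^ 2) / 4] →
      H = !![0, 0; 42 / (1 - lam ^ 2), 0] →
      bv = ![0, 12 * α ^ 2 / (1 - lam ^ 2)] →
      (∀ s ∈ Icc 1 S, ∀ t ∈ Icc 1 q, ∀ i,
        u t s i ≤ G.mulVec (u (t - 1) s) i + β (t - 1) s * bv i) →
      (∀ s ∈ Icc 2 S, ∀ i,
        u 0 s i ≤ G.mulVec (u q (s - 1)) i + β q (s - 1) * bv i
          + ∑ t ∈ range (q + 1), (β t (s - 1) * bv i + H.mulVec (u t (s - 1)) i)) →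
      ∀ i, (1 - (1 - G)⁻¹ * H).mulVec (∑ s ∈ Icc 1 S, ∑ t ∈ range (q + 1), u t s) i
        ≤ (1 - G)⁻¹.mulVec (u 0 1) i
          + 2 * (1 - G)⁻¹.mulVec
              (∑ s ∈ Icc 1 S, ∑ t ∈ range (q + 1), fun j => β t s * bv j) i := by
  intro G H bv hG hH hbv hrec hinter i
  have hp : (0:ℝ) < 1 - lam ^ 2 := by nlinarith
  have hp0 : (1:ℝ) - lam ^ 2 ≠ 0 := ne_of_gt hp
  -- scalar bound on α² L²
  have hsq5 : (Real.sqrt 5) ^ 2 = 5 := Real.sq_sqrt (by norm_num)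
  have hs5pos : (0:ℝ) < Real.sqrt 5 := Real.sqrt_pos.2 (by norm_num)
  have hden : (0:ℝ) < 8 * Real.sqrt 5 * L := by positivity
  have h3 : α * (8 * Real.sqrt 5 * L) < (1 - lam ^ 2) ^ 2 := by
    rw [← lt_div_iff₀ hden]; exact hα
  have hαL : α ^ 2 * L ^ 2 < (1 - lam ^ 2) ^ 4 / 320 := by
    have h4 : (α * (8 * Real.sqrt 5 * L)) ^ 2 < ((1 - lam ^ 2) ^ 2) ^ 2 :=
      pow_lt_pow_left₀ h3 (by positivity) (by norm_num)
    have heq : (α * (8 * Real.sqrt 5 * L)) ^ 2 = α ^ 2 * (320 * L ^ 2) := by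
      rw [mul_pow, mul_pow, mul_pow, hsq5]; ring
    rw [heq] at h4
    nlinarith
  -- nonnegativity of the data
  have hbnn : ∀ j, 0 ≤ bv j := by
    intro j; rw [hbv]; fin_cases j
    · simp
    · simp; positivity
  have hGnn : ∀ i j, 0 ≤ G i j := by
    intro i j; rw [hG]; fin_cases i <;> fin_cases j <;> simp
    · positivity
    · positivity
    · positivity
    · nlinarith
  have hHnn : ∀ i j, 0 ≤ H i j := by
    intro i j; rw [hH]; fin_cases i <;> fin_cases j <;> simp
    positivity
  -- the determinant of 1 - G
  set d : ℝ := (1 - lam ^ 2) / 2 * ((1 - lam ^ 2) / 4)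
      - 2 * α ^ 2 * L ^ 2 / (1 - lam ^ 2) * (18 / (1 - lam ^ 2)) with hd_def
  have hd : 0 < d := by
    rw [hd_def]
    have e : 2 * α ^ 2 * L ^ 2 / (1 - lam ^ 2) * (18 / (1 - lam ^ 2))
        = 36 * (α ^ 2 * L ^ 2) / (1 - lam ^ 2) ^ 2 := by
      field_simp; ring
    rw [e, sub_pos, div_lt_iff₀ (by positivity)]
    nlinarith
  have hd0 : d ≠ 0 := ne_of_gt hd
  -- the explicit inverse of 1 - G
  set M : Matrix (Fin 2) (Fin 2) ℝ :=
    !![(1 - lam ^ 2) / 4, 2 * α ^ 2 * L ^ 2 / (1 - lam ^ 2);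
       18 / (1 - lam ^ 2), (1 - lam ^ 2) / 2] with hM_def
  have hMr : (1 - G) * M = d • 1 := by
    rw [hG, hM_def]
    ext i j
    fin_cases i <;> fin_cases j <;>
      simp only [Matrix.mul_apply, Fin.sum_univ_two, Matrix.sub_apply, Matrix.one_apply,
        Matrix.smul_apply, smul_eq_mul, Matrix.cons_val', Matrix.cons_val_zero,
        Matrix.cons_val_one, Matrix.head_cons, Matrix.head_fin_const, Matrix.empty_val',
        Matrix.cons_val_fin_one, Fin.isValue, Fin.zero_eta, Fin.mk_one] <;>
      norm_num <;> (try rw [hd_def]) <;> field_simp <;> ring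
  have hMl : M * (1 - G) = d • 1 := by
    rw [hG, hM_def]
    ext i j
    fin_cases i <;> fin_cases j <;>
      simp only [Matrix.mul_apply, Fin.sum_univ_two, Matrix.sub_apply, Matrix.one_apply,
        Matrix.smul_apply, smul_eq_mul, Matrix.cons_val', Matrix.cons_val_zero,
        Matrix.cons_val_one, Matrix.head_cons, Matrix.head_fin_const, Matrix.empty_val',
        Matrix.cons_val_fin_one, Fin.isValue, Fin.zero_eta, Fin.mk_one] <;>
      norm_num <;> (try rw [hd_def]) <;> field_simp <;> ring
  set N : Matrix (Fin 2) (Fin 2) ℝ := d⁻¹ • M with hN_def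
  have hNr : (1 - G) * N = 1 := by
    rw [hN_def, Matrix.mul_smul, hMr, smul_smul, inv_mul_cancel₀ hd0, one_smul]
  have hNl : N * (1 - G) = 1 := by
    rw [hN_def, Matrix.smul_mul, hMl, smul_smul, inv_mul_cancel₀ hd0, one_smul]
  have hNeq : (1 - G)⁻¹ = N := Matrix.inv_eq_right_inv hNr
  have hNnn : ∀ i j, 0 ≤ N i j := by
    intro i j
    rw [hN_def]
    have hMnn : 0 ≤ M i j := by
      rw [hM_def]; fin_cases i <;> fin_cases j <;> simp
      · positivity
      · exact div_nonneg (by positivity) hp.le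
      · exact div_nonneg (by norm_num) hp.le
      · positivity
    have : (0:ℝ) ≤ d⁻¹ := inv_nonneg.2 hd.le
    simpa [Matrix.smul_apply, smul_eq_mul] using mul_nonneg this hMnn
  -- abbreviations
  set V : Fin 2 → ℝ := ∑ s ∈ Icc 1 S, ∑ t ∈ range (q + 1), u t s with hV_def
  set Bt : Fin 2 → ℝ := ∑ s ∈ Icc 1 S, ∑ t ∈ range (q + 1), fun j => β t s * bv j
    with hBt_def
  have hVi : ∀ j, V j = ∑ s ∈ Icc 1 S, ∑ t ∈ range (q + 1), u t s j := by
    intro j; rw [hV_def]; simp [Finset.sum_apply]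
  have hBti : ∀ j, Bt j = ∑ s ∈ Icc 1 S, ∑ t ∈ range (q + 1), β t s * bv j := by
    intro j; rw [hBt_def]; simp [Finset.sum_apply]
  -- intra-epoch step
  have stepA : ∀ s ∈ Icc 1 S, ∀ j : Fin 2,
      ∑ t ∈ range (q + 1), u t s j ≤
        u 0 s j + G.mulVec (∑ t ∈ range q, u t s) j + ∑ t ∈ range q, β t s * bv j := by
    intro s hs j
    rw [Finset.sum_range_succ']
    have h1 : ∑ t ∈ range q, u (t + 1) s j ≤
        ∑ t ∈ range q, (G.mulVec (u t s) j + β t s * bv j) := by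
      apply Finset.sum_le_sum
      intro t ht
      have hmem : t + 1 ∈ Icc 1 q := by
        simp only [Finset.mem_range] at ht; simp [Finset.mem_Icc]; omega
      have := hrec s hs (t + 1) hmem j
      simpa using this
    rw [Finset.sum_add_distrib] at h1
    rw [mulVec_sum']
    linarith
  -- the key summed inequality
  have key : ∀ j, V j ≤ u 0 1 j + G.mulVec V j + H.mulVec V j + 2 * Bt j := by
    intro j
    have h1 : V j ≤ ∑ s ∈ Icc 1 S, u 0 s j
        + ∑ s ∈ Icc 1 S, G.mulVec (∑ t ∈ range q, u t s) j
        + ∑ s ∈ Icc 1 S, ∑ t ∈ range q, β t s * bv j := by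
      rw [hVi j]
      calc ∑ s ∈ Icc 1 S, ∑ t ∈ range (q + 1), u t s j
          ≤ ∑ s ∈ Icc 1 S, (u 0 s j + G.mulVec (∑ t ∈ range q, u t s) j
              + ∑ t ∈ range q, β t s * bv j) :=
            Finset.sum_le_sum (fun s hs => stepA s hs j)
        _ = _ := by rw [Finset.sum_add_distrib, Finset.sum_add_distrib]
    -- split off s = 1
    have hsplit : Icc 1 S = insert 1 (Icc 2 S) := by
      ext x; simp [Finset.mem_Icc]; omega
    have h2 : ∑ s ∈ Icc 1 S, u 0 s j = u 0 1 j + ∑ s ∈ Icc 2 S, u 0 s j := by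
      rw [hsplit, Finset.sum_insert (by simp)]
    have h3 : ∑ s ∈ Icc 2 S, u 0 s j ≤
        ∑ s ∈ Icc 1 (S - 1), (G.mulVec (u q s) j + β q s * bv j
          + ∑ t ∈ range (q + 1), (β t s * bv j + H.mulVec (u t s) j)) := by
      rw [← sum_shift S hS (fun s => G.mulVec (u q s) j + β q s * bv j
          + ∑ t ∈ range (q + 1), (β t s * bv j + H.mulVec (u t s) j))]
      exact Finset.sum_le_sum (fun s hs => hinter s hs j)
    have h3' : ∑ s ∈ Icc 1 (S - 1), (G.mulVec (u q s) j + β q s * bv j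
          + ∑ t ∈ range (q + 1), (β t s * bv j + H.mulVec (u t s) j))
        = ∑ s ∈ Icc 1 (S - 1), G.mulVec (u q s) j
          + ∑ s ∈ Icc 1 (S - 1), β q s * bv j
          + (∑ s ∈ Icc 1 (S - 1), ∑ t ∈ range (q + 1), β t s * bv j
            + ∑ s ∈ Icc 1 (S - 1), ∑ t ∈ range (q + 1), H.mulVec (u t s) j) := by
      simp only [Finset.sum_add_distrib]
    -- G part
    have hGpart : ∑ s ∈ Icc 1 S, G.mulVec (∑ t ∈ range q, u t s) j
        + ∑ s ∈ Icc 1 (S - 1), G.mulVec (u q s) j ≤ G.mulVec V j := by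
      rw [← mulVec_sum', ← mulVec_sum']
      have hadd : G.mulVec (∑ s ∈ Icc 1 S, ∑ t ∈ range q, u t s) j
          + G.mulVec (∑ s ∈ Icc 1 (S - 1), u q s) j
          = G.mulVec ((∑ s ∈ Icc 1 S, ∑ t ∈ range q, u t s)
              + ∑ s ∈ Icc 1 (S - 1), u q s) j := by
        rw [Matrix.mulVec_add]; simp
      rw [hadd]
      apply mulVec_mono G hGnn _ _ _ j
      intro k
      simp only [Pi.add_apply, Finset.sum_apply]
      rw [hVi k]
      exact comb2 S q hS (fun t s => u t s k)
        (fun s hs => hu s hs q (by simp [Finset.mem_range]) k)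
    -- β part
    have hβnn : ∀ s ∈ Icc 1 S, ∀ t ∈ range (q+1), 0 ≤ β t s * bv j :=
      fun s hs t ht => mul_nonneg (hβ s hs t ht) (hbnn j)
    have hβ1 : ∑ s ∈ Icc 1 S, ∑ t ∈ range q, β t s * bv j
        + ∑ s ∈ Icc 1 (S - 1), β q s * bv j ≤ Bt j := by
      rw [hBti j]
      exact comb2 S q hS (fun t s => β t s * bv j)
        (fun s hs => hβnn s hs q (by simp [Finset.mem_range]))
    have hβ2 : ∑ s ∈ Icc 1 (S - 1), ∑ t ∈ range (q + 1), β t s * bv j ≤ Bt j := by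
      rw [hBti j]
      apply Finset.sum_le_sum_of_subset_of_nonneg
        (Finset.Icc_subset_Icc_right (by omega))
      intro s hs _
      exact Finset.sum_nonneg (fun t ht => hβnn s hs t ht)
    -- H part
    have hHpart : ∑ s ∈ Icc 1 (S - 1), ∑ t ∈ range (q + 1), H.mulVec (u t s) j
        ≤ H.mulVec V j := by
      have e1 : ∑ s ∈ Icc 1 (S - 1), ∑ t ∈ range (q + 1), H.mulVec (u t s) j
          = H.mulVec (∑ s ∈ Icc 1 (S - 1), ∑ t ∈ range (q + 1), u t s) j := by
        rw [mulVec_sum']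
        exact Finset.sum_congr rfl (fun s _ => (mulVec_sum' H _ _ j).symm)
      rw [e1]
      apply mulVec_mono H hHnn _ _ _ j
      intro k
      simp only [Finset.sum_apply]
      rw [hVi k]
      apply Finset.sum_le_sum_of_subset_of_nonneg
        (Finset.Icc_subset_Icc_right (by omega))
      intro s hs _
      exact Finset.sum_nonneg (fun t ht => hu s hs t ht k)
    linarith
  -- final assembly: multiply by N ≥ 0
  have hkey2 : ∀ k, (1 - G).mulVec V k ≤ u 0 1 k + H.mulVec V k + 2 * Bt k := by
    intro k
    rw [Matrix.sub_mulVec, Matrix.one_mulVec, Pi.sub_apply]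
    have := key k; linarith
  have hVle : V i ≤ N.mulVec (fun k => u 0 1 k + H.mulVec V k + 2 * Bt k) i := by
    have e : V i = N.mulVec ((1 - G).mulVec V) i := by
      rw [Matrix.mulVec_mulVec, hNl, Matrix.one_mulVec]
    rw [e]
    exact mulVec_mono N hNnn _ _ hkey2 i
  have hexp : N.mulVec (fun k => u 0 1 k + H.mulVec V k + 2 * Bt k) i
      = N.mulVec (u 0 1) i + N.mulVec (H.mulVec V) i + 2 * N.mulVec Bt i := by
    simp only [mv2]; ring
  rw [hNeq, Matrix.sub_mulVec, Matrix.one_mulVec, Pi.sub_apply,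
    ← Matrix.mulVec_mulVec]
  rw [hexp] at hVle
  linarith
end
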